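/- arXiv:1507.01741 — 6 statements merged into one kernel-verified Lean document; each statement's English description precedes it below -/
import Mathlib

section
/- For every t ∈ [0,T] one has the bounds ∫_{ℝⁿ} (∂ₜ y(x,t))² dx ≤ c_max² · ∫_{ℝⁿ} |∇f(x)|² dx and ∫_{ℝⁿ} |∇ₓ y(x,t)|² dx ≤ ∫_{ℝⁿ} |∇f(x)|² dx. -/
open MeasureTheory

/-- Sum of the second partial derivatives (spatial Laplacian) of `u` at `x`. -/
noncomputable def spatialLaplacian {n : ℕ} (u : EuclideanSpace ℝ (Fin n) → ℝ)
    (x : EuclideanSpace ℝ (Fin n)) : ℝ :=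
  ∑ i : Fin n,
    fderiv ℝ (fun z => fderiv ℝ u z (EuclideanSpace.single i 1)) x (EuclideanSpace.single i 1)

section EnergyAux

open Set Filter ContinuousLinearMap

variable {n : ℕ}

local notation "E" => EuclideanSpace ℝ (Fin n)

lemma aux_hasDerivAt_slice {Y : E × ℝ → ℝ} {x : E} {t : ℝ}
    (hY : DifferentiableAt ℝ Y (x, t)) :
    HasDerivAt (fun s => Y (x, s)) (fderiv ℝ Y (x, t) (0, 1)) t := by
  have h1 : HasDerivAt (fun s : ℝ => ((x, s) : E × ℝ)) ((0 : E), (1 : ℝ)) t :=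
    (hasDerivAt_const t x).prodMk (hasDerivAt_id t)
  exact hY.hasFDerivAt.comp_hasDerivAt t h1

lemma aux_hasFDerivAt_slice {Y : E × ℝ → ℝ} {x : E} {t : ℝ}
    (hY : DifferentiableAt ℝ Y (x, t)) :
    HasFDerivAt (fun x' => Y (x', t)) ((fderiv ℝ Y (x, t)).comp (inl ℝ E ℝ)) x :=
  hY.hasFDerivAt.comp x (hasFDerivAt_prodMk_left x t)

lemma aux_grad_norm_sq (g : E → ℝ) (x : E) :
    ‖gradient g x‖ ^ 2 = ∑ i, (fderiv ℝ g x (EuclideanSpace.single i 1)) ^ 2 := by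
  have h : ∀ i, gradient g x i = fderiv ℝ g x (EuclideanSpace.single i 1) := by
    intro i
    have : (gradient g x) i = (inner ℝ (gradient g x) (EuclideanSpace.single i (1:ℝ)) : ℝ) := by
      rw [EuclideanSpace.inner_single_right]; simp
    rw [this]
    rw [gradient]
    rw [← InnerProductSpace.toDual_symm_apply]
  rw [EuclideanSpace.norm_eq]
  rw [Real.sq_sqrt (by positivity)]
  simp only [Real.norm_eq_abs, sq_abs]
  exact Finset.sum_congr rfl fun i _ => by rw [h i]

lemma aux_contDiff_fderiv_apply {Y : E × ℝ → ℝ} (hY : ContDiff ℝ 2 Y) (v : E × ℝ) :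
    ContDiff ℝ 1 (fun p => fderiv ℝ Y p v) := by
  have hA : ContDiff ℝ 1 (fderiv ℝ Y) := hY.fderiv_right (by norm_num)
  exact (ContinuousLinearMap.apply ℝ ℝ v).contDiff.comp hA

lemma aux_fderiv_fderiv_apply {Y : E × ℝ → ℝ} (hY : ContDiff ℝ 2 Y) (v q : E × ℝ) (p : E × ℝ) :
    fderiv ℝ (fun p' => fderiv ℝ Y p' v) p q = fderiv ℝ (fderiv ℝ Y) p q v := by
  have hA : ContDiff ℝ 1 (fderiv ℝ Y) := hY.fderiv_right (by norm_num)
  have h : HasFDerivAt (fun p' => fderiv ℝ Y p' v)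
      ((ContinuousLinearMap.apply ℝ ℝ v).comp (fderiv ℝ (fderiv ℝ Y) p)) p :=
    (ContinuousLinearMap.apply ℝ ℝ v).hasFDerivAt.comp p (hA.differentiable one_ne_zero p).hasFDerivAt
  rw [h.fderiv]
  rfl

lemma aux_symm {Y : E × ℝ → ℝ} (hY : ContDiff ℝ 2 Y) (v q : E × ℝ) (p : E × ℝ) :
    fderiv ℝ (fun p' => fderiv ℝ Y p' v) p q = fderiv ℝ (fun p' => fderiv ℝ Y p' q) p v := by
  rw [aux_fderiv_fderiv_apply hY v q p, aux_fderiv_fderiv_apply hY q v p]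
  exact (hY.contDiffAt.isSymmSndFDerivAt (by norm_num)).eq q v

end EnergyAux

set_option maxHeartbeats 1600000

theorem stmt_1
    {n : ℕ} (hn : 1 ≤ n)
    (c : EuclideanSpace ℝ (Fin n) → ℝ) (hc_meas : Measurable c)
    (c_min c_max : ℝ) (hc_min_pos : 0 < c_min)
    (hc : ∀ x, c_min ≤ c x ∧ c x ≤ c_max)
    (T : ℝ) (hT : 0 < T)
    (f : EuclideanSpace ℝ (Fin n) → ℝ)
    (hf : ContDiff ℝ 2 f) (hf_supp : HasCompactSupport f)
    (y : EuclideanSpace ℝ (Fin n) → ℝ → ℝ)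
    (hy : ContDiff ℝ 2 (fun p : EuclideanSpace ℝ (Fin n) × ℝ => y p.1 p.2))
    (K : Set (EuclideanSpace ℝ (Fin n))) (hK : IsCompact K)
    (hyK : ∀ x ∉ K, ∀ t ∈ Set.Icc (0:ℝ) T, y x t = 0)
    (hwave : ∀ x, ∀ t ∈ Set.Ioo (0:ℝ) T,
      ((c x) ^ 2)⁻¹ * deriv (deriv (y x)) t = spatialLaplacian (fun x' => y x' t) x)
    (hinit : ∀ x, y x 0 = f x)
    (hinit' : ∀ x, deriv (y x) 0 = 0)
     :
    ∀ t ∈ Set.Icc (0:ℝ) T,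
      (∫ x, (deriv (y x) t) ^ 2) ≤ c_max ^ 2 * ∫ x, ‖gradient f x‖ ^ 2
    ∧ (∫ x, ‖gradient (fun x' => y x' t) x‖ ^ 2) ≤ ∫ x, ‖gradient f x‖ ^ 2 := by
  classical
  set Y : EuclideanSpace ℝ (Fin n) × ℝ → ℝ := fun p => y p.1 p.2 with hYdef
  set u : EuclideanSpace ℝ (Fin n) × ℝ → ℝ := fun p => fderiv ℝ Y p (0, 1) with hudef
  set w : Fin n → EuclideanSpace ℝ (Fin n) × ℝ → ℝ :=
    fun i p => fderiv ℝ Y p (EuclideanSpace.single i 1, 0) with hwdef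
  have hYd : Differentiable ℝ Y := hy.differentiable (by norm_num)
  have hu_c1 : ContDiff ℝ 1 u := aux_contDiff_fderiv_apply hy _
  have hw_c1 : ∀ i, ContDiff ℝ 1 (w i) := fun i => aux_contDiff_fderiv_apply hy _
  -- time derivative of y equals u
  have h_deriv : ∀ x s, deriv (y x) s = u (x, s) := by
    intro x s
    exact (aux_hasDerivAt_slice (hYd (x, s))).deriv
  -- spatial derivative slice
  have h_w_slice : ∀ (g : EuclideanSpace ℝ (Fin n) × ℝ → ℝ), Differentiable ℝ g →
      ∀ x s (v : EuclideanSpace ℝ (Fin n)),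
      fderiv ℝ (fun x' => g (x', s)) x v = fderiv ℝ g (x, s) (v, 0) := by
    intro g hg x s v
    rw [(aux_hasFDerivAt_slice (hg (x, s))).fderiv]
    rfl
  have h_deriv2 : ∀ x s, deriv (deriv (y x)) s = fderiv ℝ u (x, s) (0, 1) := by
    intro x s
    have h1 : deriv (y x) = fun s' => u (x, s') := funext fun s' => h_deriv x s'
    rw [h1]
    exact (aux_hasDerivAt_slice ((hu_c1.differentiable one_ne_zero) (x, s))).deriv
  have h_lap : ∀ x s, spatialLaplacian (fun x' => y x' s) x
      = ∑ i, fderiv ℝ (w i) (x, s) (EuclideanSpace.single i 1, 0) := by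
    intro x s
    unfold spatialLaplacian
    refine Finset.sum_congr rfl fun i _ => ?_
    have h1 : (fun z => fderiv ℝ (fun x' => y x' s) z (EuclideanSpace.single i 1))
        = fun z => w i (z, s) := by
      funext z
      exact h_w_slice Y hYd z s (EuclideanSpace.single i 1)
    rw [h1]
    exact h_w_slice (w i) ((hw_c1 i).differentiable one_ne_zero) x s (EuclideanSpace.single i 1)
  -- support facts
  have hw_out : ∀ i, ∀ x ∉ K, ∀ s ∈ Set.Icc (0:ℝ) T, w i (x, s) = 0 := by
    intro i x hx s hs
    show (fderiv ℝ Y (x, s)) (EuclideanSpace.single i 1, 0) = 0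
    rw [← h_w_slice Y hYd x s (EuclideanSpace.single i 1)]
    have hloc : (fun x' => y x' s) =ᶠ[nhds x] (fun _ => (0:ℝ)) := by
      filter_upwards [hK.isClosed.isOpen_compl.mem_nhds hx] with z hz
      exact hyK z hz s hs
    rw [hloc.fderiv_eq, fderiv_fun_const]
    rfl
  have hu_out : ∀ x ∉ K, ∀ s ∈ Set.Icc (0:ℝ) T, u (x, s) = 0 := by
    intro x hx
    have hIoo : ∀ s ∈ Set.Ioo (0:ℝ) T, u (x, s) = 0 := by
      intro s hs
      have hloc : Y =ᶠ[nhds (x, s)] (fun _ => (0:ℝ)) := by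
        have hopen : IsOpen ((Kᶜ : Set (EuclideanSpace ℝ (Fin n))) ×ˢ Set.Ioo (0:ℝ) T) :=
          hK.isClosed.isOpen_compl.prod isOpen_Ioo
        filter_upwards [hopen.mem_nhds ⟨hx, hs⟩] with p hp
        exact hyK p.1 hp.1 p.2 (Set.mem_Icc_of_Ioo hp.2)
      show fderiv ℝ Y (x, s) (0, 1) = 0
      rw [hloc.fderiv_eq, fderiv_fun_const]
      rfl
    have hcont : Continuous fun s => u (x, s) :=
      (hu_c1.continuous).comp (Continuous.prodMk_right x)
    have hclos : Set.EqOn (fun s => u (x, s)) (fun _ => (0:ℝ)) (closure (Set.Ioo 0 T)) :=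
      Set.EqOn.closure (fun s hs => hIoo s hs) hcont continuous_const
    rw [closure_Ioo hT.ne] at hclos
    exact fun s hs => hclos hs
  -- the density and its time derivative
  set D : EuclideanSpace ℝ (Fin n) × ℝ → ℝ := fun p => 2 * ∑ i,
    (fderiv ℝ u p (EuclideanSpace.single i 1, 0) * w i p
      + u p * fderiv ℝ (w i) p (EuclideanSpace.single i 1, 0)) with hDdef
  set Fc : EuclideanSpace ℝ (Fin n) → ℝ → ℝ :=
    fun x s => ((c x) ^ 2)⁻¹ * (u (x, s)) ^ 2 + ∑ i, (w i (x, s)) ^ 2 with hFdef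
  have cont_fu : ∀ (g : EuclideanSpace ℝ (Fin n) × ℝ → ℝ), ContDiff ℝ 1 g →
      ∀ (v : EuclideanSpace ℝ (Fin n) × ℝ), Continuous (fun p => fderiv ℝ g p v) :=
    fun g hg v => (hg.continuous_fderiv one_ne_zero).clm_apply continuous_const
  have cont_D : Continuous D := by
    apply continuous_const.mul
    apply continuous_finset_sum
    intro i _
    exact ((cont_fu u hu_c1 _).mul (hw_c1 i).continuous).add
      (hu_c1.continuous.mul (cont_fu (w i) (hw_c1 i) _))
  have hD_out : ∀ x ∉ K, ∀ s ∈ Set.Icc (0:ℝ) T, D (x, s) = 0 := by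
    intro x hx s hs
    show 2 * ∑ i, _ = 0
    rw [Finset.sum_congr rfl fun i _ => ?_, Finset.sum_const, smul_zero, mul_zero]
    rw [hw_out i x hx s hs, hu_out x hx s hs, mul_zero, zero_mul, add_zero]
  -- FTC : time derivative of the energy density
  have hFTC : ∀ x, ∀ s ∈ Set.Ioo (0:ℝ) T, HasDerivAt (fun s' => Fc x s') (D (x, s)) s := by
    intro x s hs
    have hu_t : HasDerivAt (fun s' => u (x, s')) (fderiv ℝ u (x, s) (0, 1)) s :=
      aux_hasDerivAt_slice ((hu_c1.differentiable one_ne_zero) (x, s))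
    have hw_t : ∀ i, HasDerivAt (fun s' => w i (x, s')) (fderiv ℝ u (x, s) (EuclideanSpace.single i 1, 0)) s := by
      intro i
      have h0 := aux_hasDerivAt_slice (((hw_c1 i).differentiable one_ne_zero) (x, s))
      have hsym : fderiv ℝ (w i) (x, s) (0, 1)
          = fderiv ℝ u (x, s) (EuclideanSpace.single i 1, 0) :=
        (aux_symm hy (0, 1) (EuclideanSpace.single i 1, 0) (x, s)).symm
      rwa [hsym] at h0
    have h1 : HasDerivAt (fun s' => Fc x s')
        (((c x) ^ 2)⁻¹ * (2 * u (x, s) * fderiv ℝ u (x, s) (0, 1))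
          + ∑ i, 2 * w i (x, s) * fderiv ℝ u (x, s) (EuclideanSpace.single i 1, 0)) s := by
      apply HasDerivAt.add
      · have := (hu_t.pow 2).const_mul (((c x) ^ 2)⁻¹)
        simpa [mul_comm, mul_assoc, mul_left_comm] using this
      · apply HasDerivAt.fun_sum
        intro i _
        have := (hw_t i).fun_pow 2
        simpa [mul_comm, mul_assoc, mul_left_comm] using this
    have hw : ((c x) ^ 2)⁻¹ * fderiv ℝ u (x, s) (0, 1)
        = ∑ i, fderiv ℝ (w i) (x, s) (EuclideanSpace.single i 1, 0) := by
      have := hwave x s hs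
      rwa [h_deriv2, h_lap] at this
    have key : ((c x) ^ 2)⁻¹ * (2 * u (x, s) * fderiv ℝ u (x, s) (0, 1))
          + ∑ i, 2 * w i (x, s) * fderiv ℝ u (x, s) (EuclideanSpace.single i 1, 0) = D (x, s) := by
      have h2 : ((c x) ^ 2)⁻¹ * (2 * u (x, s) * fderiv ℝ u (x, s) (0, 1))
          = 2 * u (x, s) * (((c x) ^ 2)⁻¹ * fderiv ℝ u (x, s) (0, 1)) := by ring
      rw [h2, hw]
      simp only [hDdef, Finset.mul_sum, ← Finset.sum_add_distrib]
      refine Finset.sum_congr rfl fun i _ => ?_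
      ring
    rw [← key]
    exact h1
  -- integrability helpers
  have hKmeas : MeasurableSet K := hK.isClosed.measurableSet
  have int_cont_suppK : ∀ (g : EuclideanSpace ℝ (Fin n) → ℝ), Continuous g →
      (∀ x ∉ K, g x = 0) → Integrable g := fun g hg h0 =>
    hg.integrable_of_hasCompactSupport (HasCompactSupport.intro hK h0)
  have cont_u_slice : ∀ s : ℝ, Continuous (fun x => u (x, s)) := fun s =>
    hu_c1.continuous.comp (continuous_id.prodMk continuous_const)
  have cont_w_slice : ∀ i, ∀ s : ℝ, Continuous (fun x => w i (x, s)) := fun i s =>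
    (hw_c1 i).continuous.comp (continuous_id.prodMk continuous_const)
  have int_u_sq : ∀ s ∈ Set.Icc (0:ℝ) T, Integrable (fun x => (u (x, s)) ^ 2) := fun s hs =>
    int_cont_suppK _ ((cont_u_slice s).pow 2)
      (fun x hx => by rw [hu_out x hx s hs]; norm_num)
  have int_S : ∀ s ∈ Set.Icc (0:ℝ) T, Integrable (fun x => ∑ i, (w i (x, s)) ^ 2) := fun s hs =>
    int_cont_suppK _ (continuous_finset_sum _ fun i _ => (cont_w_slice i s).pow 2)
      (fun x hx => Finset.sum_eq_zero fun i _ => by rw [hw_out i x hx s hs]; norm_num)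
  have int_cu : ∀ s ∈ Set.Icc (0:ℝ) T,
      Integrable (fun x => ((c x) ^ 2)⁻¹ * (u (x, s)) ^ 2) := by
    intro s hs
    apply Integrable.mono' (((int_u_sq s hs).const_mul ((c_min ^ 2)⁻¹)))
    · exact (((hc_meas.pow_const 2).inv).aemeasurable.aestronglyMeasurable.mul
        ((cont_u_slice s).pow 2).aestronglyMeasurable)
    · refine Filter.Eventually.of_forall fun x => ?_
      have h1 : (0:ℝ) < c x := lt_of_lt_of_le hc_min_pos (hc x).1
      have h2 : c_min ^ 2 ≤ (c x) ^ 2 := by nlinarith [(hc x).1]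
      have h3 : ((c x) ^ 2)⁻¹ ≤ (c_min ^ 2)⁻¹ := by
        apply inv_anti₀ (by positivity) h2
      have h4 : (0:ℝ) ≤ (u (x, s)) ^ 2 := sq_nonneg _
      rw [Real.norm_eq_abs, abs_of_nonneg (by positivity)]
      exact mul_le_mul_of_nonneg_right h3 h4
  have int_Fc : ∀ s ∈ Set.Icc (0:ℝ) T, Integrable (fun x => Fc x s) := fun s hs =>
    (int_cu s hs).add (int_S s hs)
  -- fix the time
  intro t ht
  obtain ⟨ht0, htT⟩ := ht
  -- fundamental theorem of calculus in time, for each x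
  have hFTCint : ∀ x, Fc x t - Fc x 0 = ∫ s in (0:ℝ)..t, D (x, s) := by
    intro x
    rcases eq_or_lt_of_le ht0 with h0 | h0
    · rw [← h0]; simp
    · have hcont : ContinuousOn (fun s => Fc x s) (Set.Icc 0 t) := by
        apply Continuous.continuousOn
        exact (continuous_const.mul ((hu_c1.continuous.comp (Continuous.prodMk_right x)).pow 2)).add
          (continuous_finset_sum _ fun i _ =>
            ((hw_c1 i).continuous.comp (Continuous.prodMk_right x)).pow 2)
      rw [intervalIntegral.integral_eq_sub_of_hasDeriv_right_of_le ht0 hcont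
        (fun s hs => (hFTC x s ⟨hs.1, lt_of_lt_of_le hs.2 htT⟩).hasDerivWithinAt)
        ((cont_D.comp (Continuous.prodMk_right x)).intervalIntegrable 0 t)]
  -- integrability of D on the product space
  have hDint : Integrable D (volume.prod (volume.restrict (Set.Ioc (0:ℝ) t))) := by
    obtain ⟨M, hM⟩ := (hK.prod (isCompact_Icc (a := (0:ℝ)) (b := T))).exists_bound_of_continuousOn cont_D.continuousOn
    have hbad : (volume.prod (volume.restrict (Set.Ioc (0:ℝ) t)))
        {p : EuclideanSpace ℝ (Fin n) × ℝ | ¬ p.2 ∈ Set.Ioc (0:ℝ) t} = 0 := by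
      have hset : {p : EuclideanSpace ℝ (Fin n) × ℝ | ¬ p.2 ∈ Set.Ioc (0:ℝ) t}
          = Set.univ ×ˢ (Set.Ioc (0:ℝ) t)ᶜ := by
        ext p; simp [Set.mem_prod]
      rw [hset, Measure.prod_prod, Measure.restrict_apply measurableSet_Ioc.compl]
      simp
    have hae : ∀ᵐ p : EuclideanSpace ℝ (Fin n) × ℝ
        ∂(volume.prod (volume.restrict (Set.Ioc (0:ℝ) t))), p.2 ∈ Set.Ioc (0:ℝ) t := by
      rw [ae_iff]; exact hbad
    apply Integrable.mono'
      (g := fun p : EuclideanSpace ℝ (Fin n) × ℝ =>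
        Set.indicator (K ×ˢ Set.Ioc (0:ℝ) t) (fun _ => M) p)
    · rw [integrable_indicator_iff (hKmeas.prod measurableSet_Ioc)]
      refine (integrableOn_const_iff (C := M) (by finiteness)).2 (Or.inr ?_)
      rw [Measure.prod_prod, Measure.restrict_apply measurableSet_Ioc, Set.inter_self]
      exact ENNReal.mul_lt_top hK.measure_lt_top measure_Ioc_lt_top
    · exact cont_D.aestronglyMeasurable
    · filter_upwards [hae] with p hp
      have hpIcc : p.2 ∈ Set.Icc (0:ℝ) T := ⟨hp.1.le, hp.2.trans htT⟩
      by_cases hpK : p.1 ∈ K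
      · rw [Set.indicator_of_mem (Set.mk_mem_prod hpK hp)]
        exact hM p ⟨hpK, hpIcc⟩
      · rw [Set.indicator_of_notMem (fun hmem => hpK hmem.1)]
        have : D p = 0 := by
          have := hD_out p.1 hpK p.2 hpIcc
          simpa using this
        rw [this]; simp
  -- the spatial integral of D vanishes (integration by parts)
  have hinner : ∀ s ∈ Set.Ioo (0:ℝ) T, (∫ x, D (x, s)) = 0 := by
    intro s hs
    have hsIcc : s ∈ Set.Icc (0:ℝ) T := Set.mem_Icc_of_Ioo hs
    have hfd : Differentiable ℝ (fun x => u (x, s)) :=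
      (hu_c1.differentiable one_ne_zero).comp (differentiable_id.prodMk (differentiable_const s))
    have hgd : ∀ i, Differentiable ℝ (fun x => w i (x, s)) := fun i =>
      ((hw_c1 i).differentiable one_ne_zero).comp (differentiable_id.prodMk (differentiable_const s))
    have hfd' : ∀ (x : EuclideanSpace ℝ (Fin n)) i,
        fderiv ℝ (fun x' => u (x', s)) x (EuclideanSpace.single i 1)
          = fderiv ℝ u (x, s) (EuclideanSpace.single i 1, 0) := fun x i =>
      h_w_slice u (hu_c1.differentiable one_ne_zero) x s _
    have hgd' : ∀ (x : EuclideanSpace ℝ (Fin n)) i,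
        fderiv ℝ (fun x' => w i (x', s)) x (EuclideanSpace.single i 1)
          = fderiv ℝ (w i) (x, s) (EuclideanSpace.single i 1, 0) := fun x i =>
      h_w_slice (w i) ((hw_c1 i).differentiable one_ne_zero) x s _
    have cont_fus : ∀ i, Continuous (fun x => fderiv ℝ u (x, s) (EuclideanSpace.single i 1, 0)) :=
      fun i => (cont_fu u hu_c1 _).comp (continuous_id.prodMk continuous_const)
    have cont_gws : ∀ i, Continuous
        (fun x => fderiv ℝ (w i) (x, s) (EuclideanSpace.single i 1, 0)) :=
      fun i => (cont_fu (w i) (hw_c1 i) _).comp (continuous_id.prodMk continuous_const)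
    have int1 : ∀ i, Integrable (fun x => fderiv ℝ u (x, s) (EuclideanSpace.single i 1, 0)
        * w i (x, s)) := fun i =>
      int_cont_suppK _ ((cont_fus i).mul (cont_w_slice i s))
        (fun x hx => by rw [hw_out i x hx s hsIcc, mul_zero])
    have int2 : ∀ i, Integrable (fun x => u (x, s)
        * fderiv ℝ (w i) (x, s) (EuclideanSpace.single i 1, 0)) := fun i =>
      int_cont_suppK _ ((cont_u_slice s).mul (cont_gws i))
        (fun x hx => by rw [hu_out x hx s hsIcc, zero_mul])
    have int3 : ∀ i, Integrable (fun x => u (x, s) * w i (x, s)) := fun i =>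
      int_cont_suppK _ ((cont_u_slice s).mul (cont_w_slice i s))
        (fun x hx => by rw [hu_out x hx s hsIcc, zero_mul])
    have hparts : ∀ i, (∫ x, (fderiv ℝ u (x, s) (EuclideanSpace.single i 1, 0) * w i (x, s)
        + u (x, s) * fderiv ℝ (w i) (x, s) (EuclideanSpace.single i 1, 0))) = 0 := by
      intro i
      rw [integral_add (int1 i) (int2 i)]
      have hibp := integral_mul_fderiv_eq_neg_fderiv_mul_of_integrable
        (f := fun x => u (x, s)) (g := fun x => w i (x, s))
        (v := EuclideanSpace.single i 1) (μ := (volume : Measure (EuclideanSpace ℝ (Fin n))))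
        ?_ ?_ (int3 i) (fun x _ => hfd x) (fun x _ => hgd i x)
      · have e1 : (fun x => u (x, s) * fderiv ℝ (fun x' => w i (x', s)) x (EuclideanSpace.single i 1))
            = fun x => u (x, s) * fderiv ℝ (w i) (x, s) (EuclideanSpace.single i 1, 0) := by
          funext x; rw [hgd' x i]
        have e2 : (fun x => fderiv ℝ (fun x' => u (x', s)) x (EuclideanSpace.single i 1) * w i (x, s))
            = fun x => fderiv ℝ u (x, s) (EuclideanSpace.single i 1, 0) * w i (x, s) := by
          funext x; rw [hfd' x i]
        rw [e1, e2] at hibp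
        rw [hibp]; ring
      · have e2 : (fun x => fderiv ℝ (fun x' => u (x', s)) x (EuclideanSpace.single i 1) * w i (x, s))
            = fun x => fderiv ℝ u (x, s) (EuclideanSpace.single i 1, 0) * w i (x, s) := by
          funext x; rw [hfd' x i]
        rw [e2]; exact int1 i
      · have e1 : (fun x => u (x, s) * fderiv ℝ (fun x' => w i (x', s)) x (EuclideanSpace.single i 1))
            = fun x => u (x, s) * fderiv ℝ (w i) (x, s) (EuclideanSpace.single i 1, 0) := by
          funext x; rw [hgd' x i]
        rw [e1]; exact int2 i
    have hDeq : (fun x => D (x, s)) = fun x => 2 * ∑ i,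
        (fderiv ℝ u (x, s) (EuclideanSpace.single i 1, 0) * w i (x, s)
          + u (x, s) * fderiv ℝ (w i) (x, s) (EuclideanSpace.single i 1, 0)) := rfl
    rw [hDeq]
    rw [MeasureTheory.integral_const_mul]
    have hsum : (∫ x, ∑ i, (fderiv ℝ u (x, s) (EuclideanSpace.single i 1, 0) * w i (x, s)
        + u (x, s) * fderiv ℝ (w i) (x, s) (EuclideanSpace.single i 1, 0))) = 0 := by
      rw [integral_finset_sum (f := fun i x =>
          fderiv ℝ u (x, s) (EuclideanSpace.single i 1, 0) * w i (x, s)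
          + u (x, s) * fderiv ℝ (w i) (x, s) (EuclideanSpace.single i 1, 0))
        _ (fun i _ => (int1 i).add (int2 i))]
      exact Finset.sum_eq_zero fun i _ => hparts i
    rw [hsum, mul_zero]
  -- energy conservation
  have hswap : ∫ x, ∫ s in Set.Ioc (0:ℝ) t, D (x, s) = ∫ s in Set.Ioc (0:ℝ) t, ∫ x, D (x, s) :=
    integral_integral_swap (f := fun x s => D (x, s)) hDint
  have hzero : ∫ x, (Fc x t - Fc x 0) = 0 := by
    have heq : (fun x => Fc x t - Fc x 0) = fun x => ∫ s in Set.Ioc (0:ℝ) t, D (x, s) := by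
      funext x
      rw [hFTCint x, intervalIntegral.integral_of_le ht0]
    rw [heq, hswap]
    have hae0 : ∀ᵐ s ∂(volume.restrict (Set.Ioc (0:ℝ) t)), (∫ x, D (x, s)) = (0:ℝ) := by
      have hne : ∀ᵐ s : ℝ ∂volume, s ≠ t := by
        rw [ae_iff]
        have hset : {a : ℝ | ¬a ≠ t} = {t} := by ext a; simp
        rw [hset]; exact Real.volume_singleton
      filter_upwards [ae_restrict_mem measurableSet_Ioc,
        hne.filter_mono (ae_mono Measure.restrict_le_self)] with s hsm hsne
      exact hinner s ⟨hsm.1, (lt_of_le_of_ne hsm.2 hsne).trans_le htT⟩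
    calc ∫ s in Set.Ioc (0:ℝ) t, ∫ x, D (x, s)
        = ∫ s in Set.Ioc (0:ℝ) t, (0:ℝ) := integral_congr_ae hae0
      _ = 0 := by simp
  have hcons : ∫ x, Fc x t = ∫ x, Fc x 0 := by
    rw [integral_sub (int_Fc t ⟨ht0, htT⟩) (int_Fc 0 ⟨le_rfl, hT.le⟩)] at hzero
    linarith
  -- initial energy
  have hgradf : ∀ x, ‖gradient f x‖ ^ 2 = ∑ i, (w i (x, 0)) ^ 2 := by
    intro x
    rw [aux_grad_norm_sq f x]
    refine Finset.sum_congr rfl fun i _ => ?_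
    have h2 : fderiv ℝ (fun x' => Y (x', 0)) x (EuclideanSpace.single i 1) = w i (x, 0) :=
      h_w_slice Y hYd x 0 _
    rw [← h2, show (fun x' => Y (x', 0)) = f from funext hinit]
  have hE0 : ∫ x, Fc x 0 = ∫ x, ‖gradient f x‖ ^ 2 := by
    refine integral_congr_ae (Filter.Eventually.of_forall fun x => ?_)
    have hu0 : u (x, 0) = 0 := by rw [← h_deriv x 0]; exact hinit' x
    show ((c x) ^ 2)⁻¹ * (u (x, 0)) ^ 2 + ∑ i, (w i (x, 0)) ^ 2 = ‖gradient f x‖ ^ 2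
    rw [hu0, hgradf x]; ring
  have hEt : ∫ x, Fc x t = ∫ x, ‖gradient f x‖ ^ 2 := hcons.trans hE0
  have htIcc : t ∈ Set.Icc (0:ℝ) T := ⟨ht0, htT⟩
  constructor
  · have e1 : (fun x => (deriv (y x) t) ^ 2) = fun x => (u (x, t)) ^ 2 := by
      funext x; rw [h_deriv x t]
    rw [e1]
    have step1 : ∫ x, (u (x, t)) ^ 2 ≤ ∫ x, c_max ^ 2 * (((c x) ^ 2)⁻¹ * (u (x, t)) ^ 2) := by
      apply integral_mono (int_u_sq t htIcc) ((int_cu t htIcc).const_mul _)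
      intro x
      have h1 : (0:ℝ) < c x := lt_of_lt_of_le hc_min_pos (hc x).1
      have h2 : (c x) ^ 2 ≤ c_max ^ 2 := by nlinarith [(hc x).2]
      have h3 : (0:ℝ) < (c x) ^ 2 := by positivity
      have h4 : (1:ℝ) ≤ c_max ^ 2 * ((c x) ^ 2)⁻¹ := by
        rw [← div_eq_mul_inv, le_div_iff₀ h3]
        linarith
      have h5 := sq_nonneg (u (x, t))
      calc (u (x, t)) ^ 2 ≤ (c_max ^ 2 * ((c x) ^ 2)⁻¹) * (u (x, t)) ^ 2 :=
            le_mul_of_one_le_left h5 h4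
        _ = c_max ^ 2 * (((c x) ^ 2)⁻¹ * (u (x, t)) ^ 2) := by ring
    have step2 : ∫ x, c_max ^ 2 * (((c x) ^ 2)⁻¹ * (u (x, t)) ^ 2)
        = c_max ^ 2 * ∫ x, ((c x) ^ 2)⁻¹ * (u (x, t)) ^ 2 := integral_const_mul _ _
    have step3 : ∫ x, ((c x) ^ 2)⁻¹ * (u (x, t)) ^ 2 ≤ ∫ x, Fc x t := by
      apply integral_mono (int_cu t htIcc) (int_Fc t htIcc)
      intro x
      show _ ≤ ((c x) ^ 2)⁻¹ * (u (x, t)) ^ 2 + ∑ i, (w i (x, t)) ^ 2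
      have hnn : (0:ℝ) ≤ ∑ i, (w i (x, t)) ^ 2 := Finset.sum_nonneg fun i _ => sq_nonneg _
      linarith
    have h6 : c_max ^ 2 * ∫ x, ((c x) ^ 2)⁻¹ * (u (x, t)) ^ 2
        ≤ c_max ^ 2 * ∫ x, Fc x t :=
      mul_le_mul_of_nonneg_left step3 (sq_nonneg _)
    calc ∫ x, (u (x, t)) ^ 2 ≤ c_max ^ 2 * ∫ x, ((c x) ^ 2)⁻¹ * (u (x, t)) ^ 2 := by
          rw [← step2]; exact step1
      _ ≤ c_max ^ 2 * ∫ x, Fc x t := h6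
      _ = c_max ^ 2 * ∫ x, ‖gradient f x‖ ^ 2 := by rw [hEt]
  · have e2 : (fun x => ‖gradient (fun x' => y x' t) x‖ ^ 2)
        = fun x => ∑ i, (w i (x, t)) ^ 2 := by
      funext x
      rw [aux_grad_norm_sq]
      refine Finset.sum_congr rfl fun i _ => ?_
      exact congrArg (fun r => r ^ 2) (h_w_slice Y hYd x t (EuclideanSpace.single i 1))
    rw [e2]
    have step : ∫ x, ∑ i, (w i (x, t)) ^ 2 ≤ ∫ x, Fc x t := by
      apply integral_mono (int_S t htIcc) (int_Fc t htIcc)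
      intro x
      show _ ≤ ((c x) ^ 2)⁻¹ * (u (x, t)) ^ 2 + ∑ i, (w i (x, t)) ^ 2
      have h1 : (0:ℝ) < c x := lt_of_lt_of_le hc_min_pos (hc x).1
      have hnn : (0:ℝ) ≤ ((c x) ^ 2)⁻¹ * (u (x, t)) ^ 2 := by positivity
      linarith
    rw [← hEt]
    exact step
end

section
/- For every t ∈ [0,T] one has ∫_{ℝⁿ} (y(x,t) − f(x))² dx ≤ c_max² · t² · ∫_{ℝⁿ} |∇f(x)|² dx. -/
open MeasureTheory Set

lemma norm_grad_sq {n : ℕ} {f : EuclideanSpace ℝ (Fin n) → ℝ}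
    {x : EuclideanSpace ℝ (Fin n)} (hd : DifferentiableAt ℝ f x) :
    ‖gradient f x‖ ^ 2 = ∑ i : Fin n, (fderiv ℝ f x (EuclideanSpace.single i 1)) ^ 2 := by
  have hg := hd.hasGradientAt
  have hfd := hasGradientAt_iff_hasFDerivAt.mp hg
  have happ : ∀ i : Fin n, fderiv ℝ f x (EuclideanSpace.single i 1) = gradient f x i := by
    intro i
    rw [hfd.fderiv, InnerProductSpace.toDual_apply_apply, EuclideanSpace.inner_single_right]
    simp
  rw [EuclideanSpace.norm_eq]
  rw [Real.sq_sqrt (by positivity)]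
  refine Finset.sum_congr rfl fun i _ => ?_
  rw [happ i, Real.norm_eq_abs, sq_abs]

namespace Wave2Aux

variable {n : ℕ}



noncomputable def D (y : EuclideanSpace ℝ (Fin n) → ℝ → ℝ) (p : EuclideanSpace ℝ (Fin n) × ℝ) :
    (EuclideanSpace ℝ (Fin n) × ℝ) →L[ℝ] ℝ :=
  fderiv ℝ (fun q : EuclideanSpace ℝ (Fin n) × ℝ => y q.1 q.2) p

noncomputable def D2 (y : EuclideanSpace ℝ (Fin n) → ℝ → ℝ)
    (p : EuclideanSpace ℝ (Fin n) × ℝ) :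
    (EuclideanSpace ℝ (Fin n) × ℝ) →L[ℝ] (EuclideanSpace ℝ (Fin n) × ℝ) →L[ℝ] ℝ :=
  fderiv ℝ (D y) p

variable {y : EuclideanSpace ℝ (Fin n) → ℝ → ℝ} (hy : ContDiff ℝ 2 (fun p : EuclideanSpace ℝ (Fin n) × ℝ => y p.1 p.2))

section basic
include hy

lemma hYd : Differentiable ℝ (fun p : EuclideanSpace ℝ (Fin n) × ℝ => y p.1 p.2) := hy.differentiable (by norm_num)

lemma hDcd : ContDiff ℝ 1 (D y) := hy.fderiv_right (le_refl 2)

lemma hDd : Differentiable ℝ (D y) := (hDcd hy).differentiable one_ne_zero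

lemma hDcont : Continuous (D y) := (hDd hy).continuous

lemma hD2cont : Continuous (D2 y) := (hDcd hy).continuous_fderiv one_ne_zero

lemma hasDerivAt_time (x : EuclideanSpace ℝ (Fin n)) (t : ℝ) :
    HasDerivAt (y x) (D y (x, t) (0, 1)) t := by
  have hp : HasDerivAt (fun s : ℝ => ((x, s) : EuclideanSpace ℝ (Fin n) × ℝ)) ((0 : EuclideanSpace ℝ (Fin n)), (1 : ℝ)) t :=
    (hasDerivAt_const t x).prodMk (hasDerivAt_id t)
  exact (hYd hy (x, t)).hasFDerivAt.comp_hasDerivAt t hp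

lemma deriv_time (x : EuclideanSpace ℝ (Fin n)) : deriv (y x) = fun t => D y (x, t) (0, 1) :=
  funext fun t => (hasDerivAt_time hy x t).deriv

lemma hasDerivAt_time_D (x : EuclideanSpace ℝ (Fin n)) (t : ℝ) (a : EuclideanSpace ℝ (Fin n) × ℝ) :
    HasDerivAt (fun s => D y (x, s) a) (D2 y (x, t) (0, 1) a) t := by
  have hp : HasDerivAt (fun s : ℝ => ((x, s) : EuclideanSpace ℝ (Fin n) × ℝ)) ((0 : EuclideanSpace ℝ (Fin n)), (1 : ℝ)) t :=
    (hasDerivAt_const t x).prodMk (hasDerivAt_id t)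
  have h1 : HasDerivAt (fun s => D y (x, s)) (D2 y (x, t) (0, 1)) t :=
    (hDd hy (x, t)).hasFDerivAt.comp_hasDerivAt t hp
  have := h1.clm_apply (hasDerivAt_const t a)
  simpa using this

lemma deriv2_time (x : EuclideanSpace ℝ (Fin n)) (t : ℝ) :
    deriv (deriv (y x)) t = D2 y (x, t) (0, 1) (0, 1) := by
  rw [deriv_time hy x]
  exact (hasDerivAt_time_D hy x t _).deriv

lemma hasFDerivAt_space (x : EuclideanSpace ℝ (Fin n)) (t : ℝ) :
    HasFDerivAt (fun x' => y x' t)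
      ((D y (x, t)).comp (ContinuousLinearMap.inl ℝ (EuclideanSpace ℝ (Fin n)) ℝ)) x := by
  have hp : HasFDerivAt (fun x' : EuclideanSpace ℝ (Fin n) => ((x', t) : EuclideanSpace ℝ (Fin n) × ℝ))
      (ContinuousLinearMap.inl ℝ (EuclideanSpace ℝ (Fin n)) ℝ) x := hasFDerivAt_prodMk_left x t
  exact (hYd hy (x, t)).hasFDerivAt.comp x hp

lemma fderiv_space (x : EuclideanSpace ℝ (Fin n)) (t : ℝ) (w : EuclideanSpace ℝ (Fin n)) :
    fderiv ℝ (fun x' => y x' t) x w = D y (x, t) (w, 0) := by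
  rw [(hasFDerivAt_space hy x t).fderiv]; rfl

lemma hasFDerivAt_space_D (x : EuclideanSpace ℝ (Fin n)) (t : ℝ) (a : EuclideanSpace ℝ (Fin n) × ℝ) :
    HasFDerivAt (fun z => D y (z, t) a)
      (((D2 y (x, t)).flip a).comp (ContinuousLinearMap.inl ℝ (EuclideanSpace ℝ (Fin n)) ℝ)) x := by
  have hp : HasFDerivAt (fun x' : EuclideanSpace ℝ (Fin n) => ((x', t) : EuclideanSpace ℝ (Fin n) × ℝ))
      (ContinuousLinearMap.inl ℝ (EuclideanSpace ℝ (Fin n)) ℝ) x := hasFDerivAt_prodMk_left x t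
  have h1 : HasFDerivAt (fun z : EuclideanSpace ℝ (Fin n) => D y (z, t))
      ((D2 y (x, t)).comp (ContinuousLinearMap.inl ℝ (EuclideanSpace ℝ (Fin n)) ℝ)) x :=
    (hDd hy (x, t)).hasFDerivAt.comp x hp
  have h2 := h1.clm_apply (hasFDerivAt_const a x)
  refine h2.congr_fderiv ?_
  ext w
  simp

lemma fderiv_space_D (x : EuclideanSpace ℝ (Fin n)) (t : ℝ) (a : EuclideanSpace ℝ (Fin n) × ℝ) (w : EuclideanSpace ℝ (Fin n)) :
    fderiv ℝ (fun z => D y (z, t) a) x w = D2 y (x, t) (w, 0) a := by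
  rw [(hasFDerivAt_space_D hy x t a).fderiv]; rfl

lemma D2symm (p : EuclideanSpace ℝ (Fin n) × ℝ) (a b : EuclideanSpace ℝ (Fin n) × ℝ) : D2 y p a b = D2 y p b a :=
  second_derivative_symmetric (fun q => (hYd hy q).hasFDerivAt)
    ((hDd hy p).hasFDerivAt) a b

lemma lap_eq (x : EuclideanSpace ℝ (Fin n)) (t : ℝ) :
    spatialLaplacian (fun x' => y x' t) x
      = ∑ i : Fin n, D2 y (x, t) (EuclideanSpace.single i 1, 0) (EuclideanSpace.single i 1, 0) := by
  unfold spatialLaplacian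
  refine Finset.sum_congr rfl fun i _ => ?_
  have h1 : (fun z => fderiv ℝ (fun x' => y x' t) z (EuclideanSpace.single i 1))
      = fun z => D y (z, t) (EuclideanSpace.single i 1, 0) :=
    funext fun z => fderiv_space hy z t _
  rw [h1, fderiv_space_D hy x t _ _]

end basic

section vanish

variable {K : Set (EuclideanSpace ℝ (Fin n))} {T : ℝ}

include hy

lemma D_zero_Ioo (hKc : IsClosed K) (hT : 0 < T)
    (hyK : ∀ x ∉ K, ∀ t ∈ Set.Icc (0:ℝ) T, y x t = 0) :
    ∀ p : EuclideanSpace ℝ (Fin n) × ℝ, p.1 ∉ K → p.2 ∈ Set.Ioo (0:ℝ) T →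
      D y p = 0 ∧ D2 y p = 0 := by
  have hU : IsOpen ((Kᶜ : Set (EuclideanSpace ℝ (Fin n))) ×ˢ Set.Ioo (0:ℝ) T) :=
    (hKc.isOpen_compl).prod isOpen_Ioo
  have hzero : ∀ q ∈ ((Kᶜ : Set (EuclideanSpace ℝ (Fin n))) ×ˢ Set.Ioo (0:ℝ) T),
      (fun p : EuclideanSpace ℝ (Fin n) × ℝ => y p.1 p.2) q = 0 := by
    rintro ⟨a, b⟩ ⟨ha, hb⟩
    exact hyK a ha b ⟨le_of_lt hb.1, le_of_lt hb.2⟩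
  have hD : ∀ q ∈ ((Kᶜ : Set (EuclideanSpace ℝ (Fin n))) ×ˢ Set.Ioo (0:ℝ) T), D y q = 0 := by
    intro q hq
    have hev : (fun p : EuclideanSpace ℝ (Fin n) × ℝ => y p.1 p.2) =ᶠ[nhds q]
        (fun _ => (0:ℝ)) :=
      Filter.eventually_of_mem (hU.mem_nhds hq) hzero
    calc D y q = fderiv ℝ (fun _ => (0:ℝ)) q := hev.fderiv_eq
      _ = 0 := fderiv_const_apply 0
  intro p hp1 hp2
  have hpmem : p ∈ ((Kᶜ : Set (EuclideanSpace ℝ (Fin n))) ×ˢ Set.Ioo (0:ℝ) T) := ⟨hp1, hp2⟩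
  refine ⟨hD p hpmem, ?_⟩
  have hev : D y =ᶠ[nhds p] (fun _ => (0 : (EuclideanSpace ℝ (Fin n) × ℝ) →L[ℝ] ℝ)) :=
    Filter.eventually_of_mem (hU.mem_nhds hpmem) hD
  calc D2 y p = fderiv ℝ (fun _ => (0 : (EuclideanSpace ℝ (Fin n) × ℝ) →L[ℝ] ℝ)) p :=
        hev.fderiv_eq
    _ = 0 := fderiv_const_apply 0

lemma D_zero_Icc (hKc : IsClosed K) (hT : 0 < T)
    (hyK : ∀ x ∉ K, ∀ t ∈ Set.Icc (0:ℝ) T, y x t = 0) :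
    ∀ p : EuclideanSpace ℝ (Fin n) × ℝ, p.1 ∉ K → p.2 ∈ Set.Icc (0:ℝ) T →
      D y p = 0 ∧ D2 y p = 0 := by
  rintro ⟨x, t⟩ hx ht
  have h1 : Set.EqOn (fun s => D y (x, s)) (fun _ => 0) (Set.Ioo (0:ℝ) T) := fun s hs =>
    (D_zero_Ioo hy hKc hT hyK (x, s) hx hs).1
  have h2 : Set.EqOn (fun s => D2 y (x, s)) (fun _ => 0) (Set.Ioo (0:ℝ) T) := fun s hs =>
    (D_zero_Ioo hy hKc hT hyK (x, s) hx hs).2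
  have hc1 : Continuous (fun s => D y (x, s)) :=
    (hDcont hy).comp (Continuous.prodMk_right x)
  have hc2 : Continuous (fun s => D2 y (x, s)) :=
    (hD2cont hy).comp (Continuous.prodMk_right x)
  have e1 := h1.closure hc1 continuous_const
  have e2 := h2.closure hc2 continuous_const
  rw [closure_Ioo (ne_of_lt hT)] at e1 e2
  exact ⟨e1 ht, e2 ht⟩

end vanish


noncomputable def uu (y : EuclideanSpace ℝ (Fin n) → ℝ → ℝ) (t : ℝ)
    (x : EuclideanSpace ℝ (Fin n)) : ℝ := D y (x, t) (0, 1)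

noncomputable def vv (y : EuclideanSpace ℝ (Fin n) → ℝ → ℝ) (i : Fin n) (t : ℝ)
    (x : EuclideanSpace ℝ (Fin n)) : ℝ := D y (x, t) (EuclideanSpace.single i 1, 0)

noncomputable def enInt (c : EuclideanSpace ℝ (Fin n) → ℝ) (y : EuclideanSpace ℝ (Fin n) → ℝ → ℝ)
    (t : ℝ) (x : EuclideanSpace ℝ (Fin n)) : ℝ :=
  ((c x) ^ 2)⁻¹ * (uu y t x) ^ 2 + ∑ i : Fin n, (vv y i t x) ^ 2

noncomputable def En (c : EuclideanSpace ℝ (Fin n) → ℝ) (y : EuclideanSpace ℝ (Fin n) → ℝ → ℝ)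
    (t : ℝ) : ℝ := ∫ x, enInt c y t x

section energy

variable {c : EuclideanSpace ℝ (Fin n) → ℝ} {c_min c_max T : ℝ}
  {K : Set (EuclideanSpace ℝ (Fin n))}

include hy

lemma cont_Da (t : ℝ) (a : EuclideanSpace ℝ (Fin n) × ℝ) :
    Continuous (fun x => D y (x, t) a) :=
  Continuous.clm_apply ((hDcont hy).comp (continuous_id.prodMk continuous_const))
    continuous_const

lemma cont_D2ab (t : ℝ) (a b : EuclideanSpace ℝ (Fin n) × ℝ) :
    Continuous (fun x => D2 y (x, t) a b) :=
  Continuous.clm_apply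
    (Continuous.clm_apply ((hD2cont hy).comp (continuous_id.prodMk continuous_const))
      continuous_const) continuous_const

lemma cont_DaP (a : EuclideanSpace ℝ (Fin n) × ℝ) :
    Continuous (fun p : EuclideanSpace ℝ (Fin n) × ℝ => D y p a) :=
  Continuous.clm_apply (hDcont hy) continuous_const

lemma cont_D2abP (a b : EuclideanSpace ℝ (Fin n) × ℝ) :
    Continuous (fun p : EuclideanSpace ℝ (Fin n) × ℝ => D2 y p a b) :=
  Continuous.clm_apply (Continuous.clm_apply (hD2cont hy) continuous_const) continuous_const

variable (hKco : IsCompact K) (hT : 0 < T)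
  (hyK : ∀ x ∉ K, ∀ t ∈ Set.Icc (0:ℝ) T, y x t = 0)

include hKco hT hyK

lemma integrable_Da {t : ℝ} (ht : t ∈ Set.Icc (0:ℝ) T) (a : EuclideanSpace ℝ (Fin n) × ℝ)
    (g : ℝ → ℝ) (hg : Continuous g) (hg0 : g 0 = 0) :
    Integrable (fun x => g (D y (x, t) a)) := by
  refine Continuous.integrable_of_hasCompactSupport (hg.comp (cont_Da hy t a)) ?_
  refine HasCompactSupport.intro hKco fun x hx => ?_
  have := (D_zero_Icc hy hKco.isClosed hT hyK (x, t) hx ht).1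
  simp [this, hg0]

lemma integrable_mul_DD {t : ℝ} (ht : t ∈ Set.Icc (0:ℝ) T)
    {g1 g2 : EuclideanSpace ℝ (Fin n) → ℝ} (h1 : Continuous g1) (h2 : Continuous g2)
    (h1z : ∀ x ∉ K, g1 x = 0) :
    Integrable (fun x => g1 x * g2 x) := by
  refine Continuous.integrable_of_hasCompactSupport (h1.mul h2) ?_
  refine HasCompactSupport.intro hKco fun x hx => ?_
  simp [h1z x hx]

lemma integrable_enInt (hc_meas : Measurable c) (hc_min_pos : 0 < c_min)
    (hcge : ∀ x, c_min ≤ c x) {t : ℝ} (ht : t ∈ Set.Icc (0:ℝ) T) :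
    Integrable (enInt c y t) := by
  have hu2 : Integrable (fun x => (uu y t x) ^ 2) :=
    integrable_Da hy hKco hT hyK ht _ (fun s => s ^ 2) (continuous_pow 2) (by norm_num)
  have hcu : Integrable (fun x => ((c x) ^ 2)⁻¹ * (uu y t x) ^ 2) := by
    refine Integrable.mono' (hu2.const_mul ((c_min ^ 2)⁻¹)) ?_ ?_
    · exact (((hc_meas.pow_const 2).inv).mul
        (((cont_Da hy t _).measurable).pow_const 2)).aestronglyMeasurable
    · refine Filter.Eventually.of_forall fun x => ?_
      have hcx : 0 < c x := lt_of_lt_of_le hc_min_pos (hcge x)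
      have h1 : c_min ^ 2 ≤ (c x) ^ 2 := by nlinarith [hcge x]
      have h2 : ((c x) ^ 2)⁻¹ ≤ (c_min ^ 2)⁻¹ := by
        apply inv_anti₀ (by positivity) h1
      have h3 : (0:ℝ) ≤ (uu y t x) ^ 2 := sq_nonneg _
      rw [Real.norm_eq_abs, abs_of_nonneg (by positivity)]
      exact mul_le_mul_of_nonneg_right h2 h3
  have hv2 : Integrable (fun x => ∑ i : Fin n, (vv y i t x) ^ 2) := by
    apply integrable_finset_sum
    intro i _
    exact integrable_Da hy hKco hT hyK ht _ (fun s => s ^ 2) (continuous_pow 2) (by norm_num)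
  exact hcu.add hv2

end energy

section Ederiv

variable {c : EuclideanSpace ℝ (Fin n) → ℝ} {c_min c_max T : ℝ}
  {K : Set (EuclideanSpace ℝ (Fin n))}

include hy

lemma fderiv_uu (t : ℝ) (x w : EuclideanSpace ℝ (Fin n)) :
    fderiv ℝ (uu y t) x w = D2 y (x, t) (w, 0) (0, 1) :=
  fderiv_space_D hy x t _ w

lemma fderiv_vv (i : Fin n) (t : ℝ) (x w : EuclideanSpace ℝ (Fin n)) :
    fderiv ℝ (vv y i t) x w = D2 y (x, t) (w, 0) (EuclideanSpace.single i 1, 0) :=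
  fderiv_space_D hy x t _ w

lemma diff_uu (t : ℝ) : Differentiable ℝ (uu y t) :=
  fun x => (hasFDerivAt_space_D hy x t _).differentiableAt

lemma diff_vv (i : Fin n) (t : ℝ) : Differentiable ℝ (vv y i t) :=
  fun x => (hasFDerivAt_space_D hy x t _).differentiableAt

lemma meas_enInt (hc_meas : Measurable c) (t : ℝ) :
    AEStronglyMeasurable (enInt c y t) (volume : Measure (EuclideanSpace ℝ (Fin n))) := by
  apply Measurable.aestronglyMeasurable
  show Measurable fun x => ((c x) ^ 2)⁻¹ * (uu y t x) ^ 2 + ∑ i : Fin n, (vv y i t x) ^ 2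
  exact (((hc_meas.pow_const 2).inv).mul ((cont_Da hy t _).measurable.pow_const 2)).add
    (Finset.measurable_sum _ fun i _ => ((cont_Da hy t _).measurable.pow_const 2))

variable (hKco : IsCompact K) (hT : 0 < T)
  (hyK : ∀ x ∉ K, ∀ t ∈ Set.Icc (0:ℝ) T, y x t = 0)

include hKco hT hyK

lemma hasDerivAt_En_zero (hc_meas : Measurable c) (hc_min_pos : 0 < c_min)
    (hcge : ∀ x, c_min ≤ c x)
    (hwave : ∀ x, ∀ t ∈ Set.Ioo (0:ℝ) T,
      ((c x) ^ 2)⁻¹ * deriv (deriv (y x)) t = spatialLaplacian (fun x' => y x' t) x)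
    {t₀ : ℝ} (ht₀ : t₀ ∈ Set.Ioo (0:ℝ) T) :
    HasDerivAt (En c y) 0 t₀ := by
  classical
  set eps : ℝ := min t₀ (T - t₀) with heps_def
  have heps : 0 < eps := lt_min ht₀.1 (by linarith [ht₀.2])
  have hball : Metric.ball t₀ eps ⊆ Set.Ioo (0:ℝ) T := by
    intro s hs
    rw [Real.ball_eq_Ioo] at hs
    constructor
    · have := hs.1; have h1 : eps ≤ t₀ := min_le_left _ _; linarith
    · have := hs.2; have h2 : eps ≤ T - t₀ := min_le_right _ _; linarith
  set F' : ℝ → EuclideanSpace ℝ (Fin n) → ℝ := fun s x =>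
    ((c x) ^ 2)⁻¹ * (2 * uu y s x * D2 y (x, s) (0, 1) (0, 1))
      + ∑ i : Fin n, 2 * vv y i s x * D2 y (x, s) (0, 1) (EuclideanSpace.single i 1, 0)
    with hF'_def
  -- pointwise differentiability
  have h_diff : ∀ x, ∀ s : ℝ, HasDerivAt (fun s => enInt c y s x) (F' s x) s := by
    intro x s
    have hu2 : HasDerivAt (fun s => (uu y s x) ^ 2)
        (2 * uu y s x * D2 y (x, s) (0, 1) (0, 1)) s := by
      have := (hasDerivAt_time_D hy x s ((0 : EuclideanSpace ℝ (Fin n)), (1:ℝ))).fun_pow 2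
      refine this.congr_deriv ?_
      simp [uu]
    have hsum : HasDerivAt (fun s => ∑ i : Fin n, (vv y i s x) ^ 2)
        (∑ i : Fin n, 2 * vv y i s x * D2 y (x, s) (0, 1) (EuclideanSpace.single i 1, 0)) s := by
      apply HasDerivAt.fun_sum
      intro i _
      have := (hasDerivAt_time_D hy x s ((EuclideanSpace.single i 1 : EuclideanSpace ℝ (Fin n)),
        (0:ℝ))).fun_pow 2
      refine this.congr_deriv ?_
      simp [vv]
    exact (hu2.const_mul (((c x) ^ 2)⁻¹)).add hsum
  -- bound
  set Ψ : EuclideanSpace ℝ (Fin n) × ℝ → ℝ := fun p =>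
    (c_min ^ 2)⁻¹ * |2 * D y p (0, 1) * D2 y p (0, 1) (0, 1)|
      + ∑ i : Fin n, |2 * D y p (EuclideanSpace.single i 1, 0)
          * D2 y p (0, 1) (EuclideanSpace.single i 1, 0)| with hΨ_def
  have hΨcont : Continuous Ψ := by
    apply Continuous.add
    · exact continuous_const.mul ((continuous_const.mul (cont_DaP hy _)).mul (cont_D2abP hy _ _)).abs
    · apply continuous_finset_sum
      intro i _
      exact ((continuous_const.mul (cont_DaP hy _)).mul (cont_D2abP hy _ _)).abs
  obtain ⟨M, hM⟩ := (hKco.prod (isCompact_Icc (a := (0:ℝ)) (b := T))).exists_bound_of_continuousOn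
    hΨcont.continuousOn
  set bound : EuclideanSpace ℝ (Fin n) → ℝ := K.indicator fun _ => M with hbound_def
  have hbound_int : Integrable bound := by
    rw [hbound_def, integrable_indicator_iff hKco.isClosed.measurableSet]
    exact integrableOn_const hKco.measure_lt_top.ne
  have hcinv : ∀ x, ((c x) ^ 2)⁻¹ ≤ (c_min ^ 2)⁻¹ := by
    intro x
    have hcx : 0 < c x := lt_of_lt_of_le hc_min_pos (hcge x)
    have h1 : c_min ^ 2 ≤ (c x) ^ 2 := by nlinarith [hcge x]
    exact inv_anti₀ (by positivity) h1
  have h_bound : ∀ᵐ x : EuclideanSpace ℝ (Fin n), ∀ s ∈ Metric.ball t₀ eps,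
      ‖F' s x‖ ≤ bound x := by
    refine Filter.Eventually.of_forall fun x => fun s hs => ?_
    have hsIcc : s ∈ Set.Icc (0:ℝ) T := Set.Ioo_subset_Icc_self (hball hs)
    by_cases hx : x ∈ K
    · rw [hbound_def, Set.indicator_of_mem hx]
      have hΨle : ‖F' s x‖ ≤ Ψ (x, s) := by
        rw [hF'_def, hΨ_def]
        refine (norm_add_le _ _).trans (add_le_add ?_ ?_)
        · rw [Real.norm_eq_abs, abs_mul]
          refine mul_le_mul ?_ le_rfl (abs_nonneg _) (by positivity)
          rw [abs_of_nonneg (by positivity)]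
          exact hcinv x
        · rw [Real.norm_eq_abs]
          exact (Finset.abs_sum_le_sum_abs _ _).trans le_rfl
      refine hΨle.trans ((le_abs_self _).trans ?_)
      have := hM (x, s) ⟨hx, hsIcc⟩
      rwa [Real.norm_eq_abs] at this
    · rw [hbound_def, Set.indicator_of_notMem hx]
      have hz := D_zero_Icc hy hKco.isClosed hT hyK (x, s) hx hsIcc
      have : F' s x = 0 := by
        rw [hF'_def]
        simp [uu, vv, hz.1, hz.2]
      simp [this]
  -- apply dominated differentiation
  have hF'meas : AEStronglyMeasurable (F' t₀)
      (volume : Measure (EuclideanSpace ℝ (Fin n))) := by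
    apply Measurable.aestronglyMeasurable
    rw [hF'_def]
    exact (((hc_meas.pow_const 2).inv).mul
        ((continuous_const.mul (cont_Da hy t₀ _)).mul (cont_D2ab hy t₀ _ _)).measurable).add
      (Finset.measurable_sum _ fun i _ =>
        ((continuous_const.mul (cont_Da hy t₀ _)).mul (cont_D2ab hy t₀ _ _)).measurable)
  have hmain := hasDerivAt_integral_of_dominated_loc_of_deriv_le (Metric.ball_mem_nhds t₀ heps)
    (Filter.Eventually.of_forall fun s => meas_enInt hy hc_meas s)
    (integrable_enInt hy hKco hT hyK hc_meas hc_min_pos hcge (Set.Ioo_subset_Icc_self ht₀))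
    hF'meas h_bound hbound_int
    (Filter.Eventually.of_forall fun x => fun s _ => h_diff x s)
  have hDeriv := hmain.2
  -- rewrite the derivative integrand using the wave equation and show it integrates to zero
  have hw : ∀ x, ((c x) ^ 2)⁻¹ * D2 y (x, t₀) (0, 1) (0, 1)
      = ∑ i : Fin n, D2 y (x, t₀) (EuclideanSpace.single i 1, 0) (EuclideanSpace.single i 1, 0) := by
    intro x
    have h := hwave x t₀ ht₀
    rwa [deriv2_time hy, lap_eq hy] at h
  set g : Fin n → EuclideanSpace ℝ (Fin n) → ℝ := fun i x =>
    2 * uu y t₀ x * D2 y (x, t₀) (EuclideanSpace.single i 1, 0) (EuclideanSpace.single i 1, 0)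
      + 2 * vv y i t₀ x * D2 y (x, t₀) (EuclideanSpace.single i 1, 0) (0, 1) with hg_def
  have hFg : (fun x => F' t₀ x) = fun x => ∑ i : Fin n, g i x := by
    funext x
    simp only [hF'_def, hg_def]
    have h1 : ((c x) ^ 2)⁻¹ * (2 * uu y t₀ x * D2 y (x, t₀) (0, 1) (0, 1))
        = ∑ i : Fin n, 2 * uu y t₀ x
            * D2 y (x, t₀) (EuclideanSpace.single i 1, 0) (EuclideanSpace.single i 1, 0) := by
      calc ((c x) ^ 2)⁻¹ * (2 * uu y t₀ x * D2 y (x, t₀) (0, 1) (0, 1))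
          = 2 * uu y t₀ x * (((c x) ^ 2)⁻¹ * D2 y (x, t₀) (0, 1) (0, 1)) := by ring
        _ = 2 * uu y t₀ x * ∑ i : Fin n,
              D2 y (x, t₀) (EuclideanSpace.single i 1, 0) (EuclideanSpace.single i 1, 0) := by
            rw [hw x]
        _ = ∑ i : Fin n, 2 * uu y t₀ x
              * D2 y (x, t₀) (EuclideanSpace.single i 1, 0) (EuclideanSpace.single i 1, 0) :=
            Finset.mul_sum _ _ _
    rw [h1, ← Finset.sum_add_distrib]
    refine Finset.sum_congr rfl fun i _ => ?_
    rw [D2symm hy (x, t₀) (0, 1) (EuclideanSpace.single i 1, 0)]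
  have mkint : ∀ a b₁ b₂ : EuclideanSpace ℝ (Fin n) × ℝ,
      Integrable (fun x => D y (x, t₀) a * D2 y (x, t₀) b₁ b₂) := by
    intro a b₁ b₂
    refine Continuous.integrable_of_hasCompactSupport
      ((cont_Da hy t₀ a).mul (cont_D2ab hy t₀ b₁ b₂)) (HasCompactSupport.intro hKco ?_)
    intro x hx
    have hz := D_zero_Icc hy hKco.isClosed hT hyK (x, t₀) hx (Set.Ioo_subset_Icc_self ht₀)
    simp [hz.1]
  have mkint2 : ∀ a b : EuclideanSpace ℝ (Fin n) × ℝ,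
      Integrable (fun x => D y (x, t₀) a * D y (x, t₀) b) := by
    intro a b
    refine Continuous.integrable_of_hasCompactSupport
      ((cont_Da hy t₀ a).mul (cont_Da hy t₀ b)) (HasCompactSupport.intro hKco ?_)
    intro x hx
    have hz := D_zero_Icc hy hKco.isClosed hT hyK (x, t₀) hx (Set.Ioo_subset_Icc_self ht₀)
    simp [hz.1]
  have hgint : ∀ i : Fin n, Integrable (g i) := by
    intro i
    have h1 := (mkint (0, 1) (EuclideanSpace.single i 1, 0)
      (EuclideanSpace.single i 1, 0)).const_mul 2
    have h2 := (mkint (EuclideanSpace.single i 1, 0) (EuclideanSpace.single i 1, 0)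
      (0, 1)).const_mul 2
    refine (h1.add h2).congr (Filter.Eventually.of_forall fun x => ?_)
    simp only [Pi.add_apply, hg_def, uu, vv]
    ring
  have hIzero : ∫ x, F' t₀ x = 0 := by
    rw [hFg, integral_finset_sum _ fun i _ => hgint i]
    refine Finset.sum_eq_zero fun i _ => ?_
    have int1 : Integrable (fun x => uu y t₀ x
        * D2 y (x, t₀) (EuclideanSpace.single i 1, 0) (EuclideanSpace.single i 1, 0)) :=
      mkint (0, 1) _ _
    have int2 : Integrable (fun x => vv y i t₀ x
        * D2 y (x, t₀) (EuclideanSpace.single i 1, 0) (0, 1)) :=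
      mkint (EuclideanSpace.single i 1, 0) _ _
    have hsplit : ∫ x, g i x
        = 2 * (∫ x, uu y t₀ x
            * D2 y (x, t₀) (EuclideanSpace.single i 1, 0) (EuclideanSpace.single i 1, 0))
          + 2 * (∫ x, vv y i t₀ x
            * D2 y (x, t₀) (EuclideanSpace.single i 1, 0) (0, 1)) := by
      rw [hg_def]
      have e : (fun x => 2 * uu y t₀ x
            * D2 y (x, t₀) (EuclideanSpace.single i 1, 0) (EuclideanSpace.single i 1, 0)
          + 2 * vv y i t₀ x * D2 y (x, t₀) (EuclideanSpace.single i 1, 0) (0, 1))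
          = fun x => 2 * (uu y t₀ x
            * D2 y (x, t₀) (EuclideanSpace.single i 1, 0) (EuclideanSpace.single i 1, 0))
          + 2 * (vv y i t₀ x * D2 y (x, t₀) (EuclideanSpace.single i 1, 0) (0, 1)) :=
        funext fun x => by ring
      rw [e, integral_add (int1.const_mul 2) (int2.const_mul 2),
        integral_const_mul, integral_const_mul]
    have hib1 : Integrable (fun x =>
        fderiv ℝ (uu y t₀) x (EuclideanSpace.single i 1) * vv y i t₀ x) := by
      have e : (fun x => fderiv ℝ (uu y t₀) x (EuclideanSpace.single i 1) * vv y i t₀ x)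
          = fun x => D2 y (x, t₀) (EuclideanSpace.single i 1, 0) (0, 1)
              * D y (x, t₀) (EuclideanSpace.single i 1, 0) := by
        funext x; rw [fderiv_uu hy]; rfl
      rw [e]
      exact (mkint (EuclideanSpace.single i 1, 0) (EuclideanSpace.single i 1, 0) (0, 1)).congr
        (Filter.Eventually.of_forall fun x => mul_comm _ _)
    have hib2 : Integrable (fun x =>
        uu y t₀ x * fderiv ℝ (vv y i t₀) x (EuclideanSpace.single i 1)) := by
      have e : (fun x => uu y t₀ x * fderiv ℝ (vv y i t₀) x (EuclideanSpace.single i 1))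
          = fun x => D y (x, t₀) (0, 1)
              * D2 y (x, t₀) (EuclideanSpace.single i 1, 0) (EuclideanSpace.single i 1, 0) := by
        funext x; rw [fderiv_vv hy]; rfl
      rw [e]
      exact mkint (0, 1) (EuclideanSpace.single i 1, 0) (EuclideanSpace.single i 1, 0)
    have hib3 : Integrable (fun x => uu y t₀ x * vv y i t₀ x) :=
      mkint2 (0, 1) (EuclideanSpace.single i 1, 0)
    have ibp := integral_mul_fderiv_eq_neg_fderiv_mul_of_integrable
      (μ := (volume : Measure (EuclideanSpace ℝ (Fin n))))
      (f := uu y t₀) (g := vv y i t₀) (v := EuclideanSpace.single i 1)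
      hib1 hib2 hib3
      (fun x _ => diff_uu hy t₀ x) (fun x _ => diff_vv hy i t₀ x)
    have eA : (fun x => uu y t₀ x
        * D2 y (x, t₀) (EuclideanSpace.single i 1, 0) (EuclideanSpace.single i 1, 0))
        = fun x => uu y t₀ x * fderiv ℝ (vv y i t₀) x (EuclideanSpace.single i 1) :=
      funext fun x => by rw [fderiv_vv hy]
    have eB : (fun x => fderiv ℝ (uu y t₀) x (EuclideanSpace.single i 1) * vv y i t₀ x)
        = fun x => vv y i t₀ x * D2 y (x, t₀) (EuclideanSpace.single i 1, 0) (0, 1) :=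
      funext fun x => by rw [fderiv_uu hy]; ring
    rw [hsplit, eA, ibp, eB]
    ring
  rw [hIzero] at hDeriv
  exact hDeriv

end Ederiv

section Econst

variable {c : EuclideanSpace ℝ (Fin n) → ℝ} {c_min c_max T : ℝ}
  {K : Set (EuclideanSpace ℝ (Fin n))}

include hy

lemma cont_sDa (x : EuclideanSpace ℝ (Fin n)) (a : EuclideanSpace ℝ (Fin n) × ℝ) :
    Continuous (fun s : ℝ => D y (x, s) a) :=
  Continuous.clm_apply ((hDcont hy).comp (Continuous.prodMk_right x)) continuous_const

lemma continuousOn_En (hKco : IsCompact K) (hT : 0 < T)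
    (hyK : ∀ x ∉ K, ∀ t ∈ Set.Icc (0:ℝ) T, y x t = 0)
    (hc_meas : Measurable c) (hc_min_pos : 0 < c_min) (hcge : ∀ x, c_min ≤ c x) :
    ContinuousOn (En c y) (Set.Icc (0:ℝ) T) := by
  intro t₀ ht₀
  have hcinv : ∀ x, ((c x) ^ 2)⁻¹ ≤ (c_min ^ 2)⁻¹ := by
    intro x
    have hcx : 0 < c x := lt_of_lt_of_le hc_min_pos (hcge x)
    exact inv_anti₀ (by positivity) (by nlinarith [hcge x])
  set Φ : EuclideanSpace ℝ (Fin n) × ℝ → ℝ := fun p =>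
    (c_min ^ 2)⁻¹ * (D y p (0, 1)) ^ 2
      + ∑ i : Fin n, (D y p (EuclideanSpace.single i 1, 0)) ^ 2 with hΦ_def
  have hΦcont : Continuous Φ :=
    (continuous_const.mul ((cont_DaP hy _).pow 2)).add
      (continuous_finset_sum _ fun i _ => (cont_DaP hy _).pow 2)
  obtain ⟨M, hM⟩ := (hKco.prod (isCompact_Icc (a := (0:ℝ)) (b := T))).exists_bound_of_continuousOn
    hΦcont.continuousOn
  refine continuousWithinAt_of_dominated
    (bound := K.indicator fun _ => M)
    (Filter.Eventually.of_forall fun s => meas_enInt hy hc_meas s) ?_ ?_ ?_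
  · refine eventually_nhdsWithin_of_forall fun s hs => Filter.Eventually.of_forall fun x => ?_
    by_cases hx : x ∈ K
    · rw [Set.indicator_of_mem hx]
      have hnn : 0 ≤ enInt c y s x :=
        add_nonneg (mul_nonneg (inv_nonneg.mpr (sq_nonneg _)) (sq_nonneg _))
          (Finset.sum_nonneg fun i _ => sq_nonneg _)
      have hle : enInt c y s x ≤ Φ (x, s) := by
        rw [hΦ_def]
        exact add_le_add (mul_le_mul_of_nonneg_right (hcinv x) (sq_nonneg _)) le_rfl
      rw [Real.norm_eq_abs, abs_of_nonneg hnn]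
      refine hle.trans ((le_abs_self _).trans ?_)
      have := hM (x, s) ⟨hx, hs⟩
      rwa [Real.norm_eq_abs] at this
    · rw [Set.indicator_of_notMem hx]
      have hz := D_zero_Icc hy hKco.isClosed hT hyK (x, s) hx hs
      have : enInt c y s x = 0 := by simp [enInt, uu, vv, hz.1]
      simp [this]
  · rw [integrable_indicator_iff hKco.isClosed.measurableSet]
    exact integrableOn_const hKco.measure_lt_top.ne
  · refine Filter.Eventually.of_forall fun x => Continuous.continuousWithinAt ?_
    show Continuous fun s => ((c x) ^ 2)⁻¹ * (uu y s x) ^ 2 + ∑ i : Fin n, (vv y i s x) ^ 2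
    exact (continuous_const.mul ((cont_sDa hy x _).pow 2)).add
      (continuous_finset_sum _ fun i _ => (cont_sDa hy x _).pow 2)

lemma En_const (hKco : IsCompact K) (hT : 0 < T)
    (hyK : ∀ x ∉ K, ∀ t ∈ Set.Icc (0:ℝ) T, y x t = 0)
    (hc_meas : Measurable c) (hc_min_pos : 0 < c_min) (hcge : ∀ x, c_min ≤ c x)
    (hwave : ∀ x, ∀ t ∈ Set.Ioo (0:ℝ) T,
      ((c x) ^ 2)⁻¹ * deriv (deriv (y x)) t = spatialLaplacian (fun x' => y x' t) x) :
    ∀ t ∈ Set.Icc (0:ℝ) T, En c y t = En c y 0 := by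
  have hcont := continuousOn_En hy hKco hT hyK hc_meas hc_min_pos hcge
  have hderiv : ∀ s ∈ interior (Set.Icc (0:ℝ) T), HasDerivAt (En c y) 0 s := by
    rw [interior_Icc]
    exact fun s hs => hasDerivAt_En_zero hy hKco hT hyK hc_meas hc_min_pos hcge hwave hs
  have hdiff : DifferentiableOn ℝ (En c y) (interior (Set.Icc (0:ℝ) T)) :=
    fun s hs => ((hderiv s hs).differentiableAt).differentiableWithinAt
  have hmono : MonotoneOn (En c y) (Set.Icc (0:ℝ) T) := by
    refine monotoneOn_of_deriv_nonneg (convex_Icc _ _) hcont hdiff fun s hs => ?_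
    rw [(hderiv s hs).deriv]
  have hanti : AntitoneOn (En c y) (Set.Icc (0:ℝ) T) := by
    refine antitoneOn_of_deriv_nonpos (convex_Icc _ _) hcont hdiff fun s hs => ?_
    rw [(hderiv s hs).deriv]
  intro t ht
  have h0 : (0:ℝ) ∈ Set.Icc (0:ℝ) T := ⟨le_rfl, hT.le⟩
  exact le_antisymm (hanti h0 ht ht.1) (hmono h0 ht ht.1)

omit hy in
lemma En_zero_val {f : EuclideanSpace ℝ (Fin n) → ℝ} (hy : ContDiff ℝ 2
      (fun p : EuclideanSpace ℝ (Fin n) × ℝ => y p.1 p.2))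
    (hf : ContDiff ℝ 2 f)
    (hinit : ∀ x, y x 0 = f x) (hinit' : ∀ x, deriv (y x) 0 = 0) :
    En c y 0 = ∫ x, ‖gradient f x‖ ^ 2 := by
  unfold En
  refine integral_congr_ae (Filter.Eventually.of_forall fun x => ?_)
  have hu0 : uu y 0 x = 0 := by
    have := (hasDerivAt_time hy x 0).deriv
    rw [hinit' x] at this
    exact this.symm
  have hvi : ∀ i : Fin n, vv y i 0 x = fderiv ℝ f x (EuclideanSpace.single i 1) := by
    intro i
    have hfs := fderiv_space hy x 0 (EuclideanSpace.single i 1)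
    have hfe : (fun x' => y x' 0) = f := funext hinit
    rw [hfe] at hfs
    exact hfs.symm
  have hgrad := norm_grad_sq ((hf.differentiable (by norm_num)) x)
  show ((c x) ^ 2)⁻¹ * (uu y 0 x) ^ 2 + ∑ i : Fin n, (vv y i 0 x) ^ 2 = ‖gradient f x‖ ^ 2
  rw [hu0, hgrad]
  simp only [hvi]
  simp

lemma int_uu_sq_le (hKco : IsCompact K) (hT : 0 < T)
    (hyK : ∀ x ∉ K, ∀ t ∈ Set.Icc (0:ℝ) T, y x t = 0)
    (hc_meas : Measurable c) (hc_min_pos : 0 < c_min)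
    (hc : ∀ x, c_min ≤ c x ∧ c x ≤ c_max)
    {s : ℝ} (hs : s ∈ Set.Icc (0:ℝ) T) :
    ∫ x, (uu y s x) ^ 2 ≤ c_max ^ 2 * En c y s := by
  have hcge : ∀ x, c_min ≤ c x := fun x => (hc x).1
  have hu2 : Integrable (fun x => (uu y s x) ^ 2) :=
    integrable_Da hy hKco hT hyK hs (0, 1) (fun r => r ^ 2) (continuous_pow 2) (by norm_num)
  have hEint := integrable_enInt hy hKco hT hyK hc_meas hc_min_pos hcge hs
  have hpt : ∀ x, (uu y s x) ^ 2 ≤ c_max ^ 2 * enInt c y s x := by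
    intro x
    have hcx : 0 < c x := lt_of_lt_of_le hc_min_pos (hcge x)
    have hc2 : (c x) ^ 2 ≤ c_max ^ 2 := by nlinarith [(hc x).2]
    have hAnn : (0:ℝ) ≤ ((c x) ^ 2)⁻¹ := by positivity
    have hA : (c x) ^ 2 * ((c x) ^ 2)⁻¹ = 1 := mul_inv_cancel₀ (by positivity)
    have hSnn : (0:ℝ) ≤ ∑ i : Fin n, (vv y i s x) ^ 2 :=
      Finset.sum_nonneg fun i _ => sq_nonneg _
    have hcmax : (0:ℝ) ≤ c_max ^ 2 := le_trans (by positivity) hc2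
    show (uu y s x) ^ 2 ≤ c_max ^ 2 * (((c x) ^ 2)⁻¹ * (uu y s x) ^ 2
      + ∑ i : Fin n, (vv y i s x) ^ 2)
    nlinarith [sq_nonneg (uu y s x), mul_nonneg hAnn (sq_nonneg (uu y s x))]
  calc ∫ x, (uu y s x) ^ 2 ≤ ∫ x, c_max ^ 2 * enInt c y s x :=
        integral_mono hu2 (hEint.const_mul _) hpt
    _ = c_max ^ 2 * En c y s := integral_const_mul _ _

end Econst

end Wave2Aux


lemma sq_integral_le_mul_integral_sq {α : Type*} [MeasurableSpace α] {μ : Measure α}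
    [IsFiniteMeasure μ] {g : α → ℝ} (hg : Integrable g μ)
    (hg2 : Integrable (fun a => (g a) ^ 2) μ) :
    (∫ a, g a ∂μ) ^ 2 ≤ (μ Set.univ).toReal * ∫ a, (g a) ^ 2 ∂μ := by
  set r := (μ Set.univ).toReal with hr
  have hr0 : 0 ≤ r := ENNReal.toReal_nonneg
  set A := ∫ a, g a ∂μ with hA
  set B := ∫ a, (g a) ^ 2 ∂μ with hB
  rcases eq_or_lt_of_le hr0 with h | h
  · -- measure is zero
    have hμ : μ = 0 := by
      have : μ Set.univ = 0 := by
        have := (ENNReal.toReal_eq_zero_iff _).mp h.symm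
        rcases this with h0 | htop
        · exact h0
        · exact absurd htop (measure_ne_top μ _)
      exact Measure.measure_univ_eq_zero.mp this
    have : A = 0 := by rw [hA, hμ, integral_zero_measure]
    rw [this, ← h]
    simp
  · have key : 0 ≤ ∫ a, (r * g a - A) ^ 2 ∂μ := integral_nonneg fun a => sq_nonneg _
    have expand : ∫ a, (r * g a - A) ^ 2 ∂μ = r ^ 2 * B - 2 * r * A * A + A ^ 2 * r := by
      have h1 : ∀ a, (r * g a - A) ^ 2
          = r ^ 2 * (g a) ^ 2 - (2 * r * A) * g a + A ^ 2 := by intro a; ring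
      simp_rw [h1]
      rw [integral_add, integral_sub, integral_const_mul, integral_const_mul,
        integral_const, smul_eq_mul, measureReal_def]
      · ring
      · exact hg2.const_mul _
      · exact hg.const_mul _
      · exact (hg2.const_mul _).sub (hg.const_mul _)
      · exact integrable_const _
    rw [expand] at key
    have : 0 ≤ r * (r * B - A ^ 2) := by nlinarith
    nlinarith


open Wave2Aux

theorem stmt_2
    {n : ℕ} (hn : 1 ≤ n)
    (c : EuclideanSpace ℝ (Fin n) → ℝ) (hc_meas : Measurable c)
    (c_min c_max : ℝ) (hc_min_pos : 0 < c_min)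
    (hc : ∀ x, c_min ≤ c x ∧ c x ≤ c_max)
    (T : ℝ) (hT : 0 < T)
    (f : EuclideanSpace ℝ (Fin n) → ℝ)
    (hf : ContDiff ℝ 2 f) (hf_supp : HasCompactSupport f)
    (y : EuclideanSpace ℝ (Fin n) → ℝ → ℝ)
    (hy : ContDiff ℝ 2 (fun p : EuclideanSpace ℝ (Fin n) × ℝ => y p.1 p.2))
    (K : Set (EuclideanSpace ℝ (Fin n))) (hK : IsCompact K)
    (hyK : ∀ x ∉ K, ∀ t ∈ Set.Icc (0:ℝ) T, y x t = 0)
    (hwave : ∀ x, ∀ t ∈ Set.Ioo (0:ℝ) T,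
      ((c x) ^ 2)⁻¹ * deriv (deriv (y x)) t = spatialLaplacian (fun x' => y x' t) x)
    (hinit : ∀ x, y x 0 = f x)
    (hinit' : ∀ x, deriv (y x) 0 = 0)
     :
    ∀ t ∈ Set.Icc (0:ℝ) T,
      (∫ x, (y x t - f x) ^ 2) ≤ c_max ^ 2 * t ^ 2 * ∫ x, ‖gradient f x‖ ^ 2 := by
  intro t ht
  have ht0 : 0 ≤ t := ht.1
  have hcge : ∀ x, c_min ≤ c x := fun x => (hc x).1
  set E0 : ℝ := ∫ x, ‖gradient f x‖ ^ 2 with hE0_def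
  have hkey : ∀ s ∈ Set.Icc (0:ℝ) T, (∫ x, (uu y s x) ^ 2) ≤ c_max ^ 2 * E0 := by
    intro s hs
    have h1 := int_uu_sq_le hy hK hT hyK hc_meas hc_min_pos hc hs
    rwa [En_const hy hK hT hyK hc_meas hc_min_pos hcge hwave s hs,
      En_zero_val hy hf hinit hinit'] at h1
  set ν := (volume : Measure ℝ).restrict (Set.Ioc (0:ℝ) t) with hν_def
  haveI : IsFiniteMeasure ν := by
    constructor
    rw [hν_def, Measure.restrict_apply_univ]
    exact measure_Ioc_lt_top
  have hνuniv : (ν Set.univ).toReal = t := by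
    rw [hν_def, Measure.restrict_apply_univ, Real.volume_Ioc, sub_zero,
      ENNReal.toReal_ofReal ht0]
  have hIccsub : Set.Ioc (0:ℝ) t ⊆ Set.Icc (0:ℝ) T :=
    fun s hs => ⟨hs.1.le, hs.2.trans ht.2⟩
  -- fundamental theorem of calculus in time
  have hftc : ∀ x, y x t - f x = ∫ s, uu y s x ∂ν := by
    intro x
    have hd : ∀ s ∈ Set.uIcc (0:ℝ) t, HasDerivAt (y x) (uu y s x) s :=
      fun s _ => hasDerivAt_time hy x s
    have hint : IntervalIntegrable (fun s => uu y s x) volume 0 t :=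
      (cont_sDa hy x _).intervalIntegrable 0 t
    have hh := intervalIntegral.integral_eq_sub_of_hasDerivAt hd hint
    rw [intervalIntegral.integral_of_le ht0] at hh
    rw [← hν_def] at hh
    rw [hh, hinit x]
  -- pointwise Cauchy-Schwarz in time
  have hCS : ∀ x, (y x t - f x) ^ 2 ≤ t * ∫ s, (uu y s x) ^ 2 ∂ν := by
    intro x
    rw [hftc x]
    have hg : Integrable (fun s => uu y s x) ν :=
      ((cont_sDa hy x ((0 : EuclideanSpace ℝ (Fin n)), (1:ℝ))).intervalIntegrable 0 t).1
    have hg2 : Integrable (fun s => (uu y s x) ^ 2) ν :=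
      (((cont_sDa hy x _).pow 2).intervalIntegrable 0 t).1
    have := sq_integral_le_mul_integral_sq hg hg2
    rwa [hνuniv] at this
  -- product integrability and Fubini
  set W : EuclideanSpace ℝ (Fin n) × ℝ → ℝ := fun p => (D y p (0, 1)) ^ 2 with hW_def
  have hWcont : Continuous W := (cont_DaP hy _).pow 2
  obtain ⟨M, hM⟩ := (hK.prod (isCompact_Icc (a := (0:ℝ)) (b := T))).exists_bound_of_continuousOn
    hWcont.continuousOn
  have haeIoc : ∀ᵐ p : EuclideanSpace ℝ (Fin n) × ℝ ∂(volume.prod ν),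
      p.2 ∈ Set.Ioc (0:ℝ) t := by
    refine ae_iff.mpr ?_
    have hset : {p : EuclideanSpace ℝ (Fin n) × ℝ | ¬ p.2 ∈ Set.Ioc (0:ℝ) t}
        = Set.univ ×ˢ (Set.Ioc (0:ℝ) t)ᶜ := by
      ext p; simp
    rw [hset, Measure.prod_prod]
    have : ν (Set.Ioc (0:ℝ) t)ᶜ = 0 := by
      rw [hν_def, Measure.restrict_apply measurableSet_Ioc.compl]
      simp
    rw [this, mul_zero]
  have hWprod : Integrable W (volume.prod ν) := by
    refine Integrable.mono' (g := (K ×ˢ (Set.Icc (0:ℝ) T)).indicator fun _ => M)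
      ?_ hWcont.aestronglyMeasurable ?_
    · rw [integrable_indicator_iff (hK.measurableSet.prod measurableSet_Icc)]
      refine integrableOn_const (ne_of_lt ?_)
      rw [Measure.prod_prod]
      exact ENNReal.mul_lt_top hK.measure_lt_top (measure_lt_top ν _)
    · refine haeIoc.mono fun p hp => ?_
      by_cases hpK : p.1 ∈ K
      · rw [Set.indicator_of_mem (Set.mk_mem_prod hpK (hIccsub hp))]
        exact hM p ⟨hpK, hIccsub hp⟩
      · rw [Set.indicator_of_notMem (fun hmem => hpK hmem.1)]
        have hz := D_zero_Icc hy hK.isClosed hT hyK p hpK (hIccsub hp)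
        have : W p = 0 := by rw [hW_def]; simp [hz.1]
        rw [this]; simp
  have hinner_int : Integrable (fun x => ∫ s, W (x, s) ∂ν) volume :=
    hWprod.integral_prod_left
  have houter_int : Integrable (fun s => ∫ x, W (x, s)) ν :=
    hWprod.integral_prod_right
  have hswap : (∫ x, (∫ s, W (x, s) ∂ν)) = ∫ s, (∫ x, W (x, s)) ∂ν :=
    integral_integral_swap hWprod
  -- integrability of the left-hand side
  have hLHSint : Integrable (fun x => (y x t - f x) ^ 2) := by
    refine Continuous.integrable_of_hasCompactSupport
      (((hy.continuous.comp (continuous_id.prodMk continuous_const)).sub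
        hf.continuous).pow 2) (HasCompactSupport.intro hK ?_)
    intro x hx
    have h1 : y x t = 0 := hyK x hx t ht
    have h2 : f x = 0 := by rw [← hinit x]; exact hyK x hx 0 ⟨le_rfl, hT.le⟩
    simp [h1, h2]
  have step1 : (∫ x, (y x t - f x) ^ 2) ≤ ∫ x, t * (∫ s, W (x, s) ∂ν) :=
    integral_mono hLHSint (hinner_int.const_mul t) (fun x => hCS x)
  have step3 : (∫ s, (∫ x, W (x, s)) ∂ν) ≤ t * (c_max ^ 2 * E0) := by
    have hconst : (∫ s, (c_max ^ 2 * E0) ∂ν) = t * (c_max ^ 2 * E0) := by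
      rw [integral_const, smul_eq_mul, measureReal_def, hνuniv]
    rw [← hconst]
    refine integral_mono_of_nonneg ?_ (integrable_const _) ?_
    · exact Filter.Eventually.of_forall fun s => integral_nonneg fun x => sq_nonneg _
    · have hae : ∀ᵐ s ∂ν, s ∈ Set.Ioc (0:ℝ) t := by
        rw [hν_def]
        exact ae_restrict_mem measurableSet_Ioc
      exact hae.mono fun s hs => hkey s (hIccsub hs)
  calc (∫ x, (y x t - f x) ^ 2) ≤ ∫ x, t * (∫ s, W (x, s) ∂ν) := step1
    _ = t * ∫ x, (∫ s, W (x, s) ∂ν) := integral_const_mul _ _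
    _ = t * ∫ s, (∫ x, W (x, s)) ∂ν := by rw [hswap]
    _ ≤ t * (t * (c_max ^ 2 * E0)) := mul_le_mul_of_nonneg_left step3 ht0
    _ = c_max ^ 2 * t ^ 2 * E0 := by ring
end

section
/- For every t ∈ [0,T] one has ∫_{ℝⁿ} y(x,t)² + |∇ₓ y(x,t)|² dx ≤ C(T)² · ∫_{ℝⁿ} |∇f(x)|² dx, where C(T)² = 1 + (2/C₀²) · max{1, c_max² T²}. -/
open MeasureTheory

private lemma sq_integral_le {α : Type*} [MeasurableSpace α] (μ : Measure α)
    [IsFiniteMeasure μ] {h : α → ℝ} (hi : Integrable h μ) (hi2 : Integrable (fun x => h x ^ 2) μ) :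
    (∫ x, h x ∂μ) ^ 2 ≤ (μ Set.univ).toReal * ∫ x, h x ^ 2 ∂μ := by
  rcases eq_or_ne μ 0 with rfl | hμ
  · simp
  have hm : 0 < (μ Set.univ).toReal := by
    refine ENNReal.toReal_pos ?_ (measure_ne_top μ _)
    simpa [Measure.measure_univ_eq_zero] using hμ
  set m := (μ Set.univ).toReal with hmdef
  set a := ∫ x, h x ∂μ with hadef
  set X := ∫ x, h x ^ 2 ∂μ with hXdef
  have h0 : 0 ≤ ∫ x, (m * h x - a) ^ 2 ∂μ := integral_nonneg fun x => sq_nonneg _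
  have hexp : (fun x => (m * h x - a) ^ 2) = fun x => m ^ 2 * h x ^ 2 - (2 * a * m) * h x + a ^ 2 := by
    funext x; ring
  rw [hexp] at h0
  rw [integral_add (f := fun x => m ^ 2 * h x ^ 2 - 2 * a * m * h x) (g := fun _ => a ^ 2)
      ((hi2.const_mul _).sub (hi.const_mul _)) (integrable_const _),
    integral_sub (f := fun x => m ^ 2 * h x ^ 2) (g := fun x => 2 * a * m * h x)
      (hi2.const_mul _) (hi.const_mul _), integral_const_mul, integral_const_mul,
    integral_const] at h0
  simp only [smul_eq_mul, measureReal_def, ← hmdef, ← hadef, ← hXdef] at h0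
  nlinarith [h0, hm, sq_nonneg a]

private lemma grad_norm_sq {n : ℕ} {u : EuclideanSpace ℝ (Fin n) → ℝ}
    {x : EuclideanSpace ℝ (Fin n)} (hu : DifferentiableAt ℝ u x) :
    ‖gradient u x‖ ^ 2 = ∑ i, (fderiv ℝ u x (EuclideanSpace.single i 1)) ^ 2 := by
  have h := hu.hasGradientAt
  have hf : fderiv ℝ u x = (InnerProductSpace.toDual ℝ _) (gradient u x) :=
    (hasGradientAt_iff_hasFDerivAt.1 h).fderiv
  have hcoord : ∀ i, fderiv ℝ u x (EuclideanSpace.single i 1) = gradient u x i := by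
    intro i
    rw [hf, InnerProductSpace.toDual_apply_apply, EuclideanSpace.inner_single_right]
    simp
  have hnorm : ‖gradient u x‖ ^ 2 = ∑ i, (gradient u x i) ^ 2 := by
    rw [EuclideanSpace.norm_eq, Real.sq_sqrt (Finset.sum_nonneg fun i _ => sq_nonneg _)]
    simp [Real.norm_eq_abs, sq_abs]
  rw [hnorm]
  exact (Finset.sum_congr rfl fun i _ => by rw [hcoord i]).symm

set_option maxHeartbeats 1600000 in
theorem stmt_3
    {n : ℕ} (hn : 1 ≤ n)
    (c : EuclideanSpace ℝ (Fin n) → ℝ) (hc_meas : Measurable c)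
    (c_min c_max : ℝ) (hc_min_pos : 0 < c_min)
    (hc : ∀ x, c_min ≤ c x ∧ c x ≤ c_max)
    (T : ℝ) (hT : 0 < T)
    (f : EuclideanSpace ℝ (Fin n) → ℝ)
    (hf : ContDiff ℝ 2 f) (hf_supp : HasCompactSupport f)
    (y : EuclideanSpace ℝ (Fin n) → ℝ → ℝ)
    (hy : ContDiff ℝ 2 (fun p : EuclideanSpace ℝ (Fin n) × ℝ => y p.1 p.2))
    (K : Set (EuclideanSpace ℝ (Fin n))) (hK : IsCompact K)
    (hyK : ∀ x ∉ K, ∀ t ∈ Set.Icc (0:ℝ) T, y x t = 0)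
    (hwave : ∀ x, ∀ t ∈ Set.Ioo (0:ℝ) T,
      ((c x) ^ 2)⁻¹ * deriv (deriv (y x)) t = spatialLaplacian (fun x' => y x' t) x)
    (hinit : ∀ x, y x 0 = f x)
    (hinit' : ∀ x, deriv (y x) 0 = 0)
    (C₀ : ℝ) (hC₀ : 0 < C₀)
    (hPoincare : C₀ ^ 2 * (∫ x, ((f x) ^ 2 + ‖gradient f x‖ ^ 2)) ≤ ∫ x, ‖gradient f x‖ ^ 2) :
    ∀ t ∈ Set.Icc (0:ℝ) T,
      (∫ x, ((y x t) ^ 2 + ‖gradient (fun x' => y x' t) x‖ ^ 2))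
        ≤ (1 + 2 / C₀ ^ 2 * max 1 (c_max ^ 2 * T ^ 2)) * ∫ x, ‖gradient f x‖ ^ 2 := by
  classical
  -- ## Setup
  let Y : (EuclideanSpace ℝ (Fin n)) × ℝ → ℝ := fun p => y p.1 p.2
  let DY : (EuclideanSpace ℝ (Fin n)) × ℝ → (EuclideanSpace ℝ (Fin n)) × ℝ →L[ℝ] ℝ := fderiv ℝ Y
  let D2Y : (EuclideanSpace ℝ (Fin n)) × ℝ → (EuclideanSpace ℝ (Fin n)) × ℝ →L[ℝ] (EuclideanSpace ℝ (Fin n)) × ℝ →L[ℝ] ℝ := fderiv ℝ DY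
  let e : Fin n → (EuclideanSpace ℝ (Fin n)) := fun i => EuclideanSpace.single i 1
  let g : (EuclideanSpace ℝ (Fin n)) → ℝ := fun x => ((c x) ^ 2)⁻¹
  let yt : (EuclideanSpace ℝ (Fin n)) → ℝ → ℝ := fun x t => DY (x, t) (0, 1)
  let yi : Fin n → (EuclideanSpace ℝ (Fin n)) → ℝ → ℝ := fun i x t => DY (x, t) (e i, 0)
  let ytt : (EuclideanSpace ℝ (Fin n)) → ℝ → ℝ := fun x t => D2Y (x, t) (0, 1) (0, 1)
  let yti : Fin n → (EuclideanSpace ℝ (Fin n)) → ℝ → ℝ := fun i x t => D2Y (x, t) (0, 1) (e i, 0)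
  have hY : ContDiff ℝ 2 Y := hy
  have hDY1 : ContDiff ℝ 1 DY := hY.fderiv_right (m := 1) (by norm_num)
  have hDYc : Continuous DY := hDY1.continuous
  have hD2Yc : Continuous D2Y := (hDY1.fderiv_right (m := 0) (by norm_num)).continuous
  have hYd : ∀ p, HasFDerivAt Y (DY p) p := fun p =>
    (hY.differentiable (by norm_num)).differentiableAt.hasFDerivAt
  have hDYd : ∀ p, HasFDerivAt DY (D2Y p) p := fun p =>
    (hDY1.differentiable (by norm_num)).differentiableAt.hasFDerivAt
  have hsymm : ∀ p v w, D2Y p v w = D2Y p w v := fun p v w =>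
    second_derivative_symmetric hYd (hDYd p) v w
  -- time-line derivatives
  have hcurve : ∀ (x : (EuclideanSpace ℝ (Fin n))) (t : ℝ), HasDerivAt (fun s : ℝ => ((x, s) : (EuclideanSpace ℝ (Fin n)) × ℝ)) (0, 1) t :=
    fun x t => (hasDerivAt_const t x).prodMk (hasDerivAt_id t)
  have hline : ∀ (x : (EuclideanSpace ℝ (Fin n))) (t : ℝ), HasDerivAt (fun s => y x s) (yt x t) t := by
    intro x t
    exact (hYd (x, t)).comp_hasDerivAt t (hcurve x t)
  have hline2 : ∀ (x : (EuclideanSpace ℝ (Fin n))) (t : ℝ) (v : (EuclideanSpace ℝ (Fin n)) × ℝ),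
      HasDerivAt (fun s => DY (x, s) v) (D2Y (x, t) (0, 1) v) t := by
    intro x t v
    have h3 : HasDerivAt (fun s => DY (x, s)) (D2Y (x, t) (0, 1)) t :=
      (hDYd (x, t)).comp_hasDerivAt t (hcurve x t)
    simpa using h3.clm_apply (hasDerivAt_const t v)
  have hderiv_eq : ∀ x t, deriv (y x) t = yt x t := fun x t => (hline x t).deriv
  have hderiv2_eq : ∀ x t, deriv (deriv (y x)) t = ytt x t := by
    intro x t
    have : deriv (y x) = fun s => yt x s := funext fun s => hderiv_eq x s
    rw [this]
    exact (hline2 x t (0, 1)).deriv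
  -- spatial derivatives
  let J : (EuclideanSpace ℝ (Fin n)) →L[ℝ] (EuclideanSpace ℝ (Fin n)) × ℝ := (ContinuousLinearMap.id ℝ (EuclideanSpace ℝ (Fin n))).prod 0
  have hJ : ∀ (t : ℝ) (x : (EuclideanSpace ℝ (Fin n))), HasFDerivAt (fun z : (EuclideanSpace ℝ (Fin n)) => ((z, t) : (EuclideanSpace ℝ (Fin n)) × ℝ)) J x :=
    fun t x => (hasFDerivAt_id x).prodMk (hasFDerivAt_const t x)
  have hJv : ∀ v : (EuclideanSpace ℝ (Fin n)), J v = (v, 0) := fun v => rfl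
  have hspf : ∀ (t : ℝ) (x : (EuclideanSpace ℝ (Fin n))), HasFDerivAt (fun z => y z t) ((DY (x, t)).comp J) x := by
    intro t x
    exact (hYd (x, t)).comp x (hJ t x)
  have hfderiv_slice : ∀ (t : ℝ) (x : (EuclideanSpace ℝ (Fin n))) (i : Fin n),
      fderiv ℝ (fun x' => y x' t) x (e i) = yi i x t := by
    intro t x i
    rw [(hspf t x).fderiv]
    rfl
  have hdiff_slice : ∀ t : ℝ, Differentiable ℝ (fun x' => y x' t) :=
    fun t x => (hspf t x).differentiableAt
  have hspf2 : ∀ (t : ℝ) (x : (EuclideanSpace ℝ (Fin n))) (v : (EuclideanSpace ℝ (Fin n)) × ℝ),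
      HasFDerivAt (fun z => DY (z, t) v) (((D2Y (x, t)).comp J).flip v) x := by
    intro t x v
    have h3 : HasFDerivAt (fun z => DY (z, t)) ((D2Y (x, t)).comp J) x :=
      (hDYd (x, t)).comp x (hJ t x)
    have := h3.clm_apply (hasFDerivAt_const v x)
    simpa using this
  have hdiff_yi : ∀ (t : ℝ) (i : Fin n), Differentiable ℝ (fun z => yi i z t) :=
    fun t i z => (hspf2 t z (e i, 0)).differentiableAt
  have hdiff_yt : ∀ t : ℝ, Differentiable ℝ (fun z => yt z t) :=
    fun t z => (hspf2 t z (0, 1)).differentiableAt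
  have hfderiv_yt : ∀ (t : ℝ) (x : (EuclideanSpace ℝ (Fin n))) (i : Fin n),
      fderiv ℝ (fun z => yt z t) x (e i) = D2Y (x, t) (e i, 0) (0, 1) := by
    intro t x i
    rw [(hspf2 t x (0, 1)).fderiv]
    rfl
  have hslice_eq : ∀ (t : ℝ) (i : Fin n),
      (fun z => fderiv ℝ (fun x' => y x' t) z (e i)) = fun z => yi i z t :=
    fun t i => funext fun z => hfderiv_slice t z i
  have hfderiv2_slice : ∀ (t : ℝ) (x : (EuclideanSpace ℝ (Fin n))) (i j : Fin n),
      fderiv ℝ (fun z => fderiv ℝ (fun x' => y x' t) z (e i)) x (e j)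
        = D2Y (x, t) (e j, 0) (e i, 0) := by
    intro t x i j
    rw [hslice_eq t i, (hspf2 t x (e i, 0)).fderiv]
    rfl
  have hlap : ∀ (t : ℝ) (x : (EuclideanSpace ℝ (Fin n))),
      spatialLaplacian (fun x' => y x' t) x = ∑ i, D2Y (x, t) (e i, 0) (e i, 0) := by
    intro t x
    unfold spatialLaplacian
    exact Finset.sum_congr rfl fun i _ => hfderiv2_slice t x i i
  -- ## vanishing outside K
  have hopen : ∀ p : (EuclideanSpace ℝ (Fin n)) × ℝ, p.1 ∉ K → p.2 ∈ Set.Ioo (0:ℝ) T → DY p = 0 ∧ D2Y p = 0 := by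
    have hU : IsOpen ((Kᶜ : Set (EuclideanSpace ℝ (Fin n))) ×ˢ Set.Ioo (0:ℝ) T) :=
      hK.isClosed.isOpen_compl.prod isOpen_Ioo
    have hY0 : ∀ q ∈ ((Kᶜ : Set (EuclideanSpace ℝ (Fin n))) ×ˢ Set.Ioo (0:ℝ) T), Y q = 0 :=
      fun q hq => hyK q.1 hq.1 q.2 (Set.Ioo_subset_Icc_self hq.2)
    have hDY0 : ∀ q ∈ ((Kᶜ : Set (EuclideanSpace ℝ (Fin n))) ×ˢ Set.Ioo (0:ℝ) T), DY q = 0 := by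
      intro q hq
      have hev : Y =ᶠ[nhds q] (fun _ => 0) := Filter.eventually_of_mem (hU.mem_nhds hq) hY0
      calc DY q = fderiv ℝ (fun _ => (0:ℝ)) q := hev.fderiv_eq
        _ = 0 := fderiv_const_apply 0
    have hD2Y0 : ∀ q ∈ ((Kᶜ : Set (EuclideanSpace ℝ (Fin n))) ×ˢ Set.Ioo (0:ℝ) T), D2Y q = 0 := by
      intro q hq
      have hev : DY =ᶠ[nhds q] (fun _ => 0) := Filter.eventually_of_mem (hU.mem_nhds hq) hDY0
      calc D2Y q = fderiv ℝ (fun _ => (0 : (EuclideanSpace ℝ (Fin n)) × ℝ →L[ℝ] ℝ)) q := hev.fderiv_eq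
        _ = 0 := fderiv_const_apply 0
    exact fun p h1 h2 => ⟨hDY0 p ⟨h1, h2⟩, hD2Y0 p ⟨h1, h2⟩⟩
  have hzero : ∀ x ∉ K, ∀ t ∈ Set.Icc (0:ℝ) T, DY (x, t) = 0 ∧ D2Y (x, t) = 0 := by
    intro x hx t htt
    have hDY : Set.EqOn (fun s => DY (x, s)) (fun _ => 0) (Set.Icc 0 T) := by
      have h1 : Set.EqOn (fun s => DY (x, s)) (fun _ => 0) (Set.Ioo 0 T) :=
        fun s hs => (hopen (x, s) hx hs).1
      have h2 := h1.closure (hDYc.comp (continuous_const.prodMk continuous_id)) continuous_const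
      rwa [closure_Ioo hT.ne] at h2
    have hD2Y : Set.EqOn (fun s => D2Y (x, s)) (fun _ => 0) (Set.Icc 0 T) := by
      have h1 : Set.EqOn (fun s => D2Y (x, s)) (fun _ => 0) (Set.Ioo 0 T) :=
        fun s hs => (hopen (x, s) hx hs).2
      have h2 := h1.closure (hD2Yc.comp (continuous_const.prodMk continuous_id)) continuous_const
      rwa [closure_Ioo hT.ne] at h2
    exact ⟨hDY htt, hD2Y htt⟩
  have hyt0 : ∀ x ∉ K, ∀ t ∈ Set.Icc (0:ℝ) T, yt x t = 0 := by
    intro x hx t htt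
    show DY (x, t) (0, 1) = 0
    rw [(hzero x hx t htt).1]; rfl
  have hyi0 : ∀ (i : Fin n), ∀ x ∉ K, ∀ t ∈ Set.Icc (0:ℝ) T, yi i x t = 0 := by
    intro i x hx t htt
    show DY (x, t) (e i, 0) = 0
    rw [(hzero x hx t htt).1]; rfl
  -- ## basic positivity and bounds for the sound speed
  have hcx : ∀ x, 0 < c x := fun x => lt_of_lt_of_le hc_min_pos (hc x).1
  have hcmax : 0 < c_max := lt_of_lt_of_le hc_min_pos ((hc 0).1.trans (hc 0).2)
  have hgpos : ∀ x, 0 < g x := fun x => by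
    have := hcx x; positivity
  have hgle : ∀ x, g x ≤ (c_min ^ 2)⁻¹ := by
    intro x
    exact inv_anti₀ (by positivity) (by nlinarith [(hc x).1, hcx x])
  have hgmul : ∀ x (r : ℝ), r ^ 2 ≤ c_max ^ 2 * (g x * r ^ 2) := by
    intro x r
    have hc2 : (c x) ^ 2 ≠ 0 := pow_ne_zero 2 (hcx x).ne'
    have h2 : (c x) ^ 2 ≤ c_max ^ 2 := by nlinarith [(hc x).2, hcx x]
    have h3 : (c x) ^ 2 * (g x * r ^ 2) = r ^ 2 := by
      show (c x) ^ 2 * (((c x) ^ 2)⁻¹ * r ^ 2) = r ^ 2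
      rw [← mul_assoc, mul_inv_cancel₀ hc2, one_mul]
    calc r ^ 2 = (c x) ^ 2 * (g x * r ^ 2) := h3.symm
      _ ≤ c_max ^ 2 * (g x * r ^ 2) :=
        mul_le_mul_of_nonneg_right h2 (mul_nonneg (hgpos x).le (sq_nonneg r))
  -- ## integrability helper
  have hIc : ∀ h : (EuclideanSpace ℝ (Fin n)) → ℝ, Continuous h → (∀ x ∉ K, h x = 0) → Integrable h volume :=
    fun h hcont h0 => hcont.integrable_of_hasCompactSupport (HasCompactSupport.intro hK h0)
  have hgAESM : AEStronglyMeasurable g (volume : Measure (EuclideanSpace ℝ (Fin n))) :=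
    ((hc_meas.pow_const 2).inv).aestronglyMeasurable
  have hgbdd : ∃ C, ∀ x, ‖g x‖ ≤ C := by
    refine ⟨(c_min ^ 2)⁻¹, fun x => ?_⟩
    rw [Real.norm_eq_abs, abs_of_pos (hgpos x)]
    exact hgle x
  have hIg : ∀ h : (EuclideanSpace ℝ (Fin n)) → ℝ, Continuous h → (∀ x ∉ K, h x = 0) →
      Integrable (fun x => g x * h x) volume :=
    fun h hcont h0 => Integrable.bdd_mul (hIc h hcont h0) hgAESM (Filter.Eventually.of_forall hgbdd.choose_spec)
  -- continuity of slices
  have hytc : ∀ t, Continuous (fun x => yt x t) := by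
    intro t
    exact (hDYc.comp (continuous_id.prodMk continuous_const)).clm_apply continuous_const
  have hyic : ∀ i t, Continuous (fun x => yi i x t) := by
    intro i t
    exact (hDYc.comp (continuous_id.prodMk continuous_const)).clm_apply continuous_const
  have hyttc : ∀ t, Continuous (fun x => ytt x t) := by
    intro t
    exact (((hD2Yc.comp (continuous_id.prodMk continuous_const)).clm_apply
      continuous_const).clm_apply continuous_const)
  have hytic : ∀ i t, Continuous (fun x => yti i x t) := by
    intro i t
    exact (((hD2Yc.comp (continuous_id.prodMk continuous_const)).clm_apply
      continuous_const).clm_apply continuous_const)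
  have hyc : ∀ t, Continuous (fun x => y x t) := by
    intro t
    exact hY.continuous.comp (continuous_id.prodMk continuous_const)
  -- ## energy
  let Q : ℝ → (EuclideanSpace ℝ (Fin n)) → ℝ := fun t x => g x * (yt x t) ^ 2 + ∑ i, (yi i x t) ^ 2
  let En : ℝ → ℝ := fun t => ∫ x, Q t x
  have hIyt2 : ∀ t ∈ Set.Icc (0:ℝ) T, Integrable (fun x => g x * (yt x t) ^ 2) volume := by
    intro t ht
    exact hIg _ ((hytc t).pow 2) (fun x hx => by rw [hyt0 x hx t ht]; ring)
  have hIsum : ∀ t ∈ Set.Icc (0:ℝ) T, Integrable (fun x => ∑ i, (yi i x t) ^ 2) volume := by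
    intro t ht
    refine hIc _ (continuous_finset_sum _ fun i _ => (hyic i t).pow 2) (fun x hx => ?_)
    exact Finset.sum_eq_zero fun i _ => by rw [hyi0 i x hx t ht]; ring
  have hQint : ∀ t ∈ Set.Icc (0:ℝ) T, Integrable (Q t) volume := by
    intro t ht
    exact (hIyt2 t ht).add (hIsum t ht)
  -- uniform bounds on K × [0,T]
  obtain ⟨M₁, hM₁⟩ := (hK.prod (isCompact_Icc (a := (0:ℝ)) (b := T))).exists_bound_of_continuousOn
    (f := DY) hDYc.continuousOn
  obtain ⟨M₂, hM₂⟩ := (hK.prod (isCompact_Icc (a := (0:ℝ)) (b := T))).exists_bound_of_continuousOn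
    (f := D2Y) hD2Yc.continuousOn
  set M₁' := max M₁ 0 with hM₁'def
  set M₂' := max M₂ 0 with hM₂'def
  have hM₁'nn : 0 ≤ M₁' := le_max_right _ _
  have hM₂'nn : 0 ≤ M₂' := le_max_right _ _
  have hv1 : ‖((0 : EuclideanSpace ℝ (Fin n)), (1:ℝ))‖ ≤ 1 := by
    rw [Prod.norm_def]
    simp
  have hv2 : ∀ i : Fin n, ‖((e i, 0) : (EuclideanSpace ℝ (Fin n)) × ℝ)‖ ≤ 1 := by
    intro i
    rw [Prod.norm_def]
    simp [e, EuclideanSpace.norm_single]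
  have happ1 : ∀ (L : (EuclideanSpace ℝ (Fin n)) × ℝ →L[ℝ] ℝ) (v : (EuclideanSpace ℝ (Fin n)) × ℝ),
      ‖v‖ ≤ 1 → |L v| ≤ ‖L‖ := by
    intro L v hv
    calc |L v| = ‖L v‖ := rfl
      _ ≤ ‖L‖ * ‖v‖ := L.le_opNorm v
      _ ≤ ‖L‖ * 1 := mul_le_mul_of_nonneg_left hv (norm_nonneg L)
      _ = ‖L‖ := mul_one _
  have happ2 : ∀ (B : (EuclideanSpace ℝ (Fin n)) × ℝ →L[ℝ] (EuclideanSpace ℝ (Fin n)) × ℝ →L[ℝ] ℝ)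
      (v w : (EuclideanSpace ℝ (Fin n)) × ℝ), ‖v‖ ≤ 1 → ‖w‖ ≤ 1 → |B v w| ≤ ‖B‖ := by
    intro B v w hv hw
    calc |B v w| ≤ ‖B v‖ := happ1 (B v) w hw
      _ ≤ ‖B‖ * ‖v‖ := B.le_opNorm v
      _ ≤ ‖B‖ * 1 := mul_le_mul_of_nonneg_left hv (norm_nonneg B)
      _ = ‖B‖ := mul_one _
  have hytbd : ∀ x ∈ K, ∀ t ∈ Set.Icc (0:ℝ) T, |yt x t| ≤ M₁' := by
    intro x hx t htt
    exact le_trans (happ1 _ _ hv1) (le_trans (hM₁ (x, t) ⟨hx, htt⟩) (le_max_left _ _))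
  have hyibd : ∀ (i : Fin n), ∀ x ∈ K, ∀ t ∈ Set.Icc (0:ℝ) T, |yi i x t| ≤ M₁' := by
    intro i x hx t htt
    exact le_trans (happ1 _ _ (hv2 i)) (le_trans (hM₁ (x, t) ⟨hx, htt⟩) (le_max_left _ _))
  have hyttbd : ∀ x ∈ K, ∀ t ∈ Set.Icc (0:ℝ) T, |ytt x t| ≤ M₂' := by
    intro x hx t htt
    exact le_trans (happ2 _ _ _ hv1 hv1) (le_trans (hM₂ (x, t) ⟨hx, htt⟩) (le_max_left _ _))
  have hytibd : ∀ (i : Fin n), ∀ x ∈ K, ∀ t ∈ Set.Icc (0:ℝ) T, |yti i x t| ≤ M₂' := by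
    intro i x hx t htt
    exact le_trans (happ2 _ _ _ hv1 (hv2 i)) (le_trans (hM₂ (x, t) ⟨hx, htt⟩) (le_max_left _ _))
  have hindint : ∀ C : ℝ, Integrable (Set.indicator K fun _ => C) (volume : Measure (EuclideanSpace ℝ (Fin n))) := by
    intro C
    rw [integrable_indicator_iff hK.measurableSet]
    exact integrableOn_const hK.measure_lt_top.ne
  -- measurability of Q t
  have hQmeas : ∀ t : ℝ, AEStronglyMeasurable (Q t) (volume : Measure (EuclideanSpace ℝ (Fin n))) := by
    intro t
    exact (hgAESM.mul ((hytc t).pow 2).aestronglyMeasurable).add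
      (continuous_finset_sum _ fun i _ => (hyic i t).pow 2).aestronglyMeasurable
  have hQbd : ∀ t ∈ Set.Icc (0:ℝ) T, ∀ x, ‖Q t x‖
      ≤ Set.indicator K (fun _ => ((c_min ^ 2)⁻¹ + n) * M₁' ^ 2) x := by
    intro t ht x
    by_cases hx : x ∈ K
    · rw [Set.indicator_of_mem hx]
      have h1 : (yt x t) ^ 2 ≤ M₁' ^ 2 := by
        rw [← sq_abs]
        exact pow_le_pow_left₀ (abs_nonneg _) (hytbd x hx t ht) 2
      have h2 : ∀ i : Fin n, (yi i x t) ^ 2 ≤ M₁' ^ 2 := by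
        intro i
        rw [← sq_abs]
        exact pow_le_pow_left₀ (abs_nonneg _) (hyibd i x hx t ht) 2
      have h3 : ∑ i, (yi i x t) ^ 2 ≤ (n : ℝ) * M₁' ^ 2 := by
        calc ∑ i, (yi i x t) ^ 2 ≤ ∑ _i : Fin n, M₁' ^ 2 :=
              Finset.sum_le_sum fun i _ => h2 i
          _ = (n : ℝ) * M₁' ^ 2 := by simp [Finset.sum_const, mul_comm]
      have h4 : g x * (yt x t) ^ 2 ≤ (c_min ^ 2)⁻¹ * M₁' ^ 2 :=
        mul_le_mul (hgle x) h1 (sq_nonneg _) (by positivity)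
      have h5 : 0 ≤ Q t x := add_nonneg (mul_nonneg (hgpos x).le (sq_nonneg _))
        (Finset.sum_nonneg fun i _ => sq_nonneg _)
      rw [Real.norm_eq_abs, abs_of_nonneg h5]
      show g x * (yt x t) ^ 2 + ∑ i, (yi i x t) ^ 2 ≤ _
      calc g x * (yt x t) ^ 2 + ∑ i, (yi i x t) ^ 2
          ≤ (c_min ^ 2)⁻¹ * M₁' ^ 2 + (n : ℝ) * M₁' ^ 2 := add_le_add h4 h3
        _ = ((c_min ^ 2)⁻¹ + n) * M₁' ^ 2 := by ring
    · rw [Set.indicator_of_notMem hx]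
      have h0 : Q t x = 0 := by
        show g x * (yt x t) ^ 2 + ∑ i, (yi i x t) ^ 2 = 0
        rw [hyt0 x hx t ht]
        rw [Finset.sum_eq_zero fun i _ => by rw [hyi0 i x hx t ht]; ring]
        ring
      rw [h0]
      simp
  have hEnCont : ContinuousOn En (Set.Icc 0 T) := by
    refine continuousOn_of_dominated (bound := Set.indicator K fun _ => ((c_min ^ 2)⁻¹ + n) * M₁' ^ 2) (fun t _ => hQmeas t) ?_ (hindint _) ?_
    · exact fun t ht => Filter.Eventually.of_forall (hQbd t ht)
    · refine Filter.Eventually.of_forall fun x => ?_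
      have : Continuous fun t => Q t x := by
        refine (continuous_const.mul (((hDYc.comp
          (continuous_const.prodMk continuous_id)).clm_apply continuous_const).pow 2)).add
          (continuous_finset_sum _ fun i _ => ((hDYc.comp
            (continuous_const.prodMk continuous_id)).clm_apply continuous_const).pow 2)
      exact this.continuousOn
  have hEnDeriv : ∀ t₀ ∈ Set.Ioo (0:ℝ) T, HasDerivAt En 0 t₀ := by
    intro t₀ ht₀
    have t₀Icc : t₀ ∈ Set.Icc (0:ℝ) T := Set.Ioo_subset_Icc_self ht₀
    set F' : ℝ → (EuclideanSpace ℝ (Fin n)) → ℝ := fun t x =>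
      g x * (2 * yt x t ^ 1 * ytt x t) + ∑ i, 2 * yi i x t ^ 1 * yti i x t with hF'def
    set ε := min t₀ (T - t₀) with hεdef
    have hε : 0 < ε := lt_min ht₀.1 (by linarith [ht₀.2])
    have hball : Metric.ball t₀ ε ⊆ Set.Ioo 0 T := by
      intro s hs
      rw [Real.ball_eq_Ioo] at hs
      have he1 : ε ≤ t₀ := min_le_left _ _
      have he2 : ε ≤ T - t₀ := min_le_right _ _
      exact ⟨by linarith [hs.1], by linarith [hs.2]⟩
    have hcF' : ∀ t, AEStronglyMeasurable (F' t) (volume : Measure (EuclideanSpace ℝ (Fin n))) := by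
      intro t
      refine (hgAESM.mul ?_).add ?_
      · exact ((continuous_const.mul ((hytc t).pow 1)).mul (hyttc t)).aestronglyMeasurable
      · exact (continuous_finset_sum _ fun i _ =>
          (continuous_const.mul ((hyic i t).pow 1)).mul (hytic i t)).aestronglyMeasurable
    set C₂ : ℝ := ((c_min ^ 2)⁻¹ + n) * (2 * M₁' * M₂') with hC₂def
    have hbd : ∀ x, ∀ t ∈ Metric.ball t₀ ε, ‖F' t x‖ ≤ Set.indicator K (fun _ => C₂) x := by
      intro x t htb
      have htIcc : t ∈ Set.Icc (0:ℝ) T := Set.Ioo_subset_Icc_self (hball htb)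
      by_cases hx : x ∈ K
      · rw [Set.indicator_of_mem hx]
        have hprod : |yt x t| * |ytt x t| ≤ M₁' * M₂' :=
          mul_le_mul (hytbd x hx t htIcc) (hyttbd x hx t htIcc) (abs_nonneg _) hM₁'nn
        have h1 : |g x * (2 * yt x t ^ 1 * ytt x t)| ≤ (c_min ^ 2)⁻¹ * (2 * M₁' * M₂') := by
          rw [abs_mul]
          refine mul_le_mul ?_ ?_ (abs_nonneg _) (by positivity)
          · rw [abs_of_pos (hgpos x)]; exact hgle x
          · rw [pow_one, abs_mul, abs_mul]
            rw [abs_two]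
            nlinarith [hprod, abs_nonneg (yt x t), abs_nonneg (ytt x t)]
        have h2 : |∑ i, 2 * yi i x t ^ 1 * yti i x t| ≤ (n : ℝ) * (2 * M₁' * M₂') := by
          calc |∑ i, 2 * yi i x t ^ 1 * yti i x t| ≤ ∑ i, |2 * yi i x t ^ 1 * yti i x t| :=
                Finset.abs_sum_le_sum_abs _ _
            _ ≤ ∑ _i : Fin n, 2 * M₁' * M₂' := by
                refine Finset.sum_le_sum fun i _ => ?_
                rw [pow_one, abs_mul, abs_mul, abs_two]
                have hprodi : |yi i x t| * |yti i x t| ≤ M₁' * M₂' :=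
                  mul_le_mul (hyibd i x hx t htIcc) (hytibd i x hx t htIcc) (abs_nonneg _) hM₁'nn
                nlinarith [hprodi, abs_nonneg (yi i x t), abs_nonneg (yti i x t)]
            _ = (n : ℝ) * (2 * M₁' * M₂') := by simp [Finset.sum_const, mul_comm]
        calc ‖F' t x‖ ≤ |g x * (2 * yt x t ^ 1 * ytt x t)| + |∑ i, 2 * yi i x t ^ 1 * yti i x t| :=
              abs_add_le _ _
          _ ≤ (c_min ^ 2)⁻¹ * (2 * M₁' * M₂') + (n : ℝ) * (2 * M₁' * M₂') := add_le_add h1 h2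
          _ = C₂ := by rw [hC₂def]; ring
      · rw [Set.indicator_of_notMem hx]
        have h0 : F' t x = 0 := by
          show g x * (2 * yt x t ^ 1 * ytt x t) + ∑ i, 2 * yi i x t ^ 1 * yti i x t = 0
          rw [hyt0 x hx t htIcc,
            Finset.sum_eq_zero fun i _ => by rw [hyi0 i x hx t htIcc]; ring]
          ring
        rw [h0]
        simp
    have hdf : ∀ x, ∀ t ∈ Metric.ball t₀ ε, HasDerivAt (fun t => Q t x) (F' t x) t := by
      intro x t _
      have h1 := ((hline2 x t ((0 : EuclideanSpace ℝ (Fin n)), (1:ℝ))).pow 2).const_mul (g x)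
      have h2 := HasDerivAt.sum fun (i : Fin n) (_ : i ∈ Finset.univ) => (hline2 x t (e i, 0)).pow 2
      have h3 := h1.add h2
      convert h3 using 1
      · rfl
      · rfl
      · funext s
        simp only [Pi.add_apply, Pi.pow_apply, Finset.sum_apply]
        rfl
      all_goals (push_cast; ring)
    have hres := (hasDerivAt_integral_of_dominated_loc_of_deriv_le (Metric.ball_mem_nhds t₀ hε)
      (F := fun t x => Q t x) (F' := F') (bound := Set.indicator K fun _ => C₂)
      (Filter.Eventually.of_forall fun t => hQmeas t)
      (hQint t₀ t₀Icc)
      (hcF' t₀)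
      (Filter.Eventually.of_forall hbd)
      (hindint _)
      (Filter.Eventually.of_forall hdf)).2
    -- Now show the derivative integral vanishes, using the wave equation and integration by parts
    set a : Fin n → (EuclideanSpace ℝ (Fin n)) → ℝ := fun i x => D2Y (x, t₀) (e i, 0) (0, 1) with hadef
    set b : Fin n → (EuclideanSpace ℝ (Fin n)) → ℝ := fun i x => yi i x t₀ with hbdef
    set dd : Fin n → (EuclideanSpace ℝ (Fin n)) → ℝ := fun i x => D2Y (x, t₀) (e i, 0) (e i, 0) with hdddef
    have hac : ∀ i, Continuous (a i) := fun i =>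
      (((hD2Yc.comp (continuous_id.prodMk continuous_const)).clm_apply
        continuous_const).clm_apply continuous_const)
    have hddc : ∀ i, Continuous (dd i) := fun i =>
      (((hD2Yc.comp (continuous_id.prodMk continuous_const)).clm_apply
        continuous_const).clm_apply continuous_const)
    have hbc : ∀ i, Continuous (b i) := fun i => hyic i t₀
    have ha0 : ∀ i, ∀ x ∉ K, a i x = 0 := by
      intro i x hx
      show D2Y (x, t₀) (e i, 0) (0, 1) = 0
      rw [(hzero x hx t₀ t₀Icc).2]; rfl
    have hdd0 : ∀ i, ∀ x ∉ K, dd i x = 0 := by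
      intro i x hx
      show D2Y (x, t₀) (e i, 0) (e i, 0) = 0
      rw [(hzero x hx t₀ t₀Icc).2]; rfl
    have hInt_vdd : ∀ i, Integrable (fun x => yt x t₀ * dd i x) volume := fun i =>
      hIc _ ((hytc t₀).mul (hddc i)) (fun x hx => by rw [hyt0 x hx t₀ t₀Icc]; ring)
    have hInt_ab : ∀ i, Integrable (fun x => a i x * b i x) volume := fun i =>
      hIc _ ((hac i).mul (hbc i)) (fun x hx => by rw [ha0 i x hx]; ring)
    have hInt_vb : ∀ i, Integrable (fun x => yt x t₀ * b i x) volume := fun i =>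
      hIc _ ((hytc t₀).mul (hbc i)) (fun x hx => by rw [hyt0 x hx t₀ t₀Icc]; ring)
    have hibp : ∀ i : Fin n, (∫ x, yt x t₀ * dd i x) = - ∫ x, a i x * b i x := by
      intro i
      have hgfun : ∀ x : EuclideanSpace ℝ (Fin n),
          fderiv ℝ (fun z => yi i z t₀) x (e i) = dd i x := by
        intro x
        rw [(hspf2 t₀ x (e i, 0)).fderiv]; rfl
      have hffun : ∀ x : EuclideanSpace ℝ (Fin n),
          fderiv ℝ (fun z => yt z t₀) x (e i) = a i x := by
        intro x
        rw [(hspf2 t₀ x ((0 : EuclideanSpace ℝ (Fin n)), (1:ℝ))).fderiv]; rfl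
      have hA : Integrable (fun x => fderiv ℝ (fun z => yt z t₀) x (e i) * yi i x t₀) volume := by
        have heq : (fun x => fderiv ℝ (fun z => yt z t₀) x (e i) * yi i x t₀)
            = fun x => a i x * b i x := funext fun x => by rw [hffun x]
        rw [heq]; exact hInt_ab i
      have hB : Integrable (fun x => yt x t₀ * fderiv ℝ (fun z => yi i z t₀) x (e i)) volume := by
        have heq : (fun x => yt x t₀ * fderiv ℝ (fun z => yi i z t₀) x (e i))
            = fun x => yt x t₀ * dd i x := funext fun x => by rw [hgfun x]
        rw [heq]; exact hInt_vdd i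
      have h := integral_mul_fderiv_eq_neg_fderiv_mul_of_integrable
        (f := fun z => yt z t₀) (g := fun z => yi i z t₀) (v := e i) (μ := volume)
        hA hB (hInt_vb i) (fun x _ => hdiff_yt t₀ x) (fun x _ => hdiff_yi t₀ i x)
      calc (∫ x, yt x t₀ * dd i x)
          = ∫ x, yt x t₀ * fderiv ℝ (fun z => yi i z t₀) x (e i) :=
            integral_congr_ae (Filter.Eventually.of_forall fun x =>
              congrArg (fun r => yt x t₀ * r) (hgfun x).symm)
        _ = - ∫ x, fderiv ℝ (fun z => yt z t₀) x (e i) * yi i x t₀ := h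
        _ = - ∫ x, a i x * b i x := by
            congr 1
            exact integral_congr_ae (Filter.Eventually.of_forall fun x =>
              congrArg (fun r => r * b i x) (hffun x))
    have hwv : ∀ x, g x * ytt x t₀ = ∑ i, dd i x := by
      intro x
      have h := hwave x t₀ ht₀
      rw [hderiv2_eq x t₀, hlap t₀ x] at h
      exact h
    have hsum1 : (∫ x, g x * (2 * yt x t₀ ^ 1 * ytt x t₀)) = ∑ i, 2 * ∫ x, yt x t₀ * dd i x := by
      have hptw : ∀ x, g x * (2 * yt x t₀ ^ 1 * ytt x t₀) = ∑ i, 2 * (yt x t₀ * dd i x) := by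
        intro x
        rw [pow_one]
        calc g x * (2 * yt x t₀ * ytt x t₀) = 2 * yt x t₀ * (g x * ytt x t₀) := by ring
          _ = 2 * yt x t₀ * ∑ i, dd i x := by rw [hwv x]
          _ = ∑ i, 2 * (yt x t₀ * dd i x) := by
              rw [Finset.mul_sum]
              exact Finset.sum_congr rfl fun i _ => by ring
      calc (∫ x, g x * (2 * yt x t₀ ^ 1 * ytt x t₀))
          = ∫ x, ∑ i, 2 * (yt x t₀ * dd i x) :=
            integral_congr_ae (Filter.Eventually.of_forall fun x => hptw x)
        _ = ∑ i, ∫ x, 2 * (yt x t₀ * dd i x) :=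
            integral_finset_sum _ (fun i _ => (hInt_vdd i).const_mul 2)
        _ = ∑ i, 2 * ∫ x, yt x t₀ * dd i x :=
            Finset.sum_congr rfl fun i _ => integral_const_mul 2 _
    have hsum2 : (∫ x, ∑ i, 2 * yi i x t₀ ^ 1 * yti i x t₀) = ∑ i, 2 * ∫ x, a i x * b i x := by
      have hptw : ∀ (x : EuclideanSpace ℝ (Fin n)) (i : Fin n),
          2 * yi i x t₀ ^ 1 * yti i x t₀ = 2 * (a i x * b i x) := by
        intro x i
        rw [pow_one]
        have hsy : yti i x t₀ = a i x := hsymm (x, t₀) (0, 1) (e i, 0)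
        rw [hsy]; ring
      calc (∫ x, ∑ i, 2 * yi i x t₀ ^ 1 * yti i x t₀)
          = ∫ x, ∑ i, 2 * (a i x * b i x) :=
            integral_congr_ae (Filter.Eventually.of_forall fun x =>
              Finset.sum_congr rfl fun i _ => hptw x i)
        _ = ∑ i, ∫ x, 2 * (a i x * b i x) :=
            integral_finset_sum _ (fun i _ => (hInt_ab i).const_mul 2)
        _ = ∑ i, 2 * ∫ x, a i x * b i x :=
            Finset.sum_congr rfl fun i _ => integral_const_mul 2 _
    have hzero' : (∫ x, F' t₀ x) = 0 := by
      have hint1 : Integrable (fun x => g x * (2 * yt x t₀ ^ 1 * ytt x t₀)) volume := by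
        refine hIg _ ((continuous_const.mul ((hytc t₀).pow 1)).mul (hyttc t₀)) ?_
        intro x hx; rw [hyt0 x hx t₀ t₀Icc]; ring
      have hint2 : Integrable (fun x => ∑ i, 2 * yi i x t₀ ^ 1 * yti i x t₀) volume := by
        refine hIc _ (continuous_finset_sum _ fun i _ =>
          (continuous_const.mul ((hyic i t₀).pow 1)).mul (hytic i t₀)) ?_
        intro x hx
        exact Finset.sum_eq_zero fun i _ => by rw [hyi0 i x hx t₀ t₀Icc]; ring
      calc (∫ x, F' t₀ x)
          = (∫ x, g x * (2 * yt x t₀ ^ 1 * ytt x t₀))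
            + ∫ x, ∑ i, 2 * yi i x t₀ ^ 1 * yti i x t₀ := integral_add hint1 hint2
        _ = (∑ i, 2 * ∫ x, yt x t₀ * dd i x) + ∑ i, 2 * ∫ x, a i x * b i x := by
            rw [hsum1, hsum2]
        _ = (∑ i, 2 * -(∫ x, a i x * b i x)) + ∑ i, 2 * ∫ x, a i x * b i x := by
            congr 1
            exact Finset.sum_congr rfl fun i _ => by rw [hibp i]
        _ = 0 := by
            rw [← Finset.sum_add_distrib]
            exact Finset.sum_eq_zero fun i _ => by ring
    rw [hzero'] at hres
    exact hres
  have hEnConst : ∀ t ∈ Set.Icc (0:ℝ) T, En t = En 0 := by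
    have hmid : (T / 2) ∈ Set.Ioo (0:ℝ) T := ⟨by linarith, by linarith⟩
    have hval : ∀ s ∈ Set.Ioo (0:ℝ) T, En s = En (T / 2) := by
      intro s hs
      rcases le_total s (T / 2) with hle | hle
      · have hsub : Set.Icc s (T / 2) ⊆ Set.Icc 0 T :=
          Set.Icc_subset_Icc hs.1.le (by linarith)
        have hcst := constant_of_has_deriv_right_zero (f := En) (a := s) (b := T / 2)
          (hEnCont.mono hsub)
          (fun u hu => (hEnDeriv u ⟨lt_of_lt_of_le hs.1 hu.1, lt_of_lt_of_le hu.2 (by linarith)⟩).hasDerivWithinAt)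
        exact (hcst (T / 2) ⟨hle, le_rfl⟩).symm
      · have hsub : Set.Icc (T / 2) s ⊆ Set.Icc 0 T :=
          Set.Icc_subset_Icc (by linarith) hs.2.le
        have hcst := constant_of_has_deriv_right_zero (f := En) (a := T / 2) (b := s)
          (hEnCont.mono hsub)
          (fun u hu => (hEnDeriv u ⟨lt_of_lt_of_le hmid.1 hu.1, lt_of_le_of_lt hu.2.le hs.2⟩).hasDerivWithinAt)
        exact hcst s ⟨hle, le_rfl⟩
    have hlim : ∀ t₁ ∈ Set.Icc (0:ℝ) T, (nhdsWithin t₁ (Set.Ioo (0:ℝ) T)).NeBot → En t₁ = En (T / 2) := by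
      intro t₁ ht₁ hne
      have h1 : Filter.Tendsto En (nhdsWithin t₁ (Set.Ioo (0:ℝ) T)) (nhds (En t₁)) :=
        ((hEnCont t₁ ht₁).mono Set.Ioo_subset_Icc_self)
      have h2 : Filter.Tendsto En (nhdsWithin t₁ (Set.Ioo (0:ℝ) T)) (nhds (En (T / 2))) := by
        refine Filter.Tendsto.congr' ?_ tendsto_const_nhds
        filter_upwards [self_mem_nhdsWithin] with s hs
        exact (hval s hs).symm
      exact tendsto_nhds_unique h1 h2
    have hnb : ∀ t₁ ∈ Set.Icc (0:ℝ) T, (nhdsWithin t₁ (Set.Ioo (0:ℝ) T)).NeBot := by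
      intro t₁ ht₁
      refine mem_closure_iff_nhdsWithin_neBot.1 ?_
      rw [closure_Ioo hT.ne]
      exact ht₁
    intro t ht
    rw [hlim t ht (hnb t ht), hlim 0 ⟨le_rfl, hT.le⟩ (hnb 0 ⟨le_rfl, hT.le⟩)]
  -- value at 0
  have hfd : Differentiable ℝ f := hf.differentiable (by norm_num)
  have hgradf : ∀ x, ‖gradient f x‖ ^ 2 = ∑ i, (yi i x 0) ^ 2 := by
    intro x
    rw [grad_norm_sq (hfd x)]
    refine Finset.sum_congr rfl fun i _ => ?_
    have : (fun x' => y x' 0) = f := funext fun x' => hinit x'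
    rw [← this, hfderiv_slice 0 x i]
  have hEn0 : En 0 = ∫ x, ‖gradient f x‖ ^ 2 := by
    refine integral_congr_ae (Filter.Eventually.of_forall fun x => ?_)
    show g x * (yt x 0) ^ 2 + ∑ i, (yi i x 0) ^ 2 = ‖gradient f x‖ ^ 2
    have h1 : yt x 0 = 0 := by rw [← hderiv_eq]; exact hinit' x
    rw [hgradf x, h1]
    ring
  -- ## pieces of the final estimate
  set I := ∫ x, ‖gradient f x‖ ^ 2 with hIdef
  have hInonneg : 0 ≤ I := integral_nonneg fun x => sq_nonneg _
  -- f and gradient f vanish off K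
  have hfK : ∀ x ∉ K, f x = 0 := fun x hx => by
    rw [← hinit x]; exact hyK x hx 0 ⟨le_rfl, hT.le⟩
  have hgradfK : ∀ x ∉ K, ‖gradient f x‖ ^ 2 = 0 := by
    intro x hx
    have hev : f =ᶠ[nhds x] (fun _ => 0) :=
      Filter.eventually_of_mem (hK.isClosed.isOpen_compl.mem_nhds hx) (fun z hz => hfK z hz)
    have h1 : fderiv ℝ f x = 0 := by
      calc fderiv ℝ f x = fderiv ℝ (fun _ => (0:ℝ)) x := hev.fderiv_eq
        _ = 0 := fderiv_const_apply 0
    rw [grad_norm_sq (hfd x), h1]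
    simp
  have hgradfc : Continuous fun x => ‖gradient f x‖ ^ 2 := by
    have heq : (fun x => ‖gradient f x‖ ^ 2)
        = fun x => ∑ i, (fderiv ℝ f x (EuclideanSpace.single i 1)) ^ 2 :=
      funext fun x => grad_norm_sq (hfd x)
    rw [heq]
    exact continuous_finset_sum _ fun i _ =>
      (((hf.fderiv_right (m := 1) (by norm_num)).continuous.clm_apply continuous_const).pow 2)
  have hJint : Integrable (fun x => (f x) ^ 2) volume :=
    hIc _ (by fun_prop) (fun x hx => by rw [hfK x hx]; ring)
  have hIint : Integrable (fun x => ‖gradient f x‖ ^ 2) volume := hIc _ hgradfc hgradfK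
  set Jf := ∫ x, (f x) ^ 2 with hJdef
  have hJnonneg : 0 ≤ Jf := integral_nonneg fun x => sq_nonneg _
  have hPoin : C₀ ^ 2 * (Jf + I) ≤ I := by
    rw [hJdef, hIdef, ← integral_add hJint hIint]
    exact hPoincare
  -- energy bounds the pieces
  have hgyt_nonneg : ∀ t, 0 ≤ ∫ x, g x * (yt x t) ^ 2 :=
    fun t => integral_nonneg fun x => mul_nonneg (hgpos x).le (sq_nonneg _)
  have hEadd : ∀ t ∈ Set.Icc (0:ℝ) T,
      En t = (∫ x, g x * (yt x t) ^ 2) + ∫ x, ∑ i, (yi i x t) ^ 2 :=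
    fun t ht => integral_add (hIyt2 t ht) (hIsum t ht)
  have hEnI : ∀ t ∈ Set.Icc (0:ℝ) T, En t = I := by
    intro t ht
    rw [hEnConst t ht, hEn0, hIdef]
  have hgrad_part : ∀ t ∈ Set.Icc (0:ℝ) T, (∫ x, ∑ i, (yi i x t) ^ 2) ≤ I := by
    intro t ht
    have h1 := hEadd t ht
    have h2 := hEnI t ht
    linarith [hgyt_nonneg t]
  have hyt_part : ∀ t ∈ Set.Icc (0:ℝ) T, (∫ x, (yt x t) ^ 2) ≤ c_max ^ 2 * I := by
    intro t ht
    have h1 : (∫ x, (yt x t) ^ 2) ≤ ∫ x, c_max ^ 2 * (g x * (yt x t) ^ 2) := by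
      refine integral_mono (hIc _ ((hytc t).pow 2) (fun x hx => by rw [hyt0 x hx t ht]; ring))
        ((hIyt2 t ht).const_mul _) (fun x => hgmul x _)
    rw [integral_const_mul] at h1
    have h2 : (∫ x, g x * (yt x t) ^ 2) ≤ I := by
      have := hEadd t ht
      have h3 : (0:ℝ) ≤ ∫ x, ∑ i, (yi i x t) ^ 2 :=
        integral_nonneg fun x => Finset.sum_nonneg fun i _ => sq_nonneg _
      have h4 := hEnI t ht
      linarith
    calc (∫ x, (yt x t) ^ 2) ≤ c_max ^ 2 * ∫ x, g x * (yt x t) ^ 2 := h1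
      _ ≤ c_max ^ 2 * I := mul_le_mul_of_nonneg_left h2 (sq_nonneg _)
  -- L² bound on y(·,t) - f via FTC + Cauchy-Schwarz + Fubini
  have hytc' : ∀ x, Continuous (fun s => yt x s) := by
    intro x
    exact (hDYc.comp (continuous_const.prodMk continuous_id)).clm_apply continuous_const
  have hdiff_part : ∀ t ∈ Set.Icc (0:ℝ) T,
      (∫ x, (y x t - f x) ^ 2) ≤ T ^ 2 * c_max ^ 2 * I := by
    intro t ht
    obtain ⟨ht0, htT⟩ := ht
    set ν := (volume : Measure ℝ).restrict (Set.Ioc 0 t) with hνdef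
    haveI hνfin : IsFiniteMeasure ν := by
      constructor
      rw [hνdef, Measure.restrict_apply_univ]
      exact measure_Ioc_lt_top
    have hνuniv : (ν Set.univ).toReal = t := by
      rw [hνdef, Measure.restrict_apply_univ, Real.volume_Ioc, ENNReal.toReal_ofReal (by linarith)]
      ring
    have hd : Integrable (fun x => (y x t - f x) ^ 2) volume :=
      hIc _ (((hyc t).sub hf.continuous).pow 2)
        (fun x hx => by rw [hyK x hx t ⟨ht0, htT⟩, hfK x hx]; ring)
    -- FTC
    have hftc : ∀ x, y x t - f x = ∫ s, yt x s ∂ν := by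
      intro x
      have h1 : (∫ s in (0:ℝ)..t, yt x s) = y x t - y x 0 :=
        intervalIntegral.integral_eq_sub_of_hasDerivAt (fun s _ => hline x s)
          ((hytc' x).intervalIntegrable 0 t)
      rw [intervalIntegral.integral_of_le ht0] at h1
      rw [← hinit x, ← h1, hνdef]
    -- Cauchy-Schwarz in time
    have hcs : ∀ x, (y x t - f x) ^ 2 ≤ t * ∫ s, (yt x s) ^ 2 ∂ν := by
      intro x
      rw [hftc x]
      have h2 := sq_integral_le ν ((hytc' x).integrableOn_Ioc)
        (((hytc' x).pow 2).integrableOn_Ioc)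
      rwa [hνuniv] at h2
    -- product integrability for Fubini
    have hHc : Continuous (fun p : (EuclideanSpace ℝ (Fin n)) × ℝ => (yt p.1 p.2) ^ 2) :=
      (hDYc.clm_apply continuous_const).pow 2
    have hHmeas : AEStronglyMeasurable (fun p : (EuclideanSpace ℝ (Fin n)) × ℝ => (yt p.1 p.2) ^ 2)
        ((volume : Measure (EuclideanSpace ℝ (Fin n))).prod ν) := hHc.aestronglyMeasurable
    obtain ⟨Mh, hMh⟩ := (hK.prod (isCompact_Icc (a := (0:ℝ)) (b := T))).exists_bound_of_continuousOn
      (f := fun p : (EuclideanSpace ℝ (Fin n)) × ℝ => (yt p.1 p.2) ^ 2) hHc.continuousOn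
    set Mh' := max Mh 0 with hMh'def
    have hMh'nn : (0:ℝ) ≤ Mh' := le_max_right _ _
    have hHbd : ∀ (x : EuclideanSpace ℝ (Fin n)), ∀ s ∈ Set.Ioc (0:ℝ) t,
        ‖(yt x s) ^ 2‖ ≤ Set.indicator K (fun _ => Mh') x := by
      intro x s hs
      have hsIcc : s ∈ Set.Icc (0:ℝ) T := ⟨hs.1.le, hs.2.trans htT⟩
      by_cases hx : x ∈ K
      · rw [Set.indicator_of_mem hx]
        exact le_trans (hMh (x, s) ⟨hx, hsIcc⟩) (le_max_left _ _)
      · rw [Set.indicator_of_notMem hx, hyt0 x hx s hsIcc]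
        simp
    have hint1 : Integrable (Function.uncurry (fun x s => (yt x s) ^ 2))
        ((volume : Measure (EuclideanSpace ℝ (Fin n))).prod ν) := by
      refine (integrable_prod_iff hHmeas).2 ⟨?_, ?_⟩
      · exact Filter.Eventually.of_forall fun x => ((hytc' x).pow 2).integrableOn_Ioc
      · refine Integrable.mono' (g := fun x => Set.indicator K (fun _ => t * Mh') x)
          (hindint _) (hHmeas.norm.integral_prod_right') ?_
        refine Filter.Eventually.of_forall fun x => ?_
        show ‖∫ s, ‖(yt x s) ^ 2‖ ∂ν‖ ≤ Set.indicator K (fun _ => t * Mh') x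
        by_cases hx : x ∈ K
        · rw [Set.indicator_of_mem hx]
          have hb : ∀ᵐ s ∂ν, ‖‖(yt x s) ^ 2‖‖ ≤ Mh' := by
            filter_upwards [ae_restrict_mem measurableSet_Ioc] with s hs
            rw [norm_norm]
            exact le_trans (hHbd x s hs) (le_of_eq (Set.indicator_of_mem hx _))
          calc ‖∫ s, ‖(yt x s) ^ 2‖ ∂ν‖ ≤ Mh' * (ν Set.univ).toReal :=
                norm_integral_le_of_norm_le_const hb
            _ = t * Mh' := by rw [hνuniv]; ring
        · rw [Set.indicator_of_notMem hx]
          have hz : ∀ᵐ s ∂ν, ‖(yt x s) ^ 2‖ = 0 := by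
            filter_upwards [ae_restrict_mem measurableSet_Ioc] with s hs
            rw [hyt0 x hx s ⟨hs.1.le, hs.2.trans htT⟩]
            simp
          rw [integral_congr_ae hz]
          simp
    have hswap : (∫ x, ∫ s, (yt x s) ^ 2 ∂ν) = ∫ s, (∫ x, (yt x s) ^ 2) ∂ν :=
      integral_integral_swap hint1
    have houter : (∫ s, (∫ x, (yt x s) ^ 2) ∂ν) ≤ t * (c_max ^ 2 * I) := by
      have h1 : (∫ s, (∫ x, (yt x s) ^ 2) ∂ν) ≤ ∫ _s, c_max ^ 2 * I ∂ν := by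
        refine integral_mono_ae (hint1.integral_prod_right) (integrable_const _) ?_
        filter_upwards [ae_restrict_mem measurableSet_Ioc] with s hs
        exact hyt_part s ⟨hs.1.le, hs.2.trans htT⟩
      rw [integral_const, smul_eq_mul, measureReal_def, hνuniv] at h1
      exact h1
    have hfin : (∫ x, (y x t - f x) ^ 2) ≤ t * (t * (c_max ^ 2 * I)) := by
      have hIinner : Integrable (fun x => ∫ s, (yt x s) ^ 2 ∂ν) volume :=
        hint1.integral_prod_left
      calc (∫ x, (y x t - f x) ^ 2) ≤ ∫ x, t * ∫ s, (yt x s) ^ 2 ∂ν :=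
            integral_mono hd (hIinner.const_mul t) (fun x => hcs x)
        _ = t * ∫ x, ∫ s, (yt x s) ^ 2 ∂ν := integral_const_mul t _
        _ = t * ∫ s, (∫ x, (yt x s) ^ 2) ∂ν := by rw [hswap]
        _ ≤ t * (t * (c_max ^ 2 * I)) := by
            refine mul_le_mul_of_nonneg_left houter ht0
    have hc2I : (0:ℝ) ≤ c_max ^ 2 * I := mul_nonneg (sq_nonneg _) hInonneg
    have htt : t * t ≤ T * T := mul_self_le_mul_self ht0 htT
    nlinarith [hfin, mul_le_mul_of_nonneg_right htt hc2I]
  -- ## final assembly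
  intro t ht
  have hIy2 : Integrable (fun x => (y x t) ^ 2) volume :=
    hIc _ ((hyc t).pow 2) (fun x hx => by rw [hyK x hx t ht]; ring)
  have hsplit : (∫ x, ((y x t) ^ 2 + ‖gradient (fun x' => y x' t) x‖ ^ 2))
      = (∫ x, (y x t) ^ 2) + ∫ x, ∑ i, (yi i x t) ^ 2 := by
    have hpt : ∀ x, ‖gradient (fun x' => y x' t) x‖ ^ 2 = ∑ i, (yi i x t) ^ 2 := by
      intro x
      rw [grad_norm_sq ((hdiff_slice t) x)]
      exact Finset.sum_congr rfl fun i _ => congrArg (fun r => r ^ 2) (hfderiv_slice t x i)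
    calc (∫ x, ((y x t) ^ 2 + ‖gradient (fun x' => y x' t) x‖ ^ 2))
        = ∫ x, ((y x t) ^ 2 + ∑ i, (yi i x t) ^ 2) := by
          refine integral_congr_ae (Filter.Eventually.of_forall fun x => ?_)
          show y x t ^ 2 + ‖gradient (fun x' => y x' t) x‖ ^ 2 = y x t ^ 2 + ∑ i, (yi i x t) ^ 2
          rw [hpt x]
      _ = (∫ x, (y x t) ^ 2) + ∫ x, ∑ i, (yi i x t) ^ 2 := integral_add hIy2 (hIsum t ht)
  have hy2 : (∫ x, (y x t) ^ 2) ≤ 2 * Jf + 2 * (T ^ 2 * c_max ^ 2 * I) := by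
    have hd : Integrable (fun x => (y x t - f x) ^ 2) volume :=
      hIc _ (((hyc t).sub hf.continuous).pow 2)
        (fun x hx => by rw [hyK x hx t ht, hfK x hx]; ring)
    have h1 : (∫ x, (y x t) ^ 2) ≤ ∫ x, (2 * (f x) ^ 2 + 2 * (y x t - f x) ^ 2) := by
      refine integral_mono hIy2 ((hJint.const_mul 2).add (hd.const_mul 2)) (fun x => ?_)
      nlinarith [sq_nonneg (y x t - 2 * f x), sq_nonneg (f x)]
    rw [integral_add (hJint.const_mul 2) (hd.const_mul 2), integral_const_mul,
      integral_const_mul] at h1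
    have h2 := hdiff_part t ht
    rw [hJdef]
    linarith
  have hfinal : (∫ x, (y x t) ^ 2) + (∫ x, ∑ i, (yi i x t) ^ 2)
      ≤ (1 + 2 / C₀ ^ 2 * max 1 (c_max ^ 2 * T ^ 2)) * I := by
    have hm1 : (1:ℝ) ≤ max 1 (c_max ^ 2 * T ^ 2) := le_max_left _ _
    have hm2 : c_max ^ 2 * T ^ 2 ≤ max 1 (c_max ^ 2 * T ^ 2) := le_max_right _ _
    have hC2 : (0:ℝ) < C₀ ^ 2 := by positivity
    set m := max 1 (c_max ^ 2 * T ^ 2) with hmdef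
    have key : 2 * Jf + 2 * (T ^ 2 * c_max ^ 2 * I) ≤ 2 / C₀ ^ 2 * m * I := by
      rw [div_mul_eq_mul_div, div_mul_eq_mul_div, le_div_iff₀ hC2]
      rcases le_or_gt (C₀ ^ 2) 1 with h | h
      · have ha : C₀ ^ 2 * Jf + C₀ ^ 2 * I ≤ I := by nlinarith [hPoin]
        have hb' : T ^ 2 * c_max ^ 2 * I ≤ m * I := by
          nlinarith [mul_le_mul_of_nonneg_left hm2 hInonneg]
        have hb : C₀ ^ 2 * (T ^ 2 * c_max ^ 2 * I) ≤ C₀ ^ 2 * (m * I) :=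
          mul_le_mul_of_nonneg_left hb' hC2.le
        have hprod : 0 ≤ (1 - C₀ ^ 2) * ((m - 1) * I) :=
          mul_nonneg (by linarith) (mul_nonneg (by linarith) hInonneg)
        nlinarith [ha, hb, hprod]
      · have hI0 : I = 0 := by nlinarith [hPoin, hJnonneg, hInonneg]
        have hJ0 : Jf = 0 := by nlinarith [hPoin, hInonneg]
        rw [hI0, hJ0]
        ring_nf
        positivity
    have h2 := hgrad_part t ht
    have hexp : (1 + 2 / C₀ ^ 2 * m) * I = I + 2 / C₀ ^ 2 * m * I := by ring
    rw [hexp]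
    linarith [hy2, h2, key]
  rw [hsplit]
  exact hfinal
end

section
/- The boundary measurement is bounded by the H¹₀-norm of the initial datum: ∫₀ᵀ ∫_{∂Ω} y(x,t)² dμ(x) dt ≤ C_γ² · C(T)² · T · ∫_{ℝⁿ} |∇f(x)|² dx, where C(T)² = 1 + (2/C₀²) · max{1, c_max² T²}. (Equivalently, the photoacoustic forward operator f ↦ y|_{∂Ω×(0,T)} satisfies the norm bound ‖L‖ ≤ C_γ · C(T) · √T.) -/
open MeasureTheory

open Set

/-- Integration by parts on `ℝⁿ`: the integral of a directional derivative of an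
integrable function with integrable derivative vanishes. -/
lemma aux_integral_fderiv_eq_zero {n : ℕ} (g : EuclideanSpace ℝ (Fin n) → ℝ)
    (hg : Differentiable ℝ g) (hgi : Integrable g)
    (v : EuclideanSpace ℝ (Fin n)) (hgi' : Integrable (fun x => fderiv ℝ g x v)) :
    (∫ x, fderiv ℝ g x v) = 0 := by
  have h := integral_mul_fderiv_eq_neg_fderiv_mul_of_integrable (μ := volume)
      (f := fun _ : EuclideanSpace ℝ (Fin n) => (1:ℝ)) (g := g) (v := v)
      (by simpa using (integrable_zero _ _ _))
      (by simpa using hgi') (by simpa using hgi)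
      (fun x _ => differentiableAt_const (1:ℝ)) (fun x _ => hg x)
  simpa using h

/-- The squared norm of the gradient equals the sum of squared partial derivatives. -/
lemma aux_norm_gradient_sq {n : ℕ} (h : EuclideanSpace ℝ (Fin n) → ℝ)
    (x : EuclideanSpace ℝ (Fin n)) (hd : DifferentiableAt ℝ h x) :
    ‖gradient h x‖^2 = ∑ i, (fderiv ℝ h x (EuclideanSpace.single i 1))^2 := by
  have hg := hd.hasGradientAt
  rw [hasGradientAt_iff_hasFDerivAt] at hg
  have hf : fderiv ℝ h x = (InnerProductSpace.toDual ℝ _) (gradient h x) := hg.fderiv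
  have hco : ∀ i, fderiv ℝ h x (EuclideanSpace.single i 1) = gradient h x i := by
    intro i
    rw [hf, InnerProductSpace.toDual_apply_apply, EuclideanSpace.inner_single_right]
    simp
  simp_rw [hco]
  rw [EuclideanSpace.norm_eq]
  rw [Real.sq_sqrt (by positivity)]
  simp [sq_abs]

/-- Cauchy–Schwarz for interval integrals: `(∫₀ᵗ v)² ≤ t ∫₀ᵗ v²`. -/
lemma aux_sq_intervalIntegral_le (v : ℝ → ℝ) (hv : Continuous v) (t : ℝ) (ht : 0 ≤ t) :
    (∫ s in (0:ℝ)..t, v s)^2 ≤ t * ∫ s in (0:ℝ)..t, (v s)^2 := by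
  set ν : Measure ℝ := volume.restrict (Ioc 0 t) with hν
  have hfin : IsFiniteMeasure ν := by
    constructor
    rw [hν, Measure.restrict_apply_univ]
    exact measure_Ioc_lt_top
  obtain ⟨C, hC⟩ := (isCompact_Icc (a := (0:ℝ)) (b := t)).exists_bound_of_continuousOn
    hv.continuousOn
  have hbd : ∀ᵐ s ∂ν, ‖|v s|‖ ≤ C := by
    rw [hν, ae_restrict_iff' measurableSet_Ioc]
    filter_upwards with s hs
    simpa [abs_abs] using hC s (Ioc_subset_Icc_self hs)
  have hmem : MemLp (fun s => |v s|) (ENNReal.ofReal 2) ν := by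
    rw [ENNReal.ofReal_ofNat]
    exact MemLp.of_bound (hv.abs.aestronglyMeasurable) C hbd
  have hmem1 : MemLp (fun _ : ℝ => (1:ℝ)) (ENNReal.ofReal 2) ν := by
    rw [ENNReal.ofReal_ofNat]
    exact memLp_const 1
  have hH := integral_mul_le_Lp_mul_Lq_of_nonneg (μ := ν)
    (Real.HolderConjugate.two_two)
    (Filter.Eventually.of_forall (fun s => abs_nonneg (v s)))
    (Filter.Eventually.of_forall (fun _ => zero_le_one)) (by convert hmem using 2)
    (by convert hmem1 using 2)
  have habs : ∀ s : ℝ, |v s| ^ (2:ℝ) = (v s)^2 := by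
    intro s
    rw [show ((2:ℝ)) = ((2:ℕ):ℝ) by norm_num, Real.rpow_natCast]
    exact sq_abs _
  have hν1 : (∫ _ : ℝ, (1:ℝ)^(2:ℝ) ∂ν) = t := by
    simp [hν, Real.volume_Ioc, ENNReal.toReal_ofReal, ht]
  rw [hν1] at hH
  simp_rw [habs, mul_one] at hH
  have hI0 : 0 ≤ ∫ s, (v s)^2 ∂ν := integral_nonneg (fun s => sq_nonneg _)
  set I := ∫ s, (v s)^2 ∂ν with hI
  set J := ∫ s, |v s| ∂ν with hJ
  have hJ0 : 0 ≤ J := integral_nonneg (fun s => abs_nonneg _)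
  have hsq : (I ^ ((1:ℝ)/2) * t ^ ((1:ℝ)/2))^2 = I * t := by
    rw [mul_pow, ← Real.rpow_natCast (I ^ ((1:ℝ)/2)) 2, ← Real.rpow_natCast (t ^ ((1:ℝ)/2)) 2,
      ← Real.rpow_mul hI0, ← Real.rpow_mul ht]
    norm_num
  have h1 : (∫ s in (0:ℝ)..t, v s) = ∫ s, v s ∂ν := intervalIntegral.integral_of_le ht
  have h2 : (∫ s in (0:ℝ)..t, (v s)^2) = I := intervalIntegral.integral_of_le ht
  rw [h1, h2]
  have h3 : |∫ s, v s ∂ν| ≤ J := by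
    rw [hJ]
    simpa [Real.norm_eq_abs] using norm_integral_le_integral_norm (μ := ν) v
  calc (∫ s, v s ∂ν)^2 = |∫ s, v s ∂ν|^2 := (sq_abs _).symm
    _ ≤ J^2 := by nlinarith [abs_nonneg (∫ s, v s ∂ν)]
    _ ≤ (I ^ ((1:ℝ)/2) * t ^ ((1:ℝ)/2))^2 := by nlinarith
    _ = I * t := hsq
    _ = t * I := mul_comm _ _

/-- Integrability of a measurable function vanishing off a compact set and bounded on it. -/
lemma aux_integrable_of_bound {n : ℕ} {K : Set (EuclideanSpace ℝ (Fin n))} (hK : IsCompact K)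
    {g : EuclideanSpace ℝ (Fin n) → ℝ} (hm : AEStronglyMeasurable g volume) (C : ℝ)
    (h0 : ∀ x ∉ K, g x = 0) (hb : ∀ x ∈ K, |g x| ≤ C) : Integrable g := by
  have hCint : Integrable (K.indicator (fun _ => C)) volume :=
    (integrable_indicator_iff hK.measurableSet).2
      (integrableOn_const hK.measure_lt_top.ne)
  refine hCint.mono' hm ?_
  filter_upwards with x
  by_cases hx : x ∈ K
  · rw [indicator_of_mem hx, Real.norm_eq_abs]
    exact hb x hx
  · rw [indicator_of_notMem hx, h0 x hx]
    simp

lemma aux_two_sq (a b : ℝ) : (a + b)^2 ≤ 2*a^2 + 2*b^2 := by nlinarith [sq_nonneg (a - b)]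

/-- Key numeric inequality combining the Poincaré constant and the time horizon. -/
lemma aux_key (A E0 C₀ q : ℝ) (hA0 : 0 ≤ A) (hE0 : 0 ≤ E0) (hC : 0 < C₀)
    (hP : C₀^2 * (A + E0) ≤ E0) (hq : 0 ≤ q) :
    2*A + 2*q*E0 ≤ 2/C₀^2 * max 1 q * E0 := by
  have hC2 : (0:ℝ) < C₀^2 := by positivity
  have hm1 : (1:ℝ) ≤ max 1 q := le_max_left _ _
  have hm2 : q ≤ max 1 q := le_max_right _ _
  rcases eq_or_lt_of_le hE0 with h0 | h0
  · rw [← h0] at hP ⊢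
    have hAz : A ≤ 0 := by nlinarith
    nlinarith
  · have hC1 : C₀^2 ≤ 1 := by nlinarith
    have hBpos : (0:ℝ) < (C₀^2)⁻¹ := inv_pos.2 hC2
    have hBm : C₀^2 * (C₀^2)⁻¹ = 1 := mul_inv_cancel₀ (ne_of_gt hC2)
    have hB1 : (1:ℝ) ≤ (C₀^2)⁻¹ := by nlinarith
    have hAE : A + E0 ≤ (C₀^2)⁻¹ * E0 := by nlinarith
    have hdiv : 2/C₀^2 = 2 * (C₀^2)⁻¹ := by rw [div_eq_mul_inv]
    rw [hdiv]
    nlinarith [mul_nonneg (mul_nonneg (sub_nonneg.2 hB1) (sub_nonneg.2 hm1)) hE0,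
      mul_le_mul_of_nonneg_right hm2 hE0]

set_option maxHeartbeats 4000000 in
theorem stmt_4
    {n : ℕ} (hn : 1 ≤ n)
    (c : EuclideanSpace ℝ (Fin n) → ℝ) (hc_meas : Measurable c)
    (c_min c_max : ℝ) (hc_min_pos : 0 < c_min)
    (hc : ∀ x, c_min ≤ c x ∧ c x ≤ c_max)
    (T : ℝ) (hT : 0 < T)
    (f : EuclideanSpace ℝ (Fin n) → ℝ)
    (hf : ContDiff ℝ 2 f) (hf_supp : HasCompactSupport f)
    (y : EuclideanSpace ℝ (Fin n) → ℝ → ℝ)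
    (hy : ContDiff ℝ 2 (fun p : EuclideanSpace ℝ (Fin n) × ℝ => y p.1 p.2))
    (K : Set (EuclideanSpace ℝ (Fin n))) (hK : IsCompact K)
    (hyK : ∀ x ∉ K, ∀ t ∈ Set.Icc (0:ℝ) T, y x t = 0)
    (hwave : ∀ x, ∀ t ∈ Set.Ioo (0:ℝ) T,
      ((c x) ^ 2)⁻¹ * deriv (deriv (y x)) t = spatialLaplacian (fun x' => y x' t) x)
    (hinit : ∀ x, y x 0 = f x)
    (hinit' : ∀ x, deriv (y x) 0 = 0)
    (C₀ : ℝ) (hC₀ : 0 < C₀)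
    (hPoincare : C₀ ^ 2 * (∫ x, ((f x) ^ 2 + ‖gradient f x‖ ^ 2)) ≤ ∫ x, ‖gradient f x‖ ^ 2)
    (Ω : Set (EuclideanSpace ℝ (Fin n))) (hΩ_open : IsOpen Ω) (hΩ_bdd : Bornology.IsBounded Ω)
    (μ : Measure (EuclideanSpace ℝ (Fin n)))
    (hμ : μ = (MeasureTheory.Measure.hausdorffMeasure ((n : ℝ) - 1)).restrict (frontier Ω))
    (Cγ : ℝ) (hCγ : 0 < Cγ)
    (htrace : ∀ t ∈ Set.Icc (0:ℝ) T,
      (∫ x, (y x t) ^ 2 ∂μ)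
        ≤ Cγ ^ 2 * ∫ x, ((y x t) ^ 2 + ‖gradient (fun x' => y x' t) x‖ ^ 2)) :
    (∫ t in (0:ℝ)..T, ∫ x, (y x t) ^ 2 ∂μ)
      ≤ Cγ ^ 2 * (1 + 2 / C₀ ^ 2 * max 1 (c_max ^ 2 * T ^ 2)) * T
          * ∫ x, ‖gradient f x‖ ^ 2 := by
  classical
  -- ## Notation
  set e : Fin n → EuclideanSpace ℝ (Fin n) := fun i => EuclideanSpace.single i 1 with he
  set Y : EuclideanSpace ℝ (Fin n) × ℝ → ℝ := fun p => y p.1 p.2 with hYdef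
  set D := fderiv ℝ Y with hDdef
  set D2 := fderiv ℝ D with hD2def
  have hYd : Differentiable ℝ Y := hy.differentiable two_ne_zero
  have hDc1 : ContDiff ℝ 1 D := hy.fderiv_right (by norm_num)
  have hDd : Differentiable ℝ D := hDc1.differentiable one_ne_zero
  have hDcont : Continuous D := hDc1.continuous
  have hD2cont : Continuous D2 := hDc1.continuous_fderiv one_ne_zero
  -- ## Basic calculus facts
  have hcurve : ∀ (x : EuclideanSpace ℝ (Fin n)) (t : ℝ),
      HasDerivAt (fun s : ℝ => ((x, s) : EuclideanSpace ℝ (Fin n) × ℝ)) (0, 1) t :=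
    fun x t => (hasDerivAt_const t x).prodMk (hasDerivAt_id t)
  have hvd : ∀ x t, HasDerivAt (y x) (D (x, t) (0, 1)) t := by
    intro x t
    have := ((hYd (x, t)).hasFDerivAt).comp_hasDerivAt t (hcurve x t)
    exact this
  have hDslice : ∀ x t (w : EuclideanSpace ℝ (Fin n) × ℝ),
      HasDerivAt (fun s => D (x, s) w) (D2 (x, t) (0, 1) w) t := by
    intro x t w
    have h1 : HasDerivAt (fun s => D (x, s)) (D2 (x, t) (0, 1)) t :=
      ((hDd (x, t)).hasFDerivAt).comp_hasDerivAt t (hcurve x t)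
    have := h1.clm_apply (hasDerivAt_const t w)
    simpa using this
  have hderiv1 : ∀ x t, deriv (y x) t = D (x, t) (0, 1) := fun x t => (hvd x t).deriv
  have hderiv2 : ∀ x t, deriv (deriv (y x)) t = D2 (x, t) (0, 1) (0, 1) := by
    intro x t
    have : deriv (y x) = fun s => D (x, s) (0, 1) := funext (hderiv1 x)
    rw [this]
    exact (hDslice x t (0, 1)).deriv
  set P : EuclideanSpace ℝ (Fin n) →L[ℝ] EuclideanSpace ℝ (Fin n) × ℝ :=
    (ContinuousLinearMap.id ℝ _).prod 0 with hPdef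
  have hxcurve : ∀ (t : ℝ) (x : EuclideanSpace ℝ (Fin n)),
      HasFDerivAt (fun z : EuclideanSpace ℝ (Fin n) =>
        ((z, t) : EuclideanSpace ℝ (Fin n) × ℝ)) P x :=
    fun t x => (hasFDerivAt_id x).prodMk (hasFDerivAt_const t x)
  have hux : ∀ (t : ℝ) x, HasFDerivAt (fun z => y z t) ((D (x, t)).comp P) x := by
    intro t x
    have := ((hYd (x, t)).hasFDerivAt).comp x (hxcurve t x)
    exact this
  have huxi : ∀ (t : ℝ) x i, fderiv ℝ (fun z => y z t) x (e i) = D (x, t) (e i, 0) := by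
    intro t x i
    rw [(hux t x).fderiv]
    rfl
  have hDx : ∀ (t : ℝ) x (w : EuclideanSpace ℝ (Fin n) × ℝ),
      HasFDerivAt (fun z => D (z, t) w) (((D2 (x, t)).flip w).comp P) x := by
    intro t x w
    have h1 : HasFDerivAt (fun z => D (z, t)) ((D2 (x, t)).comp P) x :=
      ((hDd (x, t)).hasFDerivAt).comp x (hxcurve t x)
    have h2 := h1.clm_apply (hasFDerivAt_const w x)
    refine h2.congr_fderiv ?_
    ext z
    simp
  have hsec : ∀ (t : ℝ) x i,
      fderiv ℝ (fun z => fderiv ℝ (fun z' => y z' t) z (e i)) x (e i)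
        = D2 (x, t) (e i, 0) (e i, 0) := by
    intro t x i
    have h1 : (fun z => fderiv ℝ (fun z' => y z' t) z (e i)) = fun z => D (z, t) (e i, 0) := by
      funext z
      exact huxi t z i
    rw [h1, (hDx t x (e i, 0)).fderiv]
    rfl
  have hLap : ∀ (t : ℝ) x, spatialLaplacian (fun x' => y x' t) x
      = ∑ i, D2 (x, t) (e i, 0) (e i, 0) := by
    intro t x
    unfold spatialLaplacian
    exact Finset.sum_congr rfl (fun i _ => hsec t x i)
  have hsymm : ∀ (p : EuclideanSpace ℝ (Fin n) × ℝ) a b, D2 p a b = D2 p b a := by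
    intro p a b
    exact (hy.contDiffAt.isSymmSndFDerivAt (by simp [minSmoothness_of_isRCLikeNormedField])) a b
  -- ## Vanishing off K
  set U : Set (EuclideanSpace ℝ (Fin n) × ℝ) := Kᶜ ×ˢ Ioo 0 T with hUdef
  have hUopen : IsOpen U := (hK.isClosed.isOpen_compl).prod isOpen_Ioo
  have hYU : ∀ q ∈ U, Y q = 0 := by
    rintro ⟨x, t⟩ ⟨hx, ht⟩
    exact hyK x hx t (Ioo_subset_Icc_self ht)
  have hDU : ∀ q ∈ U, D q = 0 := by
    intro q hq
    have hev : Y =ᶠ[nhds q] (fun _ => (0:ℝ)) := by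
      filter_upwards [hUopen.mem_nhds hq] with r hr using hYU r hr
    rw [hDdef, hev.fderiv_eq, fderiv_fun_const]
    rfl
  have hD2U : ∀ q ∈ U, D2 q = 0 := by
    intro q hq
    have hev : D =ᶠ[nhds q] (fun _ => (0 : EuclideanSpace ℝ (Fin n) × ℝ →L[ℝ] ℝ)) := by
      filter_upwards [hUopen.mem_nhds hq] with r hr using hDU r hr
    rw [hD2def, hev.fderiv_eq, fderiv_fun_const]
    rfl
  have hD0t : ∀ t ∈ Ico (0:ℝ) T, ∀ x ∉ K, D (x, t) (0, 1) = 0 := by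
    intro t ht x hx
    rcases eq_or_lt_of_le ht.1 with h0 | h0
    · rw [← h0, ← hderiv1]
      exact hinit' x
    · rw [hDU (x, t) ⟨hx, ⟨h0, ht.2⟩⟩]
      rfl
  have hD0x : ∀ t ∈ Icc (0:ℝ) T, ∀ x ∉ K, ∀ i, D (x, t) (e i, 0) = 0 := by
    intro t ht x hx i
    rw [← huxi t x i]
    have hev : (fun z => y z t) =ᶠ[nhds x] (fun _ => (0:ℝ)) := by
      filter_upwards [hK.isClosed.isOpen_compl.mem_nhds hx] with z hz using hyK z hz t ht
    rw [hev.fderiv_eq, fderiv_fun_const]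
    rfl
  -- ## Energy
  set g : ℝ → EuclideanSpace ℝ (Fin n) → ℝ := fun t x =>
    ((c x)^2)⁻¹ * (D (x, t) (0, 1))^2 + ∑ i, (D (x, t) (e i, 0))^2 with hgdef
  set G : ℝ → EuclideanSpace ℝ (Fin n) → ℝ := fun t x =>
    ((c x)^2)⁻¹ * (2 * D (x, t) (0, 1) * D2 (x, t) (0, 1) (0, 1))
      + ∑ i, 2 * D (x, t) (e i, 0) * D2 (x, t) (0, 1) (e i, 0) with hGdef
  set E : ℝ → ℝ := fun t => ∫ x, g t x with hEdef
  have hgnonneg : ∀ t x, 0 ≤ g t x := by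
    intro t x
    have h1 : (0:ℝ) < c x := lt_of_lt_of_le hc_min_pos (hc x).1
    have : (0:ℝ) ≤ ((c x)^2)⁻¹ := by positivity
    have h2 : (0:ℝ) ≤ ∑ i, (D (x, t) (e i, 0))^2 :=
      Finset.sum_nonneg (fun i _ => sq_nonneg _)
    have h3 : (0:ℝ) ≤ ((c x)^2)⁻¹ * (D (x, t) (0, 1))^2 := by positivity
    rw [hgdef]
    dsimp only
    linarith
  have hgderiv : ∀ x t, HasDerivAt (fun s => g s x) (G t x) t := by
    intro x t
    have h1 : HasDerivAt (fun s => ((c x)^2)⁻¹ * (D (x, s) (0, 1))^2)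
        (((c x)^2)⁻¹ * ((2:ℕ) * (D (x, t) (0, 1))^1 * D2 (x, t) (0, 1) (0, 1))) t :=
      ((hDslice x t (0, 1)).pow 2).const_mul _
    have h2 : HasDerivAt (fun s => ∑ i, (D (x, s) (e i, 0))^2)
        (∑ i : Fin n, (2:ℕ) * (D (x, t) (e i, 0))^1 * D2 (x, t) (0, 1) (e i, 0)) t :=
      HasDerivAt.fun_sum (fun i _ => (hDslice x t (e i, 0)).pow 2)
    have := h1.fun_add h2
    refine this.congr_deriv ?_
    rw [hGdef]
    dsimp only
    congr 1
    · push_cast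
      ring
    · exact Finset.sum_congr rfl (fun i _ => by push_cast; ring)
  -- measurability
  have hcm : Measurable (fun x => ((c x)^2)⁻¹) := (hc_meas.pow_const 2).inv
  have hgm : ∀ t : ℝ, AEStronglyMeasurable (g t) volume := by
    intro t
    apply Measurable.aestronglyMeasurable
    apply Measurable.add
    · exact hcm.mul ((hDcont.clm_apply continuous_const).comp
        (Continuous.prodMk_left t) |>.pow 2).measurable
    · apply Finset.measurable_sum
      intro i _
      exact ((hDcont.clm_apply continuous_const).comp
        (Continuous.prodMk_left t) |>.pow 2).measurable
  have hGm : ∀ t : ℝ, AEStronglyMeasurable (G t) volume := by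
    intro t
    apply Measurable.aestronglyMeasurable
    apply Measurable.add
    · apply hcm.mul
      apply Continuous.measurable
      apply Continuous.mul
      · exact (continuous_const.mul ((hDcont.clm_apply continuous_const).comp
          (Continuous.prodMk_left t)))
      · exact ((hD2cont.clm_apply continuous_const).clm_apply continuous_const).comp
          (Continuous.prodMk_left t)
    · apply Finset.measurable_sum
      intro i _
      apply Continuous.measurable
      exact (continuous_const.mul ((hDcont.clm_apply continuous_const).comp
          (Continuous.prodMk_left t))).mul
        (((hD2cont.clm_apply continuous_const).clm_apply continuous_const).comp
          (Continuous.prodMk_left t))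
  -- continuous majorants
  set Hg : EuclideanSpace ℝ (Fin n) × ℝ → ℝ := fun p =>
    (c_min^2)⁻¹ * (D p (0, 1))^2 + ∑ i, (D p (e i, 0))^2 with hHgdef
  set HG : EuclideanSpace ℝ (Fin n) × ℝ → ℝ := fun p =>
    (c_min^2)⁻¹ * |2 * D p (0, 1) * D2 p (0, 1) (0, 1)|
      + ∑ i, |2 * D p (e i, 0) * D2 p (0, 1) (e i, 0)| with hHGdef
  have hHgcont : Continuous Hg := by
    apply Continuous.add
    · exact continuous_const.mul ((hDcont.clm_apply continuous_const).pow 2)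
    · exact continuous_finset_sum _ (fun i _ => (hDcont.clm_apply continuous_const).pow 2)
  have hHGcont : Continuous HG := by
    apply Continuous.add
    · exact continuous_const.mul ((continuous_const.mul
        (hDcont.clm_apply continuous_const)).mul
        ((hD2cont.clm_apply continuous_const).clm_apply continuous_const)).abs
    · exact continuous_finset_sum _ (fun i _ => ((continuous_const.mul
        (hDcont.clm_apply continuous_const)).mul
        ((hD2cont.clm_apply continuous_const).clm_apply continuous_const)).abs)
  have hcinv : ∀ x, ((c x)^2)⁻¹ ≤ (c_min^2)⁻¹ := by
    intro x
    have h1 : (0:ℝ) < c x := lt_of_lt_of_le hc_min_pos (hc x).1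
    exact inv_anti₀ (by positivity) (pow_le_pow_left₀ hc_min_pos.le (hc x).1 2)
  have hgle : ∀ t x, |g t x| ≤ Hg (x, t) := by
    intro t x
    rw [abs_of_nonneg (hgnonneg t x)]
    have h2 : ((c x)^2)⁻¹ * (D (x, t) (0, 1))^2 ≤ (c_min^2)⁻¹ * (D (x, t) (0, 1))^2 :=
      mul_le_mul_of_nonneg_right (hcinv x) (sq_nonneg _)
    rw [hgdef, hHgdef]
    dsimp only
    linarith
  have hGle : ∀ t x, |G t x| ≤ HG (x, t) := by
    intro t x
    rw [hGdef, hHGdef]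
    dsimp only
    refine (abs_add_le _ _).trans ?_
    have h1 : (0:ℝ) < c x := lt_of_lt_of_le hc_min_pos (hc x).1
    have h2 : |((c x)^2)⁻¹ * (2 * D (x, t) (0, 1) * D2 (x, t) (0, 1) (0, 1))|
        ≤ (c_min^2)⁻¹ * |2 * D (x, t) (0, 1) * D2 (x, t) (0, 1) (0, 1)| := by
      rw [abs_mul, abs_of_nonneg (by positivity : (0:ℝ) ≤ ((c x)^2)⁻¹)]
      exact mul_le_mul_of_nonneg_right (hcinv x) (abs_nonneg _)
    have h3 : |∑ i : Fin n, 2 * D (x, t) (e i, 0) * D2 (x, t) (0, 1) (e i, 0)|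
        ≤ ∑ i : Fin n, |2 * D (x, t) (e i, 0) * D2 (x, t) (0, 1) (e i, 0)| :=
      Finset.abs_sum_le_sum_abs _ _
    linarith
  -- bounds on the compact set
  obtain ⟨Cg, hCg⟩ := (hK.prod (isCompact_Icc (a := (0:ℝ)) (b := T))).exists_bound_of_continuousOn
    hHgcont.continuousOn
  obtain ⟨CG, hCG⟩ := (hK.prod (isCompact_Icc (a := (0:ℝ)) (b := T))).exists_bound_of_continuousOn
    hHGcont.continuousOn
  -- integrability of g t
  have hgK : ∀ t ∈ Ico (0:ℝ) T, ∀ x ∉ K, g t x = 0 := by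
    intro t ht x hx
    rw [hgdef]
    dsimp only
    rw [hD0t t ht x hx]
    have : ∀ i : Fin n, D (x, t) (e i, 0) = 0 :=
      hD0x t (Ico_subset_Icc_self ht) x hx
    simp [this]
  have hgint : ∀ t ∈ Ico (0:ℝ) T, Integrable (g t) volume := by
    intro t ht
    refine aux_integrable_of_bound hK (hgm t) Cg (hgK t ht) (fun x hx => ?_)
    refine (hgle t x).trans ?_
    exact (le_abs_self _).trans ((hCg (x, t) ⟨hx, ⟨ht.1, ht.2.le⟩⟩))
  -- continuity of E at 0 from the right
  have hEcont0 : Filter.Tendsto E (nhdsWithin 0 (Ico (0:ℝ) T)) (nhds (E 0)) := by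
    rw [hEdef]
    apply tendsto_integral_filter_of_dominated_convergence (K.indicator (fun _ => Cg))
    · filter_upwards with t using hgm t
    · filter_upwards [eventually_mem_nhdsWithin] with t ht
      filter_upwards with x
      by_cases hx : x ∈ K
      · rw [indicator_of_mem hx, Real.norm_eq_abs]
        exact (hgle t x).trans ((le_abs_self _).trans (hCg (x, t) ⟨hx, ⟨ht.1, ht.2.le⟩⟩))
      · rw [indicator_of_notMem hx, Real.norm_eq_abs, hgK t ht x hx]
        simp
    · exact (integrable_indicator_iff hK.measurableSet).2
        (integrableOn_const hK.measure_lt_top.ne)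
    · filter_upwards with x
      exact ((hgderiv x 0).continuousAt.tendsto).mono_left nhdsWithin_le_nhds
  -- derivative of E
  have hEderiv : ∀ t ∈ Ioo (0:ℝ) T, HasDerivAt E (∫ x, G t x) t := by
    intro t ht
    set ε : ℝ := min t (T - t) with hεdef
    have hε : 0 < ε := lt_min ht.1 (by linarith [ht.2])
    have hball : Metric.ball t ε ⊆ Ioo (0:ℝ) T := by
      intro s hs
      rw [Metric.mem_ball, Real.dist_eq, abs_sub_lt_iff] at hs
      constructor
      · have := hs.2
        have h1 : ε ≤ t := min_le_left _ _
        linarith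
      · have := hs.1
        have h1 : ε ≤ T - t := min_le_right _ _
        linarith
    have key := hasDerivAt_integral_of_dominated_loc_of_deriv_le (μ := volume)
      (F := fun s x => g s x) (F' := fun s x => G s x) (x₀ := t)
      (bound := K.indicator (fun _ => CG)) (Metric.ball_mem_nhds t hε)
      (Filter.Eventually.of_forall (fun s => hgm s))
      (hgint t (Ioo_subset_Ico_self ht)) (hGm t) ?_ ?_ ?_
    · exact key.2
    · filter_upwards with x
      intro s hs
      have hsT := hball hs
      by_cases hx : x ∈ K
      · rw [indicator_of_mem hx, Real.norm_eq_abs]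
        exact (hGle s x).trans ((le_abs_self _).trans
          (hCG (x, s) ⟨hx, ⟨hsT.1.le, hsT.2.le⟩⟩))
      · rw [indicator_of_notMem hx, Real.norm_eq_abs]
        have hD0 : D (x, s) = 0 := hDU (x, s) ⟨hx, hsT⟩
        have hD20 : D2 (x, s) = 0 := hD2U (x, s) ⟨hx, hsT⟩
        rw [hGdef]
        dsimp only
        rw [hD0, hD20]
        simp
    · exact (integrable_indicator_iff hK.measurableSet).2
        (integrableOn_const hK.measure_lt_top.ne)
    · filter_upwards with x
      intro s _
      exact hgderiv x s
  -- the derivative vanishes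
  have hGzero : ∀ t ∈ Ioo (0:ℝ) T, (∫ x, G t x) = 0 := by
    intro t ht
    -- the product functions
    set w : Fin n → EuclideanSpace ℝ (Fin n) → ℝ :=
      fun i z => D (z, t) (0, 1) * D (z, t) (e i, 0) with hwdef
    have hwd : ∀ i z, HasFDerivAt (w i)
        (D (z, t) (0, 1) • (((D2 (z, t)).flip (e i, 0)).comp P)
          + D (z, t) (e i, 0) • (((D2 (z, t)).flip (0, 1)).comp P)) z :=
      fun i z => (hDx t z (0, 1)).mul (hDx t z (e i, 0))
    have hwf : ∀ i x', fderiv ℝ (w i) x' (e i)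
        = D (x', t) (0, 1) * D2 (x', t) (e i, 0) (e i, 0)
          + D (x', t) (e i, 0) * D2 (x', t) (e i, 0) (0, 1) := by
      intro i x'
      rw [(hwd i x').fderiv]
      simp
      rfl
    -- rewrite G using the wave equation and symmetry
    have hwav2 : ∀ x, ((c x)^2)⁻¹ * D2 (x, t) (0, 1) (0, 1)
        = ∑ i, D2 (x, t) (e i, 0) (e i, 0) := by
      intro x
      have := hwave x t ht
      rwa [hderiv2, hLap] at this
    have hGeq : ∀ x, G t x = ∑ i, 2 * fderiv ℝ (w i) x (e i) := by
      intro x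
      rw [hGdef]
      dsimp only
      have h1 : ((c x)^2)⁻¹ * (2 * D (x, t) (0, 1) * D2 (x, t) (0, 1) (0, 1))
          = 2 * D (x, t) (0, 1) * (((c x)^2)⁻¹ * D2 (x, t) (0, 1) (0, 1)) := by ring
      rw [h1, hwav2 x, Finset.mul_sum, ← Finset.sum_add_distrib]
      refine Finset.sum_congr rfl (fun i _ => ?_)
      rw [hwf i x, hsymm (x, t) (e i, 0) (0, 1)]
      ring
    -- each term integrates to zero
    have hwcont : ∀ i, Continuous (w i) := by
      intro i
      exact ((hDcont.clm_apply continuous_const).comp (Continuous.prodMk_left t)).mul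
        ((hDcont.clm_apply continuous_const).comp (Continuous.prodMk_left t))
    have hw0 : ∀ i, ∀ z ∉ K, w i z = 0 := by
      intro i z hz
      rw [hwdef]
      dsimp only
      rw [hDU (z, t) ⟨hz, ht⟩]
      simp
    have hwint : ∀ i, Integrable (w i) volume := by
      intro i
      exact (hwcont i).integrable_of_hasCompactSupport
        (HasCompactSupport.intro hK (hw0 i))
    have hwfcont : ∀ i, Continuous (fun x' => fderiv ℝ (w i) x' (e i)) := by
      intro i
      have : (fun x' => fderiv ℝ (w i) x' (e i)) = fun x' =>
          D (x', t) (0, 1) * D2 (x', t) (e i, 0) (e i, 0)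
            + D (x', t) (e i, 0) * D2 (x', t) (e i, 0) (0, 1) := funext (hwf i)
      rw [this]
      apply Continuous.add
      · exact ((hDcont.clm_apply continuous_const).comp (Continuous.prodMk_left t)).mul
          (((hD2cont.clm_apply continuous_const).clm_apply continuous_const).comp
            (Continuous.prodMk_left t))
      · exact ((hDcont.clm_apply continuous_const).comp (Continuous.prodMk_left t)).mul
          (((hD2cont.clm_apply continuous_const).clm_apply continuous_const).comp
            (Continuous.prodMk_left t))
    have hwfint : ∀ i, Integrable (fun x' => fderiv ℝ (w i) x' (e i)) volume := by
      intro i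
      apply (hwfcont i).integrable_of_hasCompactSupport
      apply HasCompactSupport.intro hK
      intro z hz
      rw [hwf i z, hDU (z, t) ⟨hz, ht⟩, hD2U (z, t) ⟨hz, ht⟩]
      simp
    have hIBP : ∀ i, (∫ x', fderiv ℝ (w i) x' (e i)) = 0 := by
      intro i
      exact aux_integral_fderiv_eq_zero (w i) (fun z => (hwd i z).differentiableAt)
        (hwint i) (e i) (hwfint i)
    calc (∫ x, G t x) = ∫ x, ∑ i, 2 * fderiv ℝ (w i) x (e i) := by
          congr 1
          exact funext hGeq
      _ = ∑ i : Fin n, ∫ x, 2 * fderiv ℝ (w i) x (e i) :=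
          integral_finset_sum _ (fun i _ => (hwfint i).const_mul 2)
      _ = 0 := by
          refine Finset.sum_eq_zero (fun i _ => ?_)
          rw [integral_const_mul, hIBP i, mul_zero]
  -- E is constant on [0, T)
  have hconstIoo : ∀ a b : ℝ, a ∈ Ioo (0:ℝ) T → b ∈ Ioo (0:ℝ) T → a ≤ b → E b = E a := by
    intro a b ha hb hab
    have hder : ∀ s ∈ Ico a b, HasDerivWithinAt E 0 (Ici s) s := by
      intro s hs
      have hsIoo : s ∈ Ioo (0:ℝ) T := ⟨lt_of_lt_of_le ha.1 hs.1, lt_trans hs.2 hb.2⟩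
      have := hEderiv s hsIoo
      rw [hGzero s hsIoo] at this
      exact this.hasDerivWithinAt
    have hcont : ContinuousOn E (Icc a b) := by
      intro s hs
      have hsIoo : s ∈ Ioo (0:ℝ) T :=
        ⟨lt_of_lt_of_le ha.1 hs.1, lt_of_le_of_lt hs.2 hb.2⟩
      have := hEderiv s hsIoo
      rw [hGzero s hsIoo] at this
      exact this.continuousAt.continuousWithinAt
    exact constant_of_has_deriv_right_zero hcont hder b (right_mem_Icc.2 hab)
  have hEt : ∀ t ∈ Ioo (0:ℝ) T, E t = E 0 := by
    intro t ht
    have hne : (nhdsWithin (0:ℝ) (Ioo 0 t)).NeBot := by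
      rw [← mem_closure_iff_nhdsWithin_neBot, closure_Ioo (ne_of_lt ht.1)]
      exact ⟨le_rfl, ht.1.le⟩
    have hsub : Ioo (0:ℝ) t ⊆ Ico (0:ℝ) T :=
      fun s hs => ⟨hs.1.le, lt_trans hs.2 ht.2⟩
    have h1 : Filter.Tendsto E (nhdsWithin 0 (Ioo (0:ℝ) t)) (nhds (E 0)) :=
      hEcont0.mono_left (nhdsWithin_mono 0 hsub)
    have h2 : Filter.Tendsto E (nhdsWithin 0 (Ioo (0:ℝ) t)) (nhds (E t)) := by
      apply Filter.Tendsto.congr' _ (tendsto_const_nhds (x := E t))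
      filter_upwards [eventually_mem_nhdsWithin] with s hs
      exact hconstIoo s t ⟨hs.1, lt_trans hs.2 ht.2⟩ ht hs.2.le
    exact tendsto_nhds_unique h2 h1
  -- value of E at 0
  set E0 : ℝ := ∫ x, ‖gradient f x‖^2 with hE0def
  have hE0 : E 0 = E0 := by
    have hstep : (∫ x, g 0 x) = ∫ x, ‖gradient f x‖^2 := by
      congr 1
      funext x
      have h1 : D (x, 0) (0, 1) = 0 := by rw [← hderiv1]; exact hinit' x
      have h2 : ‖gradient f x‖^2 = ∑ i, (D (x, 0) (e i, 0))^2 := by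
        have hfy : f = fun z => y z 0 := by funext z; exact (hinit z).symm
        rw [hfy, aux_norm_gradient_sq _ x (hux 0 x).differentiableAt]
        exact Finset.sum_congr rfl (fun i _ => by rw [huxi 0 x i])
      rw [hgdef]
      dsimp only
      rw [h1, h2]
      simp
    exact hstep
  have hE0nonneg : 0 ≤ E0 := integral_nonneg (fun x => sq_nonneg _)
  -- gradient identity for all t
  have hgradsq : ∀ (t : ℝ) x, ‖gradient (fun x' => y x' t) x‖^2
      = ∑ i, (D (x, t) (e i, 0))^2 := by
    intro t x
    rw [aux_norm_gradient_sq _ x (hux t x).differentiableAt]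
    exact Finset.sum_congr rfl (fun i _ => by rw [huxi t x i])
  -- Poincaré consequence
  set A : ℝ := ∫ x, (f x)^2 with hAdef
  have hfcont : Continuous f := hf.continuous
  have hf2int : Integrable (fun x => (f x)^2) volume :=
    (hfcont.pow 2).integrable_of_hasCompactSupport
      (by convert hf_supp.comp_left (g := fun r : ℝ => r^2) (by simp) using 1 <;> rfl)
  have hgradcont : Continuous (gradient f) := by
    have : gradient f = fun x =>
        (InnerProductSpace.toDual ℝ (EuclideanSpace ℝ (Fin n))).symm (fderiv ℝ f x) := rfl
    rw [this]
    have h2 : Continuous (fderiv ℝ f) := hf.continuous_fderiv two_ne_zero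
    exact ((InnerProductSpace.toDual ℝ (EuclideanSpace ℝ (Fin n))).symm.continuous).comp h2
  have hgradsupp : HasCompactSupport (gradient f) := by
    have h1 : HasCompactSupport (fderiv ℝ f) := HasCompactSupport.fderiv (𝕜 := ℝ) hf_supp
    have : gradient f = (fun L : EuclideanSpace ℝ (Fin n) →L[ℝ] ℝ =>
        (InnerProductSpace.toDual ℝ (EuclideanSpace ℝ (Fin n))).symm L) ∘ (fderiv ℝ f) := rfl
    rw [this]
    exact h1.comp_left (by simp)
  have hgrad2int : Integrable (fun x => ‖gradient f x‖^2) volume :=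
    ((hgradcont.norm.pow 2)).integrable_of_hasCompactSupport
      (by convert (hgradsupp.norm).comp_left (g := fun r : ℝ => r^2) (by simp) using 1 <;> rfl)
  have hA0 : 0 ≤ A := integral_nonneg (fun x => sq_nonneg _)
  have hPA : C₀^2 * (A + E0) ≤ E0 := by
    have hsplit : (∫ x, ((f x)^2 + ‖gradient f x‖^2)) = A + E0 :=
      integral_add hf2int hgrad2int
    rw [← hsplit]
    exact hPoincare
  -- the key numeric inequality
  set m : ℝ := max 1 (c_max^2 * T^2) with hmdef
  have hm1 : (1:ℝ) ≤ m := le_max_left _ _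
  have hm2 : c_max^2 * T^2 ≤ m := le_max_right _ _
  have hC2 : (0:ℝ) < C₀^2 := by positivity
  have hkey : 2*A + 2*(c_max^2*T^2)*E0 ≤ 2/C₀^2 * m * E0 := by
    rw [hmdef]
    exact aux_key A E0 C₀ (c_max^2*T^2) hA0 hE0nonneg hC₀ hPA (by positivity)
  -- velocity bound
  have hvint : ∀ s ∈ Ico (0:ℝ) T, Integrable (fun x => (D (x, s) (0, 1))^2) volume := by
    intro s hs
    apply (((hDcont.clm_apply continuous_const).comp
      (Continuous.prodMk_left s)).pow 2).integrable_of_hasCompactSupport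
    apply HasCompactSupport.intro hK
    intro x hx
    simp [hD0t s hs x hx]
  have hVel : ∀ s ∈ Ico (0:ℝ) T, (∫ x, (D (x, s) (0, 1))^2) ≤ c_max^2 * E0 := by
    intro s hs
    have hle : ∀ x, (D (x, s) (0, 1))^2 ≤ c_max^2 * g s x := by
      intro x
      have h1 : (0:ℝ) < c x := lt_of_lt_of_le hc_min_pos (hc x).1
      have h2 : c x ≤ c_max := (hc x).2
      have ha : (0:ℝ) < ((c x)^2)⁻¹ := by positivity
      have hca : 1 ≤ c_max^2 * ((c x)^2)⁻¹ := by
        have h3 : (c x)^2 * ((c x)^2)⁻¹ ≤ c_max^2 * ((c x)^2)⁻¹ :=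
          mul_le_mul_of_nonneg_right (pow_le_pow_left₀ h1.le h2 2) ha.le
        rwa [mul_inv_cancel₀ (ne_of_gt (by positivity : (0:ℝ) < (c x)^2))] at h3
      have hS : (0:ℝ) ≤ ∑ i, (D (x, s) (e i, 0))^2 :=
        Finset.sum_nonneg (fun i _ => sq_nonneg _)
      have hcmax : (0:ℝ) < c_max := lt_of_lt_of_le hc_min_pos (le_trans (hc x).1 (hc x).2)
      have h4 : (D (x, s) (0, 1))^2 ≤ (c_max^2 * ((c x)^2)⁻¹) * (D (x, s) (0, 1))^2 :=
        le_mul_of_one_le_left (sq_nonneg _) hca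
      have h5 : (0:ℝ) ≤ c_max^2 * ∑ i, (D (x, s) (e i, 0))^2 := mul_nonneg (by positivity) hS
      have h6 : c_max^2 * (((c x)^2)⁻¹ * (D (x, s) (0, 1))^2 + ∑ i, (D (x, s) (e i, 0))^2)
          = (c_max^2 * ((c x)^2)⁻¹) * (D (x, s) (0, 1))^2
            + c_max^2 * ∑ i, (D (x, s) (e i, 0))^2 := by ring
      rw [hgdef]
      dsimp only
      linarith [h4, h5, h6]
    have hmono := integral_mono (hvint s hs) ((hgint s hs).const_mul (c_max^2)) hle
    have hEs : E s = E0 := by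
      rcases eq_or_lt_of_le hs.1 with h0 | h0
      · rw [← h0, hE0]
      · rw [hEt s ⟨h0, hs.2⟩, hE0]
    calc (∫ x, (D (x, s) (0, 1))^2) ≤ ∫ x, c_max^2 * g s x := hmono
      _ = c_max^2 * E s := integral_const_mul _ _
      _ = c_max^2 * E0 := by rw [hEs]
  -- main per-time bound
  have hmain : ∀ t ∈ Ioo (0:ℝ) T,
      (∫ x, ((y x t)^2 + ‖gradient (fun x' => y x' t) x‖^2))
        ≤ (1 + 2/C₀^2 * m) * E0 := by
    intro t ht
    have ht0 : (0:ℝ) ≤ t := ht.1.le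
    have hycont : Continuous (fun x => y x t) := by
      have : (fun x => y x t) = Y ∘ (fun x => (x, t)) := rfl
      rw [this]
      exact hy.continuous.comp (Continuous.prodMk_left t)
    have hy2int : Integrable (fun x => (y x t)^2) volume := by
      apply (hycont.pow 2).integrable_of_hasCompactSupport
      apply HasCompactSupport.intro hK
      intro x hx
      simp [hyK x hx t ⟨ht0, ht.2.le⟩]
    have hgr2int : Integrable (fun x => ∑ i, (D (x, t) (e i, 0))^2) volume := by
      apply (continuous_finset_sum _ (fun (i : Fin n) _ =>
        (((hDcont.clm_apply continuous_const).comp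
          (Continuous.prodMk_left t)).pow 2))).integrable_of_hasCompactSupport
      apply HasCompactSupport.intro hK
      intro x hx
      have : ∀ i : Fin n, D (x, t) (e i, 0) = 0 := hD0x t ⟨ht0, ht.2.le⟩ x hx
      simp [this]
    have hsplit : (∫ x, ((y x t)^2 + ‖gradient (fun x' => y x' t) x‖^2))
        = (∫ x, (y x t)^2) + ∫ x, ∑ i, (D (x, t) (e i, 0))^2 := by
      simp_rw [hgradsq t]
      exact integral_add hy2int hgr2int
    -- gradient part
    have hgr_le : (∫ x, ∑ i, (D (x, t) (e i, 0))^2) ≤ E0 := by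
      have hle : ∀ x, (∑ i, (D (x, t) (e i, 0))^2) ≤ g t x := by
        intro x
        have h1 : (0:ℝ) < c x := lt_of_lt_of_le hc_min_pos (hc x).1
        have : (0:ℝ) ≤ ((c x)^2)⁻¹ * (D (x, t) (0, 1))^2 := by positivity
        rw [hgdef]
        dsimp only
        linarith
      have := integral_mono hgr2int (hgint t (Ioo_subset_Ico_self ht)) hle
      calc (∫ x, ∑ i, (D (x, t) (e i, 0))^2) ≤ E t := this
        _ = E0 := by rw [hEt t ht, hE0]
    -- potential part
    set w2 : EuclideanSpace ℝ (Fin n) → ℝ := fun x => ∫ s in (0:ℝ)..t, D (x, s) (0, 1)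
      with hw2def
    have hvcont : ∀ x : EuclideanSpace ℝ (Fin n),
        Continuous (fun s => D (x, s) (0, 1)) := by
      intro x
      exact (hDcont.clm_apply continuous_const).comp (Continuous.prodMk_right x)
    have hyw : ∀ x, y x t = f x + w2 x := by
      intro x
      have hFTC := intervalIntegral.integral_eq_sub_of_hasDerivAt
        (f := y x) (f' := fun s => D (x, s) (0, 1)) (fun s _ => hvd x s)
        ((hvcont x).intervalIntegrable 0 t)
      rw [hw2def]
      dsimp only
      rw [hFTC, hinit x]
      ring
    have huncur : Continuous (Function.uncurry fun (x : EuclideanSpace ℝ (Fin n)) (s : ℝ)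
        => D (x, s) (0, 1)) := by
      have : (Function.uncurry fun (x : EuclideanSpace ℝ (Fin n)) (s : ℝ) => D (x, s) (0, 1))
          = fun p => D p (0, 1) := rfl
      rw [this]
      exact hDcont.clm_apply continuous_const
    have hw2cont : Continuous w2 :=
      intervalIntegral.continuous_parametric_intervalIntegral_of_continuous' (μ := volume) huncur 0 t
    have hw2zero : ∀ x ∉ K, w2 x = 0 := by
      intro x hx
      rw [hw2def]
      dsimp only
      have hcongr : EqOn (fun s => D (x, s) (0, 1)) (fun _ => (0:ℝ)) (uIcc (0:ℝ) t) := by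
        intro s hs
        rw [uIcc_of_le ht0] at hs
        exact hD0t s ⟨hs.1, lt_of_le_of_lt hs.2 ht.2⟩ x hx
      rw [intervalIntegral.integral_congr hcongr]
      simp
    have hw2int : Integrable (fun x => (w2 x)^2) volume := by
      apply (hw2cont.pow 2).integrable_of_hasCompactSupport
      apply HasCompactSupport.intro hK
      intro x hx
      simp [hw2zero x hx]
    -- Fubini setup
    set ν : Measure ℝ := volume.restrict (Ioc 0 t) with hνdef
    set V : EuclideanSpace ℝ (Fin n) → ℝ := fun x => ∫ s in (0:ℝ)..t, (D (x, s) (0, 1))^2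
      with hVdef
    have hVeq : ∀ x, V x = ∫ s, (D (x, s) (0, 1))^2 ∂ν :=
      fun x => intervalIntegral.integral_of_le ht0
    have hVnonneg : ∀ x, 0 ≤ V x := by
      intro x
      rw [hVeq x]
      exact integral_nonneg (fun s => sq_nonneg _)
    have hVcont : Continuous V := by
      apply intervalIntegral.continuous_parametric_intervalIntegral_of_continuous' (μ := volume) _ 0 t
      have : (Function.uncurry fun (x : EuclideanSpace ℝ (Fin n)) (s : ℝ)
          => (D (x, s) (0, 1))^2) = fun p => (D p (0, 1))^2 := rfl
      rw [this]
      exact (hDcont.clm_apply continuous_const).pow 2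
    have hVzero : ∀ x ∉ K, V x = 0 := by
      intro x hx
      rw [hVdef]
      dsimp only
      have hcongr : EqOn (fun s => (D (x, s) (0, 1))^2) (fun _ => (0:ℝ)) (uIcc (0:ℝ) t) := by
        intro s hs
        rw [uIcc_of_le ht0] at hs
        simp [hD0t s ⟨hs.1, lt_of_le_of_lt hs.2 ht.2⟩ x hx]
      rw [intervalIntegral.integral_congr hcongr]
      simp
    have hVint : Integrable V volume := by
      apply hVcont.integrable_of_hasCompactSupport
      exact HasCompactSupport.intro hK hVzero
    -- pointwise Cauchy-Schwarz
    have hCS : ∀ x, (w2 x)^2 ≤ t * V x := by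
      intro x
      exact aux_sq_intervalIntegral_le _ (hvcont x) t ht0
    have hstep2 : (∫ x, (w2 x)^2) ≤ t * ∫ x, V x := by
      have := integral_mono hw2int (hVint.const_mul t) hCS
      rwa [integral_const_mul] at this
    -- Fubini swap
    obtain ⟨Cv, hCv⟩ := (hK.prod (isCompact_Icc (a := (0:ℝ))
      (b := T))).exists_bound_of_continuousOn
      (((hDcont.clm_apply continuous_const).pow 2)).continuousOn
    have hνuniv : ν univ = ENNReal.ofReal t := by
      rw [hνdef, Measure.restrict_apply_univ, Real.volume_Ioc, sub_zero]
    have hprodfin : (volume.prod ν) (K ×ˢ (univ : Set ℝ)) < ⊤ := by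
      rw [Measure.prod_prod, hνuniv]
      exact ENNReal.mul_lt_top hK.measure_lt_top ENNReal.ofReal_lt_top
    have hae2 : ∀ᵐ p : EuclideanSpace ℝ (Fin n) × ℝ ∂(volume.prod ν),
        p.2 ∈ Ioc (0:ℝ) t := by
      rw [MeasureTheory.ae_iff]
      have hsub : {p : EuclideanSpace ℝ (Fin n) × ℝ | ¬ p.2 ∈ Ioc (0:ℝ) t}
          ⊆ (univ : Set (EuclideanSpace ℝ (Fin n))) ×ˢ (Ioc (0:ℝ) t)ᶜ := by
        intro p hp
        exact ⟨mem_univ _, hp⟩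
      apply measure_mono_null hsub
      rw [Measure.prod_prod, hνdef, Measure.restrict_apply (measurableSet_Ioc.compl)]
      simp
    have hΦint : Integrable (Function.uncurry fun (x : EuclideanSpace ℝ (Fin n)) (s : ℝ)
        => (D (x, s) (0, 1))^2) (volume.prod ν) := by
      have hΦcont : Continuous (Function.uncurry fun (x : EuclideanSpace ℝ (Fin n)) (s : ℝ)
          => (D (x, s) (0, 1))^2) := by
        have : (Function.uncurry fun (x : EuclideanSpace ℝ (Fin n)) (s : ℝ)
            => (D (x, s) (0, 1))^2) = fun p => (D p (0, 1))^2 := rfl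
        rw [this]
        exact (hDcont.clm_apply continuous_const).pow 2
      have hbint : Integrable ((K ×ˢ (univ : Set ℝ)).indicator
          (fun _ : EuclideanSpace ℝ (Fin n) × ℝ => Cv)) (volume.prod ν) :=
        (integrable_indicator_iff (hK.measurableSet.prod MeasurableSet.univ)).2
          (integrableOn_const (C := Cv) hprodfin.ne enorm_ne_top)
      refine Integrable.mono' hbint hΦcont.aestronglyMeasurable ?_
      filter_upwards [hae2] with p hp
      by_cases hx : p.1 ∈ K
      · rw [indicator_of_mem (by exact ⟨hx, mem_univ _⟩), Real.norm_eq_abs]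
        have := hCv (p.1, p.2) ⟨hx, ⟨hp.1.le, le_trans hp.2 ht.2.le⟩⟩
        rw [Real.norm_eq_abs] at this
        simpa [Function.uncurry] using this
      · rw [indicator_of_notMem (fun hmem => hx hmem.1)]
        have : D (p.1, p.2) (0, 1) = 0 :=
          hD0t p.2 ⟨hp.1.le, lt_of_le_of_lt hp.2 ht.2⟩ p.1 hx
        simp [Function.uncurry, this]
    have hswap : (∫ x, V x) = ∫ s, (∫ x, (D (x, s) (0, 1))^2) ∂ν := by
      simp_rw [hVeq]
      exact integral_integral_swap hΦint
    have hFint : Integrable (fun s => ∫ x, (D (x, s) (0, 1))^2) ν :=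
      hΦint.integral_prod_right
    have hstep4 : (∫ s, (∫ x, (D (x, s) (0, 1))^2) ∂ν) ≤ t * (c_max^2 * E0) := by
      have hconst_int : Integrable (fun _ : ℝ => c_max^2 * E0) ν := by
        rw [hνdef]
        exact integrableOn_const (by rw [Real.volume_Ioc]; exact ENNReal.ofReal_ne_top)
      have hae' : ∀ᵐ s ∂ν, (∫ x, (D (x, s) (0, 1))^2) ≤ c_max^2 * E0 := by
        rw [hνdef, ae_restrict_iff' measurableSet_Ioc]
        filter_upwards with s hs
        exact hVel s ⟨hs.1.le, lt_of_le_of_lt hs.2 ht.2⟩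
      have hmono := integral_mono_ae hFint hconst_int hae'
      calc (∫ s, (∫ x, (D (x, s) (0, 1))^2) ∂ν) ≤ ∫ _, c_max^2 * E0 ∂ν := hmono
        _ = (ν univ).toReal * (c_max^2 * E0) := by
            rw [integral_const, smul_eq_mul, measureReal_def]
        _ = t * (c_max^2 * E0) := by
            rw [hνuniv, ENNReal.toReal_ofReal ht0]
    have hVtot : (∫ x, (w2 x)^2) ≤ c_max^2 * T^2 * E0 := by
      have h1 : (∫ x, V x) ≤ t * (c_max^2 * E0) := by rw [hswap]; exact hstep4
      have h2 : (0:ℝ) ≤ ∫ x, V x := integral_nonneg hVnonneg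
      have h3 : (0:ℝ) ≤ c_max^2 * E0 := by
        have hcmax : (0:ℝ) < c_max := lt_of_lt_of_le hc_min_pos
          (le_trans (hc 0).1 (hc 0).2)
        positivity
      calc (∫ x, (w2 x)^2) ≤ t * ∫ x, V x := hstep2
        _ ≤ t * (t * (c_max^2 * E0)) := by
            apply mul_le_mul_of_nonneg_left h1 ht0
        _ ≤ T * (T * (c_max^2 * E0)) :=
            mul_le_mul ht.2.le (mul_le_mul_of_nonneg_right ht.2.le h3)
              (mul_nonneg ht0 h3) (le_trans ht0 ht.2.le)
        _ = c_max^2 * T^2 * E0 := by ring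
    have hy2_le : (∫ x, (y x t)^2) ≤ 2*A + 2*(c_max^2*T^2)*E0 := by
      have hptwise : ∀ x, (y x t)^2 ≤ 2*(f x)^2 + 2*(w2 x)^2 := by
        intro x
        rw [hyw x]
        exact aux_two_sq (f x) (w2 x)
      have hRint : Integrable (fun x => 2*(f x)^2 + 2*(w2 x)^2) volume :=
        (hf2int.const_mul 2).add (hw2int.const_mul 2)
      have := integral_mono hy2int hRint hptwise
      have heq : (∫ x, (2*(f x)^2 + 2*(w2 x)^2))
          = 2*A + 2*(∫ x, (w2 x)^2) := by
        rw [integral_add (hf2int.const_mul 2) (hw2int.const_mul 2),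
          integral_const_mul, integral_const_mul, ← hAdef]
      rw [heq] at this
      linarith [hVtot]
    rw [hsplit]
    have : 2*A + 2*(c_max^2*T^2)*E0 ≤ 2/C₀^2 * m * E0 := hkey
    linarith [hgr_le, hy2_le]
  -- ## Conclusion
  set Mb : ℝ := Cγ^2 * ((1 + 2/C₀^2 * m) * E0) with hMbdef
  have hcoef : (0:ℝ) ≤ 1 + 2/C₀^2 * m := by
    have h1 : (0:ℝ) ≤ 2/C₀^2 := by positivity
    have : (0:ℝ) ≤ 2/C₀^2 * m := mul_nonneg h1 (le_trans zero_le_one hm1)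
    linarith
  have hMb0 : 0 ≤ Mb := by
    rw [hMbdef]
    exact mul_nonneg (sq_nonneg Cγ) (mul_nonneg hcoef hE0nonneg)
  have hφbound : ∀ t ∈ Ioo (0:ℝ) T, (∫ x, (y x t)^2 ∂μ) ≤ Mb := by
    intro t ht
    refine (htrace t ⟨ht.1.le, ht.2.le⟩).trans ?_
    rw [hMbdef]
    exact mul_le_mul_of_nonneg_left (hmain t ht) (sq_nonneg Cγ)
  have hgoal_eq : Cγ ^ 2 * (1 + 2 / C₀ ^ 2 * m) * T * E0 = T * Mb := by
    rw [hMbdef]; ring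
  by_cases hφint : IntervalIntegrable (fun t => ∫ x, (y x t)^2 ∂μ) volume 0 T
  · rw [intervalIntegral.integral_of_le hT.le]
    have hφon : IntegrableOn (fun t => ∫ x, (y x t)^2 ∂μ) (Ioc 0 T) volume := by
      rw [← intervalIntegrable_iff_integrableOn_Ioc_of_le hT.le]
      exact hφint
    have hconst_int : Integrable (fun _ : ℝ => Mb) (volume.restrict (Ioc 0 T)) :=
      integrableOn_const (by rw [Real.volume_Ioc]; exact ENNReal.ofReal_ne_top)
    have hTnull : (volume.restrict (Ioc (0:ℝ) T)) {T} = 0 := by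
      rw [Measure.restrict_apply (measurableSet_singleton T)]
      exact measure_mono_null inter_subset_left (Real.volume_singleton)
    have haeT : ∀ᵐ s ∂(volume.restrict (Ioc (0:ℝ) T)), s ≠ T := by
      rw [MeasureTheory.ae_iff]
      convert hTnull using 2
      ext s
      simp
    have hae : ∀ᵐ s ∂(volume.restrict (Ioc (0:ℝ) T)),
        (∫ x, (y x s)^2 ∂μ) ≤ Mb := by
      filter_upwards [ae_restrict_mem measurableSet_Ioc, haeT] with s hs1 hs2
      exact hφbound s ⟨hs1.1, lt_of_le_of_ne hs1.2 hs2⟩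
    have hmono := integral_mono_ae hφon hconst_int hae
    have hconst_eq : (∫ _ in Ioc (0:ℝ) T, Mb) = T * Mb := by
      rw [setIntegral_const, measureReal_def, Real.volume_Ioc, sub_zero, smul_eq_mul,
        ENNReal.toReal_ofReal hT.le]
    rw [hgoal_eq]
    calc (∫ t in Ioc (0:ℝ) T, ∫ x, (y x t)^2 ∂μ) ≤ ∫ _ in Ioc (0:ℝ) T, Mb := hmono
      _ = T * Mb := hconst_eq
  · rw [intervalIntegral.integral_undef hφint, hgoal_eq]
    exact mul_nonneg hT.le hMb0
end

section
/- Stability of the Landweber iteration with respect to data perturbations: if 0 ≤ ω, ω·‖L‖² ≤ 1, and m, mᵟ ∈ H₂ satisfy ‖m − mᵟ‖ ≤ δ, then for every k ∈ ℕ the iterates for exact and perturbed data satisfy ‖f_k(mᵟ) − f_k(m)‖ ≤ k · ω · ‖L‖ · δ. -/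
open ContinuousLinearMap

variable {H₁ H₂ : Type*}
  [NormedAddCommGroup H₁] [InnerProductSpace ℝ H₁] [CompleteSpace H₁]
  [NormedAddCommGroup H₂] [InnerProductSpace ℝ H₂] [CompleteSpace H₂]

/-- The Landweber iteration with data `g` and step size `ω`:
`f₀ = 0`, `f_{k+1} = f_k - ω • L*(L f_k - g)`. -/
noncomputable def landweber (L : H₁ →L[ℝ] H₂) (ω : ℝ) (g : H₂) : ℕ → H₁
  | 0 => 0
  | k + 1 =>
      landweber L ω g k - ω • (ContinuousLinearMap.adjoint L) (L (landweber L ω g k) - g)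

lemma contraction_aux (L : H₁ →L[ℝ] H₂) (ω : ℝ) (hω : 0 ≤ ω) (hωL : ω * ‖L‖ ^ 2 ≤ 1)
    (x : H₁) : ‖x - ω • (ContinuousLinearMap.adjoint L) (L x)‖ ≤ ‖x‖ := by
  have hsq : ‖x - ω • (ContinuousLinearMap.adjoint L) (L x)‖ ^ 2 ≤ ‖x‖ ^ 2 := by
    have h1 : ‖x - ω • (ContinuousLinearMap.adjoint L) (L x)‖ ^ 2
        = ‖x‖ ^ 2 - 2 * (ω * ‖L x‖ ^ 2) + ω ^ 2 * ‖(ContinuousLinearMap.adjoint L) (L x)‖ ^ 2 := by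
      rw [@norm_sub_sq_real]
      rw [real_inner_smul_right, norm_smul]
      have : inner ℝ x ((ContinuousLinearMap.adjoint L) (L x)) = (‖L x‖ : ℝ) ^ 2 := by
        rw [ContinuousLinearMap.adjoint_inner_right, real_inner_self_eq_norm_sq]
      rw [this]
      simp only [Real.norm_eq_abs, mul_pow, sq_abs]
    have h2 : ‖(ContinuousLinearMap.adjoint L) (L x)‖ ≤ ‖L‖ * ‖L x‖ := by
      calc ‖(ContinuousLinearMap.adjoint L) (L x)‖ ≤ ‖ContinuousLinearMap.adjoint L‖ * ‖L x‖ :=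
            (ContinuousLinearMap.adjoint L).le_opNorm _
        _ = ‖L‖ * ‖L x‖ := by rw [ContinuousLinearMap.adjoint.norm_map L]
    have h3 : ω ^ 2 * ‖(ContinuousLinearMap.adjoint L) (L x)‖ ^ 2
        ≤ ω * ‖L x‖ ^ 2 := by
      have h4 : ‖(ContinuousLinearMap.adjoint L) (L x)‖ ^ 2 ≤ (‖L‖ * ‖L x‖) ^ 2 :=
        pow_le_pow_left₀ (norm_nonneg _) h2 2
      calc ω ^ 2 * ‖(ContinuousLinearMap.adjoint L) (L x)‖ ^ 2
          ≤ ω ^ 2 * (‖L‖ * ‖L x‖) ^ 2 := by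
            exact mul_le_mul_of_nonneg_left h4 (by positivity)
        _ = (ω * ‖L‖ ^ 2) * (ω * ‖L x‖ ^ 2) := by ring
        _ ≤ 1 * (ω * ‖L x‖ ^ 2) := by
            exact mul_le_mul_of_nonneg_right hωL (by positivity)
        _ = ω * ‖L x‖ ^ 2 := one_mul _
    nlinarith [h3]
  nlinarith [norm_nonneg x, norm_nonneg (x - ω • (ContinuousLinearMap.adjoint L) (L x))]

theorem stmt_8 (L : H₁ →L[ℝ] H₂) (ω : ℝ) (hω : 0 ≤ ω) (hωL : ω * ‖L‖ ^ 2 ≤ 1)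
    (m mδ : H₂) (δ : ℝ) (hδ : ‖m - mδ‖ ≤ δ) :
    ∀ k : ℕ, ‖landweber L ω mδ k - landweber L ω m k‖ ≤ (k : ℝ) * ω * ‖L‖ * δ := by
  intro k
  induction k with
  | zero => simp [landweber]
  | succ k ih =>
    set e := landweber L ω mδ k - landweber L ω m k with he
    have hrec : landweber L ω mδ (k+1) - landweber L ω m (k+1)
        = (e - ω • (ContinuousLinearMap.adjoint L) (L e))
          + ω • (ContinuousLinearMap.adjoint L) (mδ - m) := by
      simp only [landweber, he]
      simp only [map_sub, smul_sub]
      abel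
    have h1 := contraction_aux L ω hω hωL e
    have h2 : ‖ω • (ContinuousLinearMap.adjoint L) (mδ - m)‖ ≤ ω * ‖L‖ * δ := by
      rw [norm_smul, Real.norm_eq_abs, abs_of_nonneg hω]
      have : ‖(ContinuousLinearMap.adjoint L) (mδ - m)‖ ≤ ‖L‖ * δ := by
        calc ‖(ContinuousLinearMap.adjoint L) (mδ - m)‖
            ≤ ‖ContinuousLinearMap.adjoint L‖ * ‖mδ - m‖ := (ContinuousLinearMap.adjoint L).le_opNorm _
          _ = ‖L‖ * ‖mδ - m‖ := by rw [ContinuousLinearMap.adjoint.norm_map L]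
          _ ≤ ‖L‖ * δ := by
              apply mul_le_mul_of_nonneg_left _ (norm_nonneg _)
              rwa [norm_sub_rev] at hδ
      calc ω * ‖(ContinuousLinearMap.adjoint L) (mδ - m)‖ ≤ ω * (‖L‖ * δ) :=
            mul_le_mul_of_nonneg_left this hω
        _ = ω * ‖L‖ * δ := by ring
    calc ‖landweber L ω mδ (k+1) - landweber L ω m (k+1)‖
        ≤ ‖e - ω • (ContinuousLinearMap.adjoint L) (L e)‖
          + ‖ω • (ContinuousLinearMap.adjoint L) (mδ - m)‖ := by
          rw [hrec]; exact norm_add_le _ _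
      _ ≤ ‖e‖ + ω * ‖L‖ * δ := add_le_add h1 h2
      _ ≤ (k : ℝ) * ω * ‖L‖ * δ + ω * ‖L‖ * δ := by linarith
      _ = ((k + 1 : ℕ) : ℝ) * ω * ‖L‖ * δ := by push_cast; ring
end

section
/- If 0 < ω and ω·‖L‖² ≤ 1, then for every g ∈ H₂ the images L f_k(g) of the Landweber iterates converge, as k → ∞, to the orthogonal projection of g onto the topological closure of the range of L. -/
open ContinuousLinearMap Filter

set_option maxHeartbeats 1000000

variable {H₁ H₂ : Type*}
  [NormedAddCommGroup H₁] [InnerProductSpace ℝ H₁] [CompleteSpace H₁]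
  [NormedAddCommGroup H₂] [InnerProductSpace ℝ H₂] [CompleteSpace H₂]

open RealInnerProductSpace

theorem stmt_9 (L : H₁ →L[ℝ] H₂) (ω : ℝ) (hω : 0 < ω) (hωL : ω * ‖L‖ ^ 2 ≤ 1) :
    ∀ g : H₂,
      Tendsto (fun k => L (landweber L ω g k)) atTop
        (nhds (Submodule.orthogonalProjectionOnto (LinearMap.range (L : H₁ →ₗ[ℝ] H₂)).topologicalClosure g : H₂)) := by
  classical
  set L' := ContinuousLinearMap.adjoint L with hL'
  set A : H₂ →L[ℝ] H₂ := ω • (L ∘L L') with hA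
  set T : H₂ →L[ℝ] H₂ := 1 - A with hT
  have hAapp : ∀ x : H₂, A x = ω • L (L' x) := fun x => rfl
  have hTapp : ∀ x : H₂, T x = x - A x := fun x => rfl
  have hnormL' : ‖L'‖ = ‖L‖ := LinearIsometryEquiv.norm_map _ L
  -- basic inner product identities
  have hAinner : ∀ x : H₂, ⟪A x, x⟫ = ω * ‖L' x‖ ^ 2 := by
    intro x
    rw [hAapp, real_inner_smul_left]
    congr 1
    rw [← ContinuousLinearMap.adjoint_inner_right L (L' x) x, ← hL',
      real_inner_self_eq_norm_sq]
  have hApos : ∀ x : H₂, 0 ≤ ⟪A x, x⟫ := fun x => by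
    rw [hAinner]; positivity
  have hAle : ∀ x : H₂, ⟪A x, x⟫ ≤ ‖x‖ ^ 2 := by
    intro x
    rw [hAinner]
    have h1 : ‖L' x‖ ≤ ‖L‖ * ‖x‖ := by
      simpa [hnormL'] using L'.le_opNorm x
    have h2 : ‖L' x‖ ^ 2 ≤ ‖L‖ ^ 2 * ‖x‖ ^ 2 := by
      nlinarith [norm_nonneg (L' x), norm_nonneg x, norm_nonneg L]
    nlinarith [sq_nonneg ‖x‖]
  have hA2 : ∀ x : H₂, ‖A x‖ ^ 2 ≤ ⟪A x, x⟫ := by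
    intro x
    have h1 : ‖A x‖ ≤ ω * (‖L‖ * ‖L' x‖) := by
      rw [hAapp, norm_smul, Real.norm_of_nonneg hω.le]
      exact mul_le_mul_of_nonneg_left (L.le_opNorm (L' x)) hω.le
    have h2 : ‖A x‖ ^ 2 ≤ ω ^ 2 * ‖L‖ ^ 2 * ‖L' x‖ ^ 2 := by
      nlinarith [norm_nonneg (A x), norm_nonneg (L' x), norm_nonneg L,
        mul_nonneg hω.le (mul_nonneg (norm_nonneg L) (norm_nonneg (L' x)))]
    rw [hAinner]
    nlinarith [sq_nonneg ‖L' x‖, mul_nonneg hω.le (sq_nonneg ‖L' x‖)]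
  -- contraction estimate
  have hTcontr : ∀ x : H₂, ‖T x‖ ^ 2 ≤ ‖x‖ ^ 2 - ⟪A x, x⟫ := by
    intro x
    have hexp : ‖T x‖ ^ 2 = ‖x‖ ^ 2 - 2 * ⟪A x, x⟫ + ‖A x‖ ^ 2 := by
      rw [hTapp, norm_sub_sq_real, real_inner_comm]
    rw [hexp]
    have := hA2 x
    linarith
  have hTnorm : ∀ x : H₂, ‖T x‖ ≤ ‖x‖ := by
    intro x
    have h := hTcontr x
    have := hApos x
    nlinarith [norm_nonneg (T x), norm_nonneg x]
  have hTpow : ∀ (k : ℕ) (x : H₂), (T ^ (k+1)) x = T ((T ^ k) x) := by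
    intro k x; rw [pow_succ']; rfl
  have hTpownorm : ∀ (k : ℕ) (x : H₂), ‖(T ^ k) x‖ ≤ ‖x‖ := by
    intro k
    induction k with
    | zero => intro x; simp
    | succ n ih => intro x; rw [hTpow]; exact le_trans (hTnorm _) (ih x)
  -- symmetry of T and its powers
  have hAsym : ∀ x y : H₂, ⟪A x, y⟫ = ⟪x, A y⟫ := by
    intro x y
    have h1 : ⟪L (L' x), y⟫ = ⟪L' x, L' y⟫ :=
      (ContinuousLinearMap.adjoint_inner_right L (L' x) y).symm
    have h2 : ⟪x, L (L' y)⟫ = ⟪L' x, L' y⟫ :=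
      (ContinuousLinearMap.adjoint_inner_left L (L' y) x).symm
    rw [hAapp, hAapp, real_inner_smul_left, real_inner_smul_right, h1, h2]
  have hTsym : ∀ x y : H₂, ⟪T x, y⟫ = ⟪x, T y⟫ := by
    intro x y
    rw [hTapp, hTapp, inner_sub_left, inner_sub_right, hAsym]
  have hTpowsym : ∀ (k : ℕ) (x y : H₂), ⟪(T ^ k) x, y⟫ = ⟪x, (T ^ k) y⟫ := by
    intro k
    induction k with
    | zero => intro x y; simp
    | succ n ih =>
      intro x y
      rw [hTpow, hTpow, hTsym, ih]
      congr 1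
      rw [← ContinuousLinearMap.mul_apply, ← ContinuousLinearMap.mul_apply,
        ← pow_succ, ← pow_succ']
  -- for each x, the "energy" ⟪A Tᵏx, Tᵏx⟫ tends to 0
  have henergy : ∀ x : H₂,
      Tendsto (fun k => ⟪A ((T ^ k) x), (T ^ k) x⟫) atTop (nhds 0) := by
    intro x
    set b : ℕ → ℝ := fun k => ‖(T ^ k) x‖ ^ 2 with hb
    have hbanti : Antitone b := by
      apply antitone_nat_of_succ_le
      intro k
      have h1 := hTcontr ((T ^ k) x)
      have h2 := hApos ((T ^ k) x)
      simp only [hb, hTpow]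
      linarith
    have hbdd : BddBelow (Set.range b) :=
      ⟨0, by rintro _ ⟨k, rfl⟩; positivity⟩
    have hbconv : Tendsto b atTop (nhds (⨅ k, b k)) :=
      tendsto_atTop_ciInf hbanti hbdd
    have hdiff : Tendsto (fun k => b k - b (k+1)) atTop (nhds 0) := by
      have := hbconv.sub (hbconv.comp (tendsto_add_atTop_nat 1))
      simpa using this
    refine squeeze_zero (fun k => hApos _) (fun k => ?_) hdiff
    have h1 := hTcontr ((T ^ k) x)
    simp only [hb, hTpow]
    linarith
  -- hence L' Tᵏ x → 0
  have hLadj : ∀ x : H₂,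
      Tendsto (fun k => ‖L' ((T ^ k) x)‖) atTop (nhds 0) := by
    intro x
    have h1 : Tendsto (fun k => ‖L' ((T ^ k) x)‖ ^ 2) atTop (nhds 0) := by
      have h2 : (fun k => ‖L' ((T ^ k) x)‖ ^ 2)
          = fun k => ω⁻¹ * ⟪A ((T ^ k) x), (T ^ k) x⟫ := by
        funext k
        rw [hAinner, ← mul_assoc, inv_mul_cancel₀ hω.ne', one_mul]
      rw [h2]
      simpa using (henergy x).const_mul ω⁻¹
    have h3 : (fun k => ‖L' ((T ^ k) x)‖)
        = (fun r => Real.sqrt r) ∘ (fun k => ‖L' ((T ^ k) x)‖ ^ 2) := by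
      funext k; simp [Real.sqrt_sq (norm_nonneg _)]
    rw [h3]
    simpa using (Real.continuous_sqrt.tendsto 0).comp h1
  -- for v in the range of L, Tᵏ v → 0
  have hrange : ∀ w : H₁, Tendsto (fun k => (T ^ k) (L w)) atTop (nhds 0) := by
    intro w
    set v := L w with hv
    have hc : Tendsto (fun k => ⟪(T ^ k) v, v⟫) atTop (nhds 0) := by
      have heq : ∀ k, ⟪(T ^ k) v, v⟫ = ⟪L' ((T ^ k) v), w⟫ := by
        intro k
        rw [hL', ContinuousLinearMap.adjoint_inner_left]
      have hbound : ∀ k, |⟪(T ^ k) v, v⟫| ≤ ‖L' ((T ^ k) v)‖ * ‖w‖ := by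
        intro k
        rw [heq]
        exact abs_real_inner_le_norm _ _
      have : Tendsto (fun k => ‖L' ((T ^ k) v)‖ * ‖w‖) atTop (nhds 0) := by
        simpa using (hLadj v).mul_const ‖w‖
      exact squeeze_zero_norm (by simpa [Real.norm_eq_abs] using hbound) this
    have hn2 : Tendsto (fun k => ‖(T ^ k) v‖ ^ 2) atTop (nhds 0) := by
      have heq : ∀ k, ‖(T ^ k) v‖ ^ 2 = ⟪(T ^ (2 * k)) v, v⟫ := by
        intro k
        rw [two_mul, pow_add, ContinuousLinearMap.mul_apply, hTpowsym,
          real_inner_self_eq_norm_sq]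
      simp only [heq]
      have h2k : Tendsto (fun k : ℕ => 2 * k) atTop atTop :=
        tendsto_atTop_mono (fun k => Nat.le_mul_of_pos_left k two_pos) tendsto_id
      exact hc.comp h2k
    rw [tendsto_zero_iff_norm_tendsto_zero]
    have h3 : (fun k => ‖(T ^ k) v‖)
        = (fun r => Real.sqrt r) ∘ (fun k => ‖(T ^ k) v‖ ^ 2) := by
      funext k; simp [Real.sqrt_sq (norm_nonneg _)]
    rw [h3]
    simpa using (Real.continuous_sqrt.tendsto 0).comp hn2
  -- extend to the closure of the range
  have hclos : ∀ v : H₂, v ∈ (LinearMap.range (L : H₁ →ₗ[ℝ] H₂)).topologicalClosure →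
      Tendsto (fun k => (T ^ k) v) atTop (nhds 0) := by
    intro v hv
    rw [tendsto_zero_iff_norm_tendsto_zero]
    rw [Metric.tendsto_atTop]
    intro ε hε
    have hvmem : v ∈ closure ((LinearMap.range (L : H₁ →ₗ[ℝ] H₂) : Submodule ℝ H₂) : Set H₂) := hv
    rw [Metric.mem_closure_iff] at hvmem
    obtain ⟨w, hwmem, hwd⟩ := hvmem (ε / 2) (by linarith)
    obtain ⟨u, rfl⟩ := hwmem
    have hLu := hrange u
    rw [tendsto_zero_iff_norm_tendsto_zero, Metric.tendsto_atTop] at hLu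
    obtain ⟨N, hN⟩ := hLu (ε / 2) (by linarith)
    refine ⟨N, fun k hk => ?_⟩
    have h1 : ‖(T ^ k) v‖ ≤ ‖(T ^ k) (L u)‖ + ‖(T ^ k) (v - L u)‖ := by
      have : (T ^ k) v = (T ^ k) (L u) + (T ^ k) (v - L u) := by
        rw [← map_add]; congr 1; abel
      rw [this]; exact norm_add_le _ _
    have h2 : ‖(T ^ k) (v - L u)‖ ≤ ‖v - L u‖ := hTpownorm k _
    have h3 : ‖v - L u‖ < ε / 2 := by
      rw [← dist_eq_norm]; exact hwd
    have h4 := hN k hk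
    rw [Real.dist_eq, sub_zero] at h4 ⊢
    have h5 : |‖(T ^ k) (L u)‖| = ‖(T ^ k) (L u)‖ := abs_of_nonneg (norm_nonneg _)
    rw [abs_of_nonneg (norm_nonneg _)]
    rw [h5] at h4
    linarith
  -- main argument
  intro g
  set K := (LinearMap.range (L : H₁ →ₗ[ℝ] H₂)).topologicalClosure with hK
  set p : H₂ := (Submodule.orthogonalProjectionOnto K g : H₂) with hp
  have hpmem : p ∈ K := (Submodule.orthogonalProjectionOnto K g).2
  -- L' (g - p) = 0
  have hadj0 : L' (g - p) = 0 := by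
    have hperp : g - p ∈ Kᗮ := Submodule.sub_starProjection_mem_orthogonal (K := K) g
    have : ⟪L' (g - p), L' (g - p)⟫ = 0 := by
      rw [hL', ContinuousLinearMap.adjoint_inner_left]
      have hmem : L (ContinuousLinearMap.adjoint L (g - p)) ∈ K :=
        (LinearMap.range (L : H₁ →ₗ[ℝ] H₂)).le_topologicalClosure ⟨_, rfl⟩
      exact (Submodule.mem_orthogonal Kᗮ _).1 ((Submodule.le_orthogonal_orthogonal K) hmem)
        _ hperp
    rwa [real_inner_self_eq_norm_sq, pow_eq_zero_iff (two_ne_zero), norm_eq_zero] at this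
  -- the key identity: L fₖ = p - Tᵏ p
  have hiter : ∀ k : ℕ, L (landweber L ω g k) = p - (T ^ k) p := by
    intro k
    induction k with
    | zero => simp [landweber]
    | succ n ih =>
      have hstep : landweber L ω g (n+1)
          = landweber L ω g n - ω • L' (L (landweber L ω g n) - g) := rfl
      rw [hstep, map_sub, map_smul, ih, hTpow]
      have hsplit : L' (p - (T ^ n) p - g) = L' (-(T ^ n) p) := by
        have : p - (T ^ n) p - g = -(T ^ n) p - (g - p) := by abel
        rw [this, map_sub, hadj0, sub_zero]
      rw [hsplit]
      simp only [map_neg, smul_neg]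
      rw [hTapp, hAapp]
      abel
  simp only [hiter]
  have hfin := (tendsto_const_nhds :
    Tendsto (fun _ : ℕ => p) atTop (nhds p)).sub (hclos p hpmem)
  simpa using hfin
end
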